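/- arXiv:2605.27665 — 5 statements merged into one kernel-verified Lean document; each statement's English description precedes it below -/
import Mathlib

section
/- If X is a connected metric space and \mu is a doubling measure on X, then there exist constants c > 0 and \alpha > 0, depending only on the doubling constant c_\mu, such that \mu(B(x_0,r))/\mu(B(x_0,R)) \leq c (r/R)^\alpha for every x_0 \in X and 0 < r < R < (1/3)\,\mathrm{diam}(X). -/
open MeasureTheory Metric Set

/-- If `X` is connected and `μ` is doubling, then there exist `c > 0` and
`α > 0` such that `μ(B(x₀,r))/μ(B(x₀,R)) ≤ c (r/R)^α` for `0 < r < R < diam X / 3`. -/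
theorem doubling_connected_implies_upper_volume_ratio
    {X : Type*} [MetricSpace X] [ConnectedSpace X] [MeasurableSpace X] [BorelSpace X]
    (μ : Measure X) (c_μ : ℝ) (hc : 1 ≤ c_μ)
    (hnt : ∀ (x : X) (r : ℝ), 0 < r → 0 < μ (ball x r) ∧ μ (ball x r) < ⊤)
    (hdbl : ∀ (x : X) (r : ℝ), 0 < r →
      μ (ball x (2 * r)) ≤ ENNReal.ofReal c_μ * μ (ball x r)) :
    ∃ c > (0:ℝ), ∃ α > (0:ℝ), ∀ (x₀ : X) (r R : ℝ), 0 < r → r < R →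
      ENNReal.ofReal (3 * R) < EMetric.diam (univ : Set X) →
      (μ (ball x₀ r)).toReal / (μ (ball x₀ R)).toReal ≤ c * (r / R) ^ α := by
  classical
  have hcpos : (0:ℝ) < c_μ := lt_of_lt_of_le one_pos hc
  set δ : ℝ := 1 + c_μ⁻¹ ^ 3 with hδdef
  have hinvpos : 0 < c_μ⁻¹ ^ 3 := by positivity
  have hδ1 : 1 < δ := by simp only [hδdef]; linarith
  have hδpos : (0:ℝ) < δ := by linarith
  refine ⟨δ, hδpos, Real.log δ / Real.log 3, div_pos (Real.log_pos hδ1) (Real.log_pos (by norm_num)), ?_⟩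
  intro x₀ r R hr hrR hdiam
  have hR : 0 < R := hr.trans hrR
  set α : ℝ := Real.log δ / Real.log 3 with hαdef
  -- finiteness / positivity helpers
  have fin : ∀ (x : X) (t : ℝ), 0 < t → μ (ball x t) ≠ ⊤ := fun x t ht => (hnt x t ht).2.ne
  have tpos : ∀ (x : X) (t : ℝ), 0 < t → 0 < (μ (ball x t)).toReal := fun x t ht =>
    ENNReal.toReal_pos (hnt x t ht).1.ne' (fin x t ht)
  -- existence of a far point
  have hfar : ∃ w : X, 3 * R / 2 < dist x₀ w := by
    by_contra h
    push_neg at h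
    have hle : EMetric.diam (univ : Set X) ≤ ENNReal.ofReal (3 * R) := by
      refine EMetric.diam_le fun a _ b _ => ?_
      rw [edist_dist]
      refine ENNReal.ofReal_le_ofReal ?_
      have := dist_triangle_left a b x₀
      have ha := h a
      have hb := h b
      linarith
    exact absurd hdiam (not_lt.mpr hle)
  -- the key reverse doubling step
  have key : ∀ t : ℝ, 0 < t → 3 * t ≤ R →
      δ * (μ (ball x₀ t)).toReal ≤ (μ (ball x₀ (3 * t))).toReal := by
    intro t ht htR
    obtain ⟨w, hw⟩ := hfar
    have h2t : 2 * t ∈ Icc (dist x₀ x₀) (dist x₀ w) := by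
      constructor
      · rw [dist_self]; linarith
      · linarith
    obtain ⟨y, hy⟩ := intermediate_value_univ x₀ w (continuous_const.dist continuous_id) h2t
    have hy : dist x₀ y = 2 * t := hy
    have hball1 : ball x₀ t ⊆ ball y (4 * t) := by
      intro z hz
      rw [mem_ball] at hz ⊢
      have h1 : dist z y ≤ dist z x₀ + dist x₀ y := dist_triangle _ _ _
      rw [hy] at h1
      linarith
    have hdb3 : μ (ball y (4 * t)) ≤ ENNReal.ofReal c_μ ^ 3 * μ (ball y (t / 2)) := by
      have h1 := hdbl y (2 * t) (by linarith)
      have h2 := hdbl y t ht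
      have h3 := hdbl y (t / 2) (by linarith)
      have e1 : 2 * (2 * t) = 4 * t := by ring
      have e3 : 2 * (t / 2) = t := by ring
      rw [e1] at h1
      rw [e3] at h3
      calc μ (ball y (4 * t)) ≤ ENNReal.ofReal c_μ * μ (ball y (2 * t)) := h1
        _ ≤ ENNReal.ofReal c_μ * (ENNReal.ofReal c_μ * μ (ball y t)) :=
            mul_le_mul_right h2 _
        _ ≤ ENNReal.ofReal c_μ * (ENNReal.ofReal c_μ * (ENNReal.ofReal c_μ * μ (ball y (t / 2)))) :=
            mul_le_mul_right (mul_le_mul_right h3 _) _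
        _ = ENNReal.ofReal c_μ ^ 3 * μ (ball y (t / 2)) := by ring
    set a : ℝ := (μ (ball x₀ t)).toReal with hadef
    set b : ℝ := (μ (ball y (t / 2))).toReal with hbdef
    have hab : a ≤ c_μ ^ 3 * b := by
      have hmono : μ (ball x₀ t) ≤ ENNReal.ofReal c_μ ^ 3 * μ (ball y (t / 2)) :=
        le_trans (measure_mono hball1) hdb3
      have hfin : ENNReal.ofReal c_μ ^ 3 * μ (ball y (t / 2)) ≠ ⊤ :=
        ENNReal.mul_ne_top (by simp [ENNReal.pow_ne_top]) (fin y (t / 2) (by linarith))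
      have := ENNReal.toReal_mono hfin hmono
      rwa [ENNReal.toReal_mul, ENNReal.toReal_pow, ENNReal.toReal_ofReal hcpos.le] at this
    have hdisj : Disjoint (ball x₀ t) (ball y (t / 2)) := by
      rw [Set.disjoint_left]
      intro z hz1 hz2
      rw [mem_ball] at hz1 hz2
      have : dist x₀ y ≤ dist x₀ z + dist z y := dist_triangle _ _ _
      rw [dist_comm x₀ z] at this
      rw [hy] at this
      linarith
    have hsub : ball x₀ t ∪ ball y (t / 2) ⊆ ball x₀ (3 * t) := by
      intro z hz
      rcases hz with hz | hz
      · rw [mem_ball] at hz ⊢; linarith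
      · rw [mem_ball] at hz ⊢
        have : dist z x₀ ≤ dist z y + dist y x₀ := dist_triangle _ _ _
        rw [dist_comm y x₀, hy] at this
        linarith
    have hsum : a + b ≤ (μ (ball x₀ (3 * t))).toReal := by
      have hm := measure_mono (μ := μ) hsub
      rw [measure_union (μ := μ) hdisj measurableSet_ball] at hm
      have := ENNReal.toReal_mono (fin x₀ (3 * t) (by linarith)) hm
      rwa [ENNReal.toReal_add (fin x₀ t ht) (fin y (t / 2) (by linarith))] at this
    have h3pos : (0:ℝ) < c_μ ^ 3 := by positivity
    have hba : a / c_μ ^ 3 ≤ b := (div_le_iff₀ h3pos).mpr (by linarith)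
    have : δ * a = a + a / c_μ ^ 3 := by
      rw [hδdef]; field_simp
    rw [this]
    linarith
  -- iterate
  have iter : ∀ n : ℕ, 3 ^ n * r ≤ R →
      δ ^ n * (μ (ball x₀ r)).toReal ≤ (μ (ball x₀ (3 ^ n * r))).toReal := by
    intro n
    induction n with
    | zero => intro _; simp
    | succ n ih =>
      intro h
      have h3n : (3:ℝ) ^ n * r ≤ 3 ^ (n + 1) * r := by
        have : (3:ℝ) ^ n ≤ 3 ^ (n + 1) := by
          apply pow_le_pow_right₀ (by norm_num); omega
        nlinarith
      have hn := ih (le_trans h3n h)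
      have hkey := key (3 ^ n * r) (by positivity) (by rw [show (3:ℝ) * (3 ^ n * r) = 3 ^ (n + 1) * r by ring]; exact h)
      have e : 3 * (3 ^ n * r) = 3 ^ (n + 1) * r := by ring
      rw [e] at hkey
      calc δ ^ (n + 1) * (μ (ball x₀ r)).toReal = δ * (δ ^ n * (μ (ball x₀ r)).toReal) := by ring
        _ ≤ δ * (μ (ball x₀ (3 ^ n * r))).toReal := by
            apply mul_le_mul_of_nonneg_left hn hδpos.le
        _ ≤ (μ (ball x₀ (3 ^ (n + 1) * r))).toReal := hkey
  -- choose n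
  have hRrpos : 0 < R / r := div_pos hR hr
  have hRr1 : 1 < R / r := (one_lt_div hr).mpr hrR
  set L : ℝ := Real.logb 3 (R / r) with hLdef
  have hL0 : 0 ≤ L := Real.logb_nonneg (by norm_num) hRr1.le
  set n : ℕ := ⌊L⌋₊ with hndef
  have h3n : (3:ℝ) ^ n ≤ R / r := by
    have h1 : (n:ℝ) ≤ L := Nat.floor_le hL0
    have := Real.rpow_le_rpow_of_exponent_le (show (1:ℝ) ≤ 3 by norm_num) h1
    rwa [Real.rpow_natCast, Real.rpow_logb (by norm_num) (by norm_num) hRrpos] at this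
  have hnr : (3:ℝ) ^ n * r ≤ R := (le_div_iff₀ hr).mp h3n
  have main := iter n hnr
  have hmono2 : (μ (ball x₀ (3 ^ n * r))).toReal ≤ (μ (ball x₀ R)).toReal :=
    ENNReal.toReal_mono (fin x₀ R hR) (measure_mono (ball_subset_ball hnr))
  have hmain : δ ^ n * (μ (ball x₀ r)).toReal ≤ (μ (ball x₀ R)).toReal := le_trans main hmono2
  have haR : 0 < (μ (ball x₀ R)).toReal := tpos x₀ R hR
  have hδn : (0:ℝ) < δ ^ n := pow_pos hδpos n
  have h1 : (μ (ball x₀ r)).toReal / (μ (ball x₀ R)).toReal ≤ (δ ^ n)⁻¹ := by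
    rw [div_le_iff₀ haR, inv_mul_eq_div, le_div_iff₀ hδn]
    nlinarith
  have hL1 : L < n + 1 := Nat.lt_floor_add_one _
  have hrRpos : 0 < r / R := div_pos hr hR
  have e2 : δ * (r / R) ^ α = δ ^ ((1:ℝ) - L) := by
    rw [Real.rpow_def_of_pos hrRpos, Real.rpow_def_of_pos hδpos]
    nth_rewrite 1 [← Real.exp_log hδpos]
    rw [← Real.exp_add]
    congr 1
    have hlog : Real.log (r / R) = -Real.log (R / r) := by
      rw [Real.log_div hr.ne' hR.ne', Real.log_div hR.ne' hr.ne']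
      ring
    rw [hlog, hαdef, hLdef, Real.logb]
    ring
  have e1 : ((δ:ℝ) ^ n)⁻¹ = δ ^ (-(n:ℝ)) := by
    rw [Real.rpow_neg hδpos.le, Real.rpow_natCast]
  have h2 : (δ ^ n)⁻¹ ≤ δ * (r / R) ^ α := by
    rw [e1, e2]
    apply Real.rpow_le_rpow_of_exponent_le hδ1.le
    linarith
  linarith
end

section
/- For every p in (1,\infty) there exists a constant c = c(p) > 0 such that for all real numbers w and k, c^{-1}(|w|+|k|)^{p-2}(w-k)_\pm^2 \leq G_\pm(w,k) \leq c(|w|+|k|)^{p-2}(w-k)_\pm^2, where G_\pm(w,k) = \pm(p-1)\int_k^w |s|^{p-2}(s-k)_\pm\,ds. -/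
open MeasureTheory intervalIntegral Real Set

lemma absRpowII {r : ℝ} (hr : -1 < r) (a b : ℝ) :
    IntervalIntegrable (fun x : ℝ => |x| ^ r) volume a b := by
  have key : ∀ c : ℝ, IntervalIntegrable (fun x : ℝ => |x| ^ r) volume 0 c := by
    have h0 : ∀ c : ℝ, 0 ≤ c → IntervalIntegrable (fun x : ℝ => |x| ^ r) volume 0 c := by
      intro c hc
      refine (intervalIntegrable_rpow' hr (a := 0) (b := c)).congr ?_
      intro x hx; beta_reduce
      rw [uIoc_of_le hc] at hx
      rw [abs_of_pos hx.1]
    intro c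
    rcases le_total 0 c with hc | hc
    · exact h0 c hc
    · have h := h0 (-c) (by linarith)
      rw [IntervalIntegrable.iff_comp_neg]
      simpa using h
  exact (key a).symm.trans (key b)

lemma integrandII (p k a b : ℝ) (hp : 1 < p) :
    IntervalIntegrable (fun s : ℝ => |s| ^ (p - 2) * max (s - k) 0) volume a b :=
  (absRpowII (by linarith) a b).mul_continuousOn
    (Continuous.continuousOn (by fun_prop))

/-- `G₊(w,k) = (p-1) ∫_k^w |s|^{p-2} (s-k)₊ ds`. -/
noncomputable def Gplus (p w k : ℝ) : ℝ :=
  (p - 1) * ∫ s in k..w, |s| ^ (p - 2) * max (s - k) 0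

/-- `G₋(w,k) = -(p-1) ∫_k^w |s|^{p-2} (s-k)₋ ds`. -/
noncomputable def Gminus (p w k : ℝ) : ℝ :=
  -((p - 1) * ∫ s in k..w, |s| ^ (p - 2) * max (k - s) 0)

lemma Gplus_of_le (p w k : ℝ) (h : w ≤ k) : Gplus p w k = 0 := by
  unfold Gplus
  have : (∫ s in k..w, |s| ^ (p - 2) * max (s - k) 0) = ∫ s in k..w, (0:ℝ) := by
    apply intervalIntegral.integral_congr
    intro s hs
    rw [uIcc_of_ge h] at hs
    have : s - k ≤ 0 := by linarith [hs.2]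
    simp [max_eq_right this]
  rw [this]
  simp

lemma Gminus_eq (p w k : ℝ) : Gminus p w k = Gplus p (-w) (-k) := by
  have h := intervalIntegral.integral_comp_neg (a := w) (b := k)
      (fun s => |s| ^ (p - 2) * max (s - -k) 0)
  simp only [abs_neg, neg_sub_neg] at h
  unfold Gplus Gminus
  rw [← h, intervalIntegral.integral_symm]
  ring

lemma four_rpow_eq (p : ℝ) : ((4:ℝ)⁻¹) ^ (p - 2) = (4:ℝ) ^ (2 - p) := by
  rw [Real.inv_rpow (by norm_num), ← Real.rpow_neg (by norm_num)]
  norm_num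

lemma Gplus_lower (p : ℝ) (hp : 1 < p) (w k : ℝ) (hkw : k < w) :
    (p - 1) * min 1 ((4:ℝ) ^ (2 - p)) / 64 * ((|w| + |k|) ^ (p - 2) * (w - k) ^ 2)
      ≤ Gplus p w k := by
  set m := |w| + |k| with hm_def
  set d := w - k with hd_def
  have hd : 0 < d := by rw [hd_def]; linarith
  have hwm : w ≤ m := by
    have := le_abs_self w; have := abs_nonneg k; rw [hm_def]; linarith
  have hkm : -m ≤ k := by
    have := neg_abs_le k; have := abs_nonneg w; rw [hm_def]; linarith
  have hdm : d ≤ m := by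
    have := le_abs_self w; have := neg_abs_le k; rw [hd_def, hm_def]; linarith
  have hm0 : 0 < m := lt_of_lt_of_le hd hdm
  have hX : (0:ℝ) < m ^ (p - 2) := rpow_pos_of_pos hm0 _
  suffices hI : min 1 ((4:ℝ) ^ (2 - p)) / 64 * (m ^ (p - 2) * d ^ 2)
      ≤ ∫ s in k..w, |s| ^ (p - 2) * max (s - k) 0 by
    rw [Gplus]
    have := mul_le_mul_of_nonneg_left hI (by linarith : (0:ℝ) ≤ p - 1)
    calc (p - 1) * min 1 ((4:ℝ) ^ (2 - p)) / 64 * (m ^ (p - 2) * d ^ 2)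
        = (p - 1) * (min 1 ((4:ℝ) ^ (2 - p)) / 64 * (m ^ (p - 2) * d ^ 2)) := by ring
      _ ≤ _ := this
  rcases le_or_gt 2 p with hp2 | hp2
  · -- p ≥ 2
    have hmin : min 1 ((4:ℝ) ^ (2 - p)) = (4:ℝ) ^ (2 - p) := by
      refine min_eq_right ?_
      calc (4:ℝ) ^ (2 - p) ≤ (4:ℝ) ^ (0:ℝ) :=
            Real.rpow_le_rpow_of_exponent_le (by norm_num) (by linarith)
        _ = 1 := Real.rpow_zero 4
    have hm4 : ((m/4:ℝ)) ^ (p - 2) = m ^ (p - 2) * (4:ℝ) ^ (2 - p) := by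
      rw [div_eq_mul_inv, Real.mul_rpow hm0.le (by norm_num), four_rpow_eq]
    obtain ⟨a, b, hka, hab, hbw, hlen, hbnd⟩ :
        ∃ a b, k ≤ a ∧ a ≤ b ∧ b ≤ w ∧ b - a = d/8 ∧
          (∀ s ∈ Icc a b, m/4 ≤ |s| ∧ d/8 ≤ s - k) := by
      rcases le_or_gt (m/2) w with hw | hw
      · refine ⟨w - d/8, w, by rw [hd_def]; linarith, by linarith, le_refl _, by ring,
          fun s hs => ⟨?_, ?_⟩⟩
        · have h1 : m/4 ≤ s := by
            have := hs.1; linarith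
          exact h1.trans (le_abs_self s)
        · have := hs.1; rw [hd_def] at *; linarith
      · have hk2 : k ≤ -(m/2) := by
          by_contra hk'
          push_neg at hk'
          have haw : |w| < m/2 := abs_lt.2 ⟨by linarith, hw⟩
          have hak : |k| < m/2 := abs_lt.2 ⟨by linarith, by linarith⟩
          rw [hm_def] at haw hak; linarith
        refine ⟨k + d/8, k + d/4, by linarith, by linarith, by rw [hd_def]; linarith, by ring,
          fun s hs => ⟨?_, ?_⟩⟩
        · have h1 : s ≤ -(m/4) := by have := hs.2; linarith
          have : m/4 ≤ -s := by linarith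
          exact this.trans (neg_le_abs s)
        · have := hs.1; linarith
    have step2 : ((m/4:ℝ)) ^ (p - 2) * (d/8) * (b - a)
        ≤ ∫ s in a..b, |s| ^ (p - 2) * max (s - k) 0 := by
      have hmono := intervalIntegral.integral_mono_on hab
        (_root_.intervalIntegrable_const (c := ((m/4:ℝ)) ^ (p - 2) * (d/8)))
        (integrandII p k a b hp) (fun s hs => ?_)
      · rw [intervalIntegral.integral_const, smul_eq_mul] at hmono
        calc ((m/4:ℝ)) ^ (p - 2) * (d/8) * (b - a)
            = (b - a) * (((m/4:ℝ)) ^ (p - 2) * (d/8)) := by ring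
          _ ≤ _ := hmono
      · have h1 : ((m/4:ℝ)) ^ (p - 2) ≤ |s| ^ (p - 2) :=
          Real.rpow_le_rpow (by positivity) (hbnd s hs).1 (by linarith)
        have h2 : d/8 ≤ max (s - k) 0 := (hbnd s hs).2.trans (le_max_left _ _)
        exact mul_le_mul h1 h2 (by linarith) (Real.rpow_nonneg (abs_nonneg s) _)
    have step1 : (∫ s in a..b, |s| ^ (p - 2) * max (s - k) 0)
        ≤ ∫ s in k..w, |s| ^ (p - 2) * max (s - k) 0 :=
      intervalIntegral.integral_mono_interval hka hab hbw
        (Filter.Eventually.of_forall fun s => by positivity) (integrandII p k k w hp)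
    rw [hmin]
    calc (4:ℝ) ^ (2 - p) / 64 * (m ^ (p - 2) * d ^ 2)
        = ((m/4:ℝ)) ^ (p - 2) * (d/8) * (b - a) := by rw [hm4, hlen]; ring
      _ ≤ _ := step2.trans step1
  · -- p < 2
    have hmin : min 1 ((4:ℝ) ^ (2 - p)) = 1 := by
      refine min_eq_left ?_
      calc (1:ℝ) = (4:ℝ) ^ (0:ℝ) := (Real.rpow_zero 4).symm
        _ ≤ (4:ℝ) ^ (2 - p) :=
            Real.rpow_le_rpow_of_exponent_le (by norm_num) (by linarith)
    have hab2 : k + d/2 ≤ w := by rw [hd_def]; linarith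
    have hne : ∀ᵐ s : ℝ ∂volume, s ≠ 0 := by
      have hs : {a : ℝ | ¬ a ≠ 0} = {0} := by ext x; simp
      rw [MeasureTheory.ae_iff, hs]
      exact Real.volume_singleton
    have h0ae : ∀ᵐ s : ℝ ∂(volume.restrict (Icc (k + d/2) w)),
        (fun _ : ℝ => m ^ (p - 2) * (d/2)) s ≤ |s| ^ (p - 2) * max (s - k) 0 := by
      rw [MeasureTheory.ae_restrict_iff' measurableSet_Icc]
      filter_upwards [hne] with s hs0 hsIcc
      have habs : |s| ≤ m := abs_le.2 ⟨by linarith [hsIcc.1], by linarith [hsIcc.2]⟩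
      have h1 : m ^ (p - 2) ≤ |s| ^ (p - 2) :=
        Real.rpow_le_rpow_of_nonpos (abs_pos.2 hs0) habs (by linarith)
      have h2 : d/2 ≤ max (s - k) 0 := le_trans (by linarith [hsIcc.1]) (le_max_left _ _)
      exact mul_le_mul h1 h2 (by linarith) (Real.rpow_nonneg (abs_nonneg s) _)
    have step2 := intervalIntegral.integral_mono_ae_restrict hab2
      (_root_.intervalIntegrable_const (c := m ^ (p - 2) * (d/2)))
      (integrandII p k (k + d/2) w hp) h0ae
    rw [intervalIntegral.integral_const, smul_eq_mul] at step2
    have step1 : (∫ s in (k + d/2)..w, |s| ^ (p - 2) * max (s - k) 0)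
        ≤ ∫ s in k..w, |s| ^ (p - 2) * max (s - k) 0 :=
      intervalIntegral.integral_mono_interval (by linarith) hab2 (le_refl w)
        (Filter.Eventually.of_forall fun s => by positivity) (integrandII p k k w hp)
    have hwd : w - (k + d/2) = d/2 := by rw [hd_def]; ring
    rw [hwd] at step2
    rw [hmin]
    have hX2 : (0:ℝ) ≤ m ^ (p - 2) * d ^ 2 := by positivity
    nlinarith [step2.trans step1]

lemma Gplus_upper (p : ℝ) (hp : 1 < p) (w k : ℝ) (hkw : k < w) :
    Gplus p w k ≤ 8 * max (p - 1) 1 * max 1 ((4:ℝ) ^ (2 - p))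
      * ((|w| + |k|) ^ (p - 2) * (w - k) ^ 2) := by
  set m := |w| + |k| with hm_def
  set d := w - k with hd_def
  have hd : 0 < d := by rw [hd_def]; linarith
  have hwm : w ≤ m := by
    have := le_abs_self w; have := abs_nonneg k; rw [hm_def]; linarith
  have hkm : -m ≤ k := by
    have := neg_abs_le k; have := abs_nonneg w; rw [hm_def]; linarith
  have hdm : d ≤ m := by
    have := le_abs_self w; have := neg_abs_le k; rw [hd_def, hm_def]; linarith
  have hm0 : 0 < m := lt_of_lt_of_le hd hdm
  have hX : (0:ℝ) ≤ m ^ (p - 2) * d ^ 2 := by positivity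
  have hA : p - 1 ≤ max (p - 1) 1 := le_max_left _ _
  have hA1 : (1:ℝ) ≤ max (p - 1) 1 := le_max_right _ _
  have hB1 : (1:ℝ) ≤ max 1 ((4:ℝ) ^ (2 - p)) := le_max_left _ _
  have hB : (4:ℝ) ^ (2 - p) ≤ max 1 ((4:ℝ) ^ (2 - p)) := le_max_right _ _
  have upper_const : ∀ C : ℝ, (∀ s ∈ Icc k w, |s| ^ (p - 2) * max (s - k) 0 ≤ C) →
      (∫ s in k..w, |s| ^ (p - 2) * max (s - k) 0) ≤ C * d := by
    intro C hC
    have h1 := intervalIntegral.integral_mono_on hkw.le (integrandII p k k w hp)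
      (_root_.intervalIntegrable_const (c := C)) hC
    rw [intervalIntegral.integral_const, smul_eq_mul] at h1
    calc (∫ s in k..w, |s| ^ (p - 2) * max (s - k) 0) ≤ (w - k) * C := h1
      _ = C * d := by rw [hd_def]; ring
  rcases le_or_gt 2 p with hp2 | hp2
  · -- p ≥ 2
    have hI : (∫ s in k..w, |s| ^ (p - 2) * max (s - k) 0) ≤ m ^ (p - 2) * d * d := by
      refine upper_const _ (fun s hs => ?_)
      have habs : |s| ≤ m := abs_le.2 ⟨by linarith [hs.1], by linarith [hs.2]⟩
      have h1 : |s| ^ (p - 2) ≤ m ^ (p - 2) :=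
        Real.rpow_le_rpow (abs_nonneg s) habs (by linarith)
      have h2 : max (s - k) 0 ≤ d := max_le (by rw [hd_def]; linarith [hs.2]) hd.le
      exact mul_le_mul h1 h2 (le_max_right _ _) (Real.rpow_nonneg hm0.le _)
    have key : p - 1 ≤ 8 * max (p - 1) 1 * max 1 ((4:ℝ) ^ (2 - p)) := by
      nlinarith
    rw [Gplus]
    calc (p - 1) * ∫ s in k..w, |s| ^ (p - 2) * max (s - k) 0
        ≤ (p - 1) * (m ^ (p - 2) * d * d) :=
          mul_le_mul_of_nonneg_left hI (by linarith)
      _ = (p - 1) * (m ^ (p - 2) * d ^ 2) := by ring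
      _ ≤ 8 * max (p - 1) 1 * max 1 ((4:ℝ) ^ (2 - p)) * (m ^ (p - 2) * d ^ 2) :=
          mul_le_mul_of_nonneg_right key hX
  · -- p < 2
    rcases le_or_gt (m/4) d with hcase | hcase
    · -- d large
      have hIabs : (∫ s in k..w, |s| ^ (p - 2) * max (s - k) 0)
          ≤ d * ∫ s in k..w, |s| ^ (p - 2) := by
        have h1 := intervalIntegral.integral_mono_on hkw.le (integrandII p k k w hp)
          ((absRpowII (show (-1:ℝ) < p - 2 by linarith) k w).mul_const d)
          (fun s hs => ?_)
        · rw [intervalIntegral.integral_mul_const] at h1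
          calc (∫ s in k..w, |s| ^ (p - 2) * max (s - k) 0)
              ≤ (∫ s in k..w, |s| ^ (p - 2)) * d := h1
            _ = d * ∫ s in k..w, |s| ^ (p - 2) := by ring
        · have h2 : max (s - k) 0 ≤ d := max_le (by rw [hd_def]; linarith [hs.2]) hd.le
          exact mul_le_mul_of_nonneg_left h2 (Real.rpow_nonneg (abs_nonneg s) _)
      have hmono : (∫ s in k..w, |s| ^ (p - 2)) ≤ ∫ s in (-m)..m, |s| ^ (p - 2) :=
        intervalIntegral.integral_mono_interval hkm hkw.le hwm
          (Filter.Eventually.of_forall fun s => Real.rpow_nonneg (abs_nonneg s) _)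
          (absRpowII (by linarith) (-m) m)
      have hright : (∫ s in (0:ℝ)..m, |s| ^ (p - 2)) = m ^ (p - 1) / (p - 1) := by
        have hcongr : (∫ s in (0:ℝ)..m, |s| ^ (p - 2)) = ∫ s in (0:ℝ)..m, s ^ (p - 2) := by
          apply intervalIntegral.integral_congr
          intro s hs
          rw [uIcc_of_le hm0.le] at hs
          show |s| ^ (p - 2) = s ^ (p - 2)
          rw [abs_of_nonneg hs.1]
        rw [hcongr, integral_rpow (Or.inl (by linarith))]
        rw [Real.zero_rpow (by intro hz; linarith : p - 2 + 1 ≠ 0)]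
        have he : p - 2 + 1 = p - 1 := by ring
        rw [he]; ring
      have hleft : (∫ s in (-m)..(0:ℝ), |s| ^ (p - 2)) = ∫ s in (0:ℝ)..m, |s| ^ (p - 2) := by
        have h3 := intervalIntegral.integral_comp_neg (a := (0:ℝ)) (b := m)
          (fun s : ℝ => |s| ^ (p - 2))
        simp only [abs_neg, neg_zero] at h3
        exact h3.symm
      have hsplit := intervalIntegral.integral_add_adjacent_intervals
        (absRpowII (show (-1:ℝ) < p - 2 by linarith) (-m) 0)
        (absRpowII (show (-1:ℝ) < p - 2 by linarith) 0 m)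
      have htot : (∫ s in (-m)..m, |s| ^ (p - 2)) = 2 * m ^ (p - 1) / (p - 1) := by
        rw [← hsplit, hleft, hright]; ring
      have hmexp : m ^ (p - 1) = m ^ (p - 2) * m := by
        rw [show p - 1 = p - 2 + 1 by ring, Real.rpow_add_one hm0.ne' (p - 2)]
      have hI : (∫ s in k..w, |s| ^ (p - 2) * max (s - k) 0)
          ≤ 8 / (p - 1) * (m ^ (p - 2) * d ^ 2) := by
        have hp1 : (0:ℝ) < p - 1 := by linarith
        have c1 : (∫ s in k..w, |s| ^ (p - 2) * max (s - k) 0)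
            ≤ d * (2 * m ^ (p - 1) / (p - 1)) := by
          refine hIabs.trans ?_
          rw [← htot]
          exact mul_le_mul_of_nonneg_left hmono hd.le
        refine c1.trans ?_
        rw [hmexp]
        have hXp : (0:ℝ) ≤ m ^ (p - 2) := Real.rpow_nonneg hm0.le _
        rw [show d * (2 * (m ^ (p - 2) * m) / (p - 1)) = 2*d*m*(m^(p-2)) / (p - 1) from by ring,
          show 8 / (p - 1) * (m ^ (p - 2) * d ^ 2) = 8*d^2*(m^(p-2)) / (p - 1) from by ring,
          div_le_div_iff_of_pos_right hp1]
        nlinarith [mul_nonneg (mul_nonneg (by linarith : (0:ℝ) ≤ 2*d) hXp)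
          (by linarith : (0:ℝ) ≤ 4*d - m)]
      rw [Gplus]
      have hp1 : (0:ℝ) < p - 1 := by linarith
      calc (p - 1) * ∫ s in k..w, |s| ^ (p - 2) * max (s - k) 0
          ≤ (p - 1) * (8 / (p - 1) * (m ^ (p - 2) * d ^ 2)) :=
            mul_le_mul_of_nonneg_left hI hp1.le
        _ = 8 * (m ^ (p - 2) * d ^ 2) := by field_simp
        _ ≤ 8 * max (p - 1) 1 * max 1 ((4:ℝ) ^ (2 - p)) * (m ^ (p - 2) * d ^ 2) := by
            refine mul_le_mul_of_nonneg_right ?_ hX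
            nlinarith
    · -- d small
      have hlow : ∀ s ∈ Icc k w, 3*m/8 ≤ |s| := by
        intro s hs
        have hwk : |w| ≤ |k| + d := by
          calc |w| = |k + d| := by congr 1; rw [hd_def]; ring
            _ ≤ |k| + |d| := abs_add_le k d
            _ = |k| + d := by rw [abs_of_pos hd]
        by_cases hk0 : 0 < k
        · have h1 : (m - d)/2 ≤ |k| := by linarith
          have h2 : |k| = k := abs_of_pos hk0
          have h3 : k ≤ s := hs.1
          have : 3*m/8 ≤ s := by linarith
          exact this.trans (le_abs_self s)
        · by_cases hw0 : w < 0
          · have hkw' : |k| ≤ |w| + d := by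
              calc |k| = |w - d| := by congr 1; rw [hd_def]; ring
                _ ≤ |w| + |d| := abs_sub w d
                _ = |w| + d := by rw [abs_of_pos hd]
            have h1 : (m - d)/2 ≤ |w| := by linarith
            have h2 : |w| = -w := abs_of_neg hw0
            have h3 : s ≤ w := hs.2
            have : 3*m/8 ≤ -s := by linarith
            exact this.trans (neg_le_abs s)
          · push_neg at hk0 hw0
            exfalso
            have h1 : |k| ≤ d := by
              rw [abs_of_nonpos hk0, hd_def]; linarith
            have h2 : |w| ≤ d := by
              rw [abs_of_nonneg hw0, hd_def]; linarith
            linarith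
      have hI : (∫ s in k..w, |s| ^ (p - 2) * max (s - k) 0)
          ≤ (m ^ (p - 2) * (4:ℝ) ^ (2 - p) * d) * d := by
        refine upper_const _ (fun s hs => ?_)
        have h1 : |s| ^ (p - 2) ≤ (m/4) ^ (p - 2) := by
          have h38 : (3*m/8) ^ (p - 2) ≤ (m/4) ^ (p - 2) :=
            Real.rpow_le_rpow_of_nonpos (by linarith) (by linarith) (by linarith)
          refine le_trans ?_ h38
          exact Real.rpow_le_rpow_of_nonpos (by linarith) (hlow s hs) (by linarith)
        have hm4 : ((m/4:ℝ)) ^ (p - 2) = m ^ (p - 2) * (4:ℝ) ^ (2 - p) := by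
          rw [div_eq_mul_inv, Real.mul_rpow hm0.le (by norm_num), four_rpow_eq]
        rw [hm4] at h1
        have h2 : max (s - k) 0 ≤ d := max_le (by rw [hd_def]; linarith [hs.2]) hd.le
        have wait : |s| ^ (p - 2) ≥ 0 := Real.rpow_nonneg (abs_nonneg s) _
        exact mul_le_mul h1 h2 (le_max_right _ _) (by positivity)
      rw [Gplus]
      have hp1 : (0:ℝ) < p - 1 := by linarith
      have h4p : (0:ℝ) < (4:ℝ) ^ (2 - p) := Real.rpow_pos_of_pos (by norm_num) _
      calc (p - 1) * ∫ s in k..w, |s| ^ (p - 2) * max (s - k) 0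
          ≤ (p - 1) * ((m ^ (p - 2) * (4:ℝ) ^ (2 - p) * d) * d) :=
            mul_le_mul_of_nonneg_left hI hp1.le
        _ = ((p - 1) * (4:ℝ) ^ (2 - p)) * (m ^ (p - 2) * d ^ 2) := by ring
        _ ≤ 8 * max (p - 1) 1 * max 1 ((4:ℝ) ^ (2 - p)) * (m ^ (p - 2) * d ^ 2) := by
            refine mul_le_mul_of_nonneg_right ?_ hX
            have hAB : (p - 1) * (4:ℝ) ^ (2 - p) ≤ max (p - 1) 1 * max 1 ((4:ℝ) ^ (2 - p)) :=
              mul_le_mul hA hB h4p.le (by linarith)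
            nlinarith [mul_le_mul_of_nonneg_left hB1 (by linarith : (0:ℝ) ≤ max (p-1) 1)]


/-- two-sided comparison of `G±(w,k)` with `(|w|+|k|)^{p-2}(w-k)±²`. -/
theorem Gpm_comparison (p : ℝ) (hp : 1 < p) :
    ∃ c > (0:ℝ), ∀ w k : ℝ,
      c⁻¹ * ((|w| + |k|) ^ (p - 2) * max (w - k) 0 ^ 2) ≤ Gplus p w k ∧
      Gplus p w k ≤ c * ((|w| + |k|) ^ (p - 2) * max (w - k) 0 ^ 2) ∧
      c⁻¹ * ((|w| + |k|) ^ (p - 2) * max (k - w) 0 ^ 2) ≤ Gminus p w k ∧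
      Gminus p w k ≤ c * ((|w| + |k|) ^ (p - 2) * max (k - w) 0 ^ 2) := by
  set a := (p - 1) * min 1 ((4:ℝ) ^ (2 - p)) / 64 with ha_def
  set b := 8 * max (p - 1) 1 * max 1 ((4:ℝ) ^ (2 - p)) with hb_def
  have hmin0 : (0:ℝ) < min 1 ((4:ℝ) ^ (2 - p)) :=
    lt_min one_pos (Real.rpow_pos_of_pos (by norm_num) _)
  have ha : 0 < a := by
    rw [ha_def]; have : (0:ℝ) < p - 1 := by linarith
    positivity
  have hb : 0 < b := by
    rw [hb_def]
    have h1 : (0:ℝ) < max (p - 1) 1 := lt_of_lt_of_le one_pos (le_max_right _ _)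
    have h2 : (0:ℝ) < max 1 ((4:ℝ) ^ (2 - p)) := lt_of_lt_of_le one_pos (le_max_left _ _)
    positivity
  refine ⟨max b a⁻¹, lt_of_lt_of_le hb (le_max_left _ _), fun w k => ?_⟩
  set c := max b a⁻¹ with hc_def
  have hc : 0 < c := lt_of_lt_of_le hb (le_max_left _ _)
  have hbc : b ≤ c := le_max_left _ _
  have hcinv : c⁻¹ ≤ a := by
    have h1 : a⁻¹ ≤ c := le_max_right _ _
    calc c⁻¹ ≤ (a⁻¹)⁻¹ := by
          apply inv_anti₀ (by positivity) h1
      _ = a := inv_inv a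
  rcases lt_trichotomy k w with hlt | heq | hgt
  · -- k < w
    have hmax1 : max (w - k) 0 = w - k := max_eq_left (by linarith)
    have hmax2 : max (k - w) 0 = 0 := max_eq_right (by linarith)
    have hXnn : (0:ℝ) ≤ (|w| + |k|) ^ (p - 2) * (w - k) ^ 2 := by positivity
    have hGm : Gminus p w k = 0 := by
      rw [Gminus_eq, Gplus_of_le p (-w) (-k) (by linarith)]
    refine ⟨?_, ?_, ?_, ?_⟩
    · rw [hmax1]
      calc c⁻¹ * ((|w| + |k|) ^ (p - 2) * (w - k) ^ 2)
          ≤ a * ((|w| + |k|) ^ (p - 2) * (w - k) ^ 2) :=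
            mul_le_mul_of_nonneg_right hcinv hXnn
        _ ≤ Gplus p w k := Gplus_lower p hp w k hlt
    · rw [hmax1]
      calc Gplus p w k
          ≤ b * ((|w| + |k|) ^ (p - 2) * (w - k) ^ 2) := Gplus_upper p hp w k hlt
        _ ≤ c * ((|w| + |k|) ^ (p - 2) * (w - k) ^ 2) :=
            mul_le_mul_of_nonneg_right hbc hXnn
    · rw [hmax2, hGm]; simp
    · rw [hmax2, hGm]; simp
  · -- k = w
    subst heq
    have h1 : Gplus p k k = 0 := by
      rw [Gplus]; rw [intervalIntegral.integral_same]; ring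
    have h2 : Gminus p k k = 0 := by
      rw [Gminus]; rw [intervalIntegral.integral_same]; ring
    rw [h1, h2]; simp
  · -- w < k
    have hmax1 : max (w - k) 0 = 0 := max_eq_right (by linarith)
    have hmax2 : max (k - w) 0 = k - w := max_eq_left (by linarith)
    have hGp : Gplus p w k = 0 := Gplus_of_le p w k hgt.le
    have hXnn : (0:ℝ) ≤ (|w| + |k|) ^ (p - 2) * (k - w) ^ 2 := by positivity
    have hL := Gplus_lower p hp (-w) (-k) (by linarith)
    have hU := Gplus_upper p hp (-w) (-k) (by linarith)
    rw [abs_neg, abs_neg, show -w - -k = k - w from by ring, add_comm |w| |k|] at hL hU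
    rw [add_comm |w| |k|] at hXnn
    have hGm : Gminus p w k = Gplus p (-w) (-k) := Gminus_eq p w k
    refine ⟨?_, ?_, ?_, ?_⟩
    · rw [hmax1, hGp]; simp
    · rw [hmax1, hGp]; simp
    · rw [hmax2, hGm, add_comm |w| |k|]
      calc c⁻¹ * ((|k| + |w|) ^ (p - 2) * (k - w) ^ 2)
          ≤ a * ((|k| + |w|) ^ (p - 2) * (k - w) ^ 2) :=
            mul_le_mul_of_nonneg_right hcinv hXnn
        _ ≤ Gplus p (-w) (-k) := hL
    · rw [hmax2, hGm, add_comm |w| |k|]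
      calc Gplus p (-w) (-k)
          ≤ b * ((|k| + |w|) ^ (p - 2) * (k - w) ^ 2) := hU
        _ ≤ c * ((|k| + |w|) ^ (p - 2) * (k - w) ^ 2) :=
            mul_le_mul_of_nonneg_right hbc hXnn
end

section
/- Suppose \mu is doubling on a geodesic metric measure space X and that there exist constants c, \tau' \geq 1 and \delta > 0 such that the (q,p)-Poincar\'e inequality (\fint_{B(x_0,r)} |u - u_{B(x_0,r)}|^q\,d\mu)^{1/q} \leq c\,r\,(\fint_{B(x_0,\tau' r)} g_u^p\,d\mu)^{1/p} holds for all u \in N^{1,p}(B(x_0,\tau' r)) whenever 0 < r \leq \delta\,\mathrm{diam}(X). Then a (q,p)-Poincar\'e inequality holds for all balls in X, with constants c_P and \tau depending only on c, \tau', \delta and c_\mu. -/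
open MeasureTheory Metric Set
open scoped ENNReal

/-- `X` is a geodesic space: any two points are joined by an isometric segment. -/
def IsGeodesicSpace (X : Type*) [MetricSpace X] : Prop :=
  ∀ x y : X, ∃ γ : ℝ → X, γ 0 = x ∧ γ (dist x y) = y ∧
    ∀ s ∈ Set.Icc (0:ℝ) (dist x y), ∀ t ∈ Set.Icc (0:ℝ) (dist x y),
      dist (γ s) (γ t) = |s - t|

/-- `g` is an upper gradient of `u`: `g ≥ 0` and along every rectifiable curve
(parametrized by arclength, i.e. `1`-Lipschitz on `[0,ℓ]`) the fundamental
theorem type inequality holds. -/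
def IsUpperGradient {X : Type*} [MetricSpace X] (u g : X → ℝ) : Prop :=
  (∀ x, 0 ≤ g x) ∧
  ∀ (ℓ : ℝ) (γ : ℝ → X), 0 ≤ ℓ → LipschitzOnWith 1 γ (Set.Icc 0 ℓ) →
    |u (γ ℓ) - u (γ 0)| ≤ ∫ t in Set.Icc (0:ℝ) ℓ, g (γ t)

/-- `(⨍_s (f)^e dμ)^{1/e}` as an extended nonnegative real. -/
noncomputable def avgPow {X : Type*} [MeasurableSpace X]
    (μ : MeasureTheory.Measure X) (s : Set X) (f : X → ℝ) (e : ℝ) : ℝ≥0∞ :=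
  ((∫⁻ x in s, ENNReal.ofReal (f x) ^ e ∂μ) / μ s) ^ (1 / e)

/-- The `(q,p)`-Poincaré inequality on the ball `B(x₀,r)` with constants `c_P, τ`,
formulated for every function–upper-gradient pair. -/
def PoincareOn {X : Type*} [MetricSpace X] [MeasurableSpace X]
    (μ : MeasureTheory.Measure X) (p q c_P τ : ℝ) (x₀ : X) (r : ℝ) : Prop :=
  ∀ u g : X → ℝ, IsUpperGradient u g →
    MeasureTheory.IntegrableOn u (ball x₀ (τ * r)) μ →
    avgPow μ (ball x₀ r) (fun x => |u x - ⨍ y in ball x₀ r, u y ∂μ|) q ≤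
      ENNReal.ofReal (c_P * r) * avgPow μ (ball x₀ (τ * r)) g p

section Helpers
variable {X : Type*} [MeasurableSpace X] (μ : Measure X)

/-- Jensen / power mean inequality. -/
lemma jensen_avg {s : Set X} {f : X → ℝ≥0∞} (hf : AEMeasurable f (μ.restrict s))
    (hs0 : μ s ≠ 0) (hsT : μ s ≠ ⊤) {e : ℝ} (he : 1 ≤ e) :
    (∫⁻ x in s, f x ∂μ) / μ s ≤ ((∫⁻ x in s, f x ^ e ∂μ) / μ s) ^ (1 / e) := by
  rcases eq_or_lt_of_le he with rfl | he1
  · simp [ENNReal.rpow_one]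
  · have hepos : 0 < e := lt_trans one_pos he1
    have hconj : e.HolderConjugate (e / (e - 1)) := by
      rw [Real.holderConjugate_iff]
      constructor
      · exact he1
      · rw [inv_div]
        field_simp
        ring
    have hol := ENNReal.lintegral_mul_le_Lp_mul_Lq (μ.restrict s) hconj hf
      (aemeasurable_const (b := (1:ℝ≥0∞)))
    simp only [Pi.mul_apply, mul_one, one_mul, ENNReal.one_rpow, lintegral_const,
      Measure.restrict_apply_univ] at hol
    have hsub : (0:ℝ) ≤ 1 - 1/e := by
      rw [sub_nonneg]; exact (div_le_one hepos).2 he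
    have h1e : 1 / (e / (e - 1)) = 1 - 1/e := by
      rw [one_div, inv_div]
      field_simp
    rw [h1e] at hol
    have hs0' : (μ s) ^ (1 - 1/e) ≠ ⊤ := by
      exact ENNReal.rpow_ne_top_of_nonneg hsub hsT
    calc (∫⁻ x in s, f x ∂μ) / μ s
        ≤ ((∫⁻ x in s, f x ^ e ∂μ) ^ (1/e) * (μ s) ^ (1 - 1/e)) / μ s :=
          ENNReal.div_le_div hol le_rfl
      _ = (∫⁻ x in s, f x ^ e ∂μ) ^ (1/e) * ((μ s) ^ (1 - 1/e) / (μ s) ^ (1:ℝ)) := by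
          rw [mul_div_assoc, ENNReal.rpow_one]
      _ = (∫⁻ x in s, f x ^ e ∂μ) ^ (1/e) * (μ s) ^ ((1 - 1/e) - 1) := by
          rw [← ENNReal.rpow_sub _ _ hs0 hsT]
      _ = (∫⁻ x in s, f x ^ e ∂μ) ^ (1/e) * ((μ s) ^ (1/e))⁻¹ := by
          rw [show (1 - 1/e) - 1 = -(1/e) by ring, ENNReal.rpow_neg]
      _ = (∫⁻ x in s, f x ^ e ∂μ) ^ (1/e) / (μ s) ^ (1/e) := by
          rw [div_eq_mul_inv]
          rfl
      _ = ((∫⁻ x in s, f x ^ e ∂μ) / μ s) ^ (1/e) := by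
          rw [ENNReal.div_rpow_of_nonneg _ _ (by positivity)]

lemma avg_sub_le {s t : Set X} (hst : s ⊆ t) (hs0 : μ s ≠ 0) (hsT : μ s ≠ ⊤)
    (ht0 : μ t ≠ 0) (htT : μ t ≠ ⊤)
    {u : X → ℝ} (hu : IntegrableOn u t μ) (a e : ℝ) (he : 1 ≤ e) :
    ENNReal.ofReal |(⨍ y in s, u y ∂μ) - a| ≤
      (μ t / μ s) * avgPow μ t (fun x => |u x - a|) e := by
  have hus : IntegrableOn u s μ := hu.mono_set hst
  have hsr : (μ s).toReal ≠ 0 := by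
    simp [ENNReal.toReal_ne_zero, hs0, hsT]
  have hconst : IntegrableOn (fun _ => a) s μ :=
    integrableOn_const hsT
  have h1 : (⨍ y in s, u y ∂μ) - a = ⨍ y in s, (u y - a) ∂μ := by
    rw [setAverage_eq, setAverage_eq, integral_sub hus hconst, setIntegral_const,
      smul_sub, smul_smul, inv_mul_cancel₀ (show μ.real s ≠ 0 from hsr), one_smul]
  have h2 : |(⨍ y in s, u y ∂μ) - a| ≤ (μ s).toReal⁻¹ * ∫ y in t, |u y - a| ∂μ := by
    rw [h1, setAverage_eq, smul_eq_mul, abs_mul, abs_inv, abs_of_nonneg measureReal_nonneg]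
    have h3 : |∫ y in s, (u y - a) ∂μ| ≤ ∫ y in s, |u y - a| ∂μ := by
      simpa using norm_integral_le_integral_norm (μ := μ.restrict s) (fun y => u y - a)
    have h4 : ∫ y in s, |u y - a| ∂μ ≤ ∫ y in t, |u y - a| ∂μ :=
      setIntegral_mono_set ((hu.sub (integrableOn_const htT)).abs)
        (ae_of_all _ fun y => abs_nonneg _) (HasSubset.Subset.eventuallyLE hst)
    exact mul_le_mul_of_nonneg_left (h3.trans h4) (by positivity)
  have hint_abs : IntegrableOn (fun y => |u y - a|) t μ :=
    (hu.sub (integrableOn_const htT)).abs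
  have h5 : ENNReal.ofReal (∫ y in t, |u y - a| ∂μ) = ∫⁻ y in t, ENNReal.ofReal |u y - a| ∂μ :=
    MeasureTheory.ofReal_integral_eq_lintegral_ofReal hint_abs (ae_of_all _ fun y => abs_nonneg _)
  have hmeas : AEMeasurable (fun y => ENNReal.ofReal |u y - a|) (μ.restrict t) :=
    ((measurable_abs.comp_aemeasurable (hu.1.aemeasurable.sub aemeasurable_const))).ennreal_ofReal
  have hj : (∫⁻ y in t, ENNReal.ofReal |u y - a| ∂μ) / μ t ≤
      avgPow μ t (fun x => |u x - a|) e := jensen_avg μ hmeas ht0 htT he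
  calc ENNReal.ofReal |(⨍ y in s, u y ∂μ) - a|
      ≤ ENNReal.ofReal ((μ s).toReal⁻¹ * ∫ y in t, |u y - a| ∂μ) := ENNReal.ofReal_le_ofReal h2
    _ = (μ s)⁻¹ * ∫⁻ y in t, ENNReal.ofReal |u y - a| ∂μ := by
        rw [ENNReal.ofReal_mul (by positivity), h5,
          ENNReal.ofReal_inv_of_pos (ENNReal.toReal_pos hs0 hsT), ENNReal.ofReal_toReal hsT]
    _ = (μ s)⁻¹ * (μ t * ((∫⁻ y in t, ENNReal.ofReal |u y - a| ∂μ) / μ t)) := by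
        rw [ENNReal.mul_div_cancel ht0 htT]
    _ ≤ (μ s)⁻¹ * (μ t * avgPow μ t (fun x => |u x - a|) e) := by
        exact mul_le_mul_right (mul_le_mul_right hj _) _
    _ = (μ t / μ s) * avgPow μ t (fun x => |u x - a|) e := by
        rw [div_eq_mul_inv, mul_comm (μ t) (μ s)⁻¹, mul_assoc]

lemma pow2q (α β : ℝ≥0∞) {e : ℝ} (he : 0 ≤ e) :
    (α + β) ^ e ≤ (2:ℝ≥0∞) ^ e * (α ^ e + β ^ e) := by
  have h1 : α + β ≤ 2 * (α ⊔ β) := by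
    rw [two_mul]
    exact add_le_add le_sup_left le_sup_right
  calc (α + β) ^ e ≤ (2 * (α ⊔ β)) ^ e := ENNReal.rpow_le_rpow h1 he
    _ = (2:ℝ≥0∞) ^ e * (α ⊔ β) ^ e := ENNReal.mul_rpow_of_nonneg _ _ he
    _ ≤ (2:ℝ≥0∞) ^ e * (α ^ e + β ^ e) := by
        apply mul_le_mul_right
        rcases le_total α β with h | h
        · rw [sup_eq_right.2 h]; exact le_add_self
        · rw [sup_eq_left.2 h]; exact le_self_add

end Helpers

section Helpers3
variable {X : Type*} [MetricSpace X] [MeasurableSpace X] (μ : Measure X)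

lemma dbl_iter {c_μ : ℝ}
    (hdbl : ∀ (x : X) (r : ℝ), 0 < r →
      μ (ball x (2 * r)) ≤ ENNReal.ofReal c_μ * μ (ball x r)) :
    ∀ (m : ℕ) (x : X) (s t : ℝ), 0 < s → t ≤ 2 ^ m * s →
      μ (ball x t) ≤ (ENNReal.ofReal c_μ) ^ m * μ (ball x s) := by
  intro m
  induction m with
  | zero => intro x s t hs ht
            simpa using measure_mono (ball_subset_ball (by simpa using ht))
  | succ n ih =>
    intro x s t hs ht
    have h1 : μ (ball x t) ≤ μ (ball x (2 * (2 ^ n * s))) := by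
      apply measure_mono (ball_subset_ball _)
      rw [pow_succ] at ht
      linarith
    have h2 := hdbl x (2 ^ n * s) (by positivity)
    have h3 := ih x s (2 ^ n * s) hs le_rfl
    calc μ (ball x t) ≤ ENNReal.ofReal c_μ * μ (ball x (2 ^ n * s)) := h1.trans h2
      _ ≤ ENNReal.ofReal c_μ * ((ENNReal.ofReal c_μ) ^ n * μ (ball x s)) := mul_le_mul_right h3 _
      _ = (ENNReal.ofReal c_μ) ^ (n + 1) * μ (ball x s) := by rw [pow_succ]; ring

end Helpers3

lemma lintegral_biUnion_finset_le' {X ι : Type*} [MeasurableSpace X] (μ : Measure X)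
    (f : X → ℝ≥0∞) (F : Finset ι) (s : ι → Set X) :
    ∫⁻ x in ⋃ z ∈ F, s z, f x ∂μ ≤ ∑ z ∈ F, ∫⁻ x in s z, f x ∂μ := by
  classical
  induction F using Finset.induction with
  | empty => simp
  | insert _ _ hni ih =>
    rename_i a F'
    rw [Finset.set_biUnion_insert, Finset.sum_insert hni]
    exact (lintegral_union_le _ _ _).trans (add_le_add le_rfl ih)

lemma avgPow_mono_aux {X : Type*} [MeasurableSpace X] (μ : Measure X)
    {s t : Set X} (f : X → ℝ) {e : ℝ} (he : 1 ≤ e) (hst : s ⊆ t)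
    {A : ℝ≥0∞} (hA : 1 ≤ A) (hAT : A ≠ ⊤) (hμ : μ t ≤ A * μ s) :
    avgPow μ s f e ≤ A * avgPow μ t f e := by
  have hA0 : A ≠ 0 := by positivity
  have hepos : 0 < e := lt_of_lt_of_le one_pos he
  have hN : (∫⁻ x in s, ENNReal.ofReal (f x) ^ e ∂μ) ≤ ∫⁻ x in t, ENNReal.ofReal (f x) ^ e ∂μ :=
    lintegral_mono_set hst
  have hdiv : (∫⁻ x in s, ENNReal.ofReal (f x) ^ e ∂μ) / μ s ≤
      A * ((∫⁻ x in t, ENNReal.ofReal (f x) ^ e ∂μ) / μ t) := by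
    calc (∫⁻ x in s, ENNReal.ofReal (f x) ^ e ∂μ) / μ s
        = (A * ∫⁻ x in s, ENNReal.ofReal (f x) ^ e ∂μ) / (A * μ s) := by
          rw [ENNReal.mul_div_mul_left _ _ hA0 hAT]
      _ ≤ (A * ∫⁻ x in t, ENNReal.ofReal (f x) ^ e ∂μ) / μ t :=
          ENNReal.div_le_div (mul_le_mul_right hN _) hμ
      _ = A * ((∫⁻ x in t, ENNReal.ofReal (f x) ^ e ∂μ) / μ t) := by
          rw [mul_div_assoc]
  calc avgPow μ s f e ≤ (A * ((∫⁻ x in t, ENNReal.ofReal (f x) ^ e ∂μ) / μ t)) ^ (1/e) :=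
        ENNReal.rpow_le_rpow hdiv (by positivity)
    _ = A ^ (1/e) * avgPow μ t f e := by
        rw [ENNReal.mul_rpow_of_nonneg _ _ (by positivity)]; rfl
    _ ≤ A * avgPow μ t f e := by
        apply mul_le_mul_left
        calc A ^ (1/e) ≤ A ^ (1:ℝ) :=
              ENNReal.rpow_le_rpow_of_exponent_le hA ((div_le_one hepos).2 he)
          _ = A := ENNReal.rpow_one A

/-- Aggregation of constants through the `1/q`-power. -/
lemma agg_rpow {q : ℝ} (hq : 1 ≤ q) (A Z : ℝ≥0∞) (hA : 1 ≤ A) :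
    ((2:ℝ≥0∞) ^ q * 2 * A * Z ^ q) ^ (1/q) ≤ 4 * A * Z := by
  have hqpos : 0 < q := lt_of_lt_of_le one_pos hq
  have hq0 : q ≠ 0 := hqpos.ne'
  have h1q : 0 ≤ 1/q := by positivity
  have e1 : ((2:ℝ≥0∞) ^ q) ^ (1/q) = 2 := by
    rw [← ENNReal.rpow_mul, mul_one_div_cancel hq0, ENNReal.rpow_one]
  have e2 : ((2:ℝ≥0∞)) ^ (1/q) ≤ 2 := by
    calc (2:ℝ≥0∞) ^ (1/q) ≤ (2:ℝ≥0∞) ^ (1:ℝ) :=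
          ENNReal.rpow_le_rpow_of_exponent_le one_le_two ((div_le_one hqpos).2 hq)
      _ = 2 := ENNReal.rpow_one 2
  have e3 : A ^ (1/q) ≤ A := by
    calc A ^ (1/q) ≤ A ^ (1:ℝ) :=
          ENNReal.rpow_le_rpow_of_exponent_le hA ((div_le_one hqpos).2 hq)
      _ = A := ENNReal.rpow_one A
  have e4 : (Z ^ q) ^ (1/q) = Z := by
    rw [← ENNReal.rpow_mul, mul_one_div_cancel hq0, ENNReal.rpow_one]
  calc ((2:ℝ≥0∞) ^ q * 2 * A * Z ^ q) ^ (1/q)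
      = (((2:ℝ≥0∞) ^ q) ^ (1/q)) * ((2:ℝ≥0∞) ^ (1/q)) * (A ^ (1/q)) * ((Z ^ q) ^ (1/q)) := by
        rw [ENNReal.mul_rpow_of_nonneg _ _ h1q, ENNReal.mul_rpow_of_nonneg _ _ h1q,
          ENNReal.mul_rpow_of_nonneg _ _ h1q]
    _ ≤ 2 * 2 * A * Z := by
        rw [e1, e4]
        exact mul_le_mul_left (mul_le_mul' (mul_le_mul_right e2 _) e3) _
    _ = 4 * A * Z := by norm_num

set_option maxHeartbeats 2000000 in
/-- if `μ` is doubling on a complete geodesic space and a `(q,p)`-Poincaré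
inequality holds for all balls of radius `≤ δ diam X`, then a `(q,p)`-Poincaré inequality
holds for all balls. -/
theorem poincare_small_balls_implies_poincare
    {X : Type*} [MetricSpace X] [CompleteSpace X] [MeasurableSpace X] [BorelSpace X]
    (hgeo : IsGeodesicSpace X)
    (μ : Measure X) (c_μ : ℝ) (hc : 1 ≤ c_μ)
    (hnt : ∀ (x : X) (r : ℝ), 0 < r → 0 < μ (ball x r) ∧ μ (ball x r) < ⊤)
    (hdbl : ∀ (x : X) (r : ℝ), 0 < r →
      μ (ball x (2 * r)) ≤ ENNReal.ofReal c_μ * μ (ball x r))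
    (p q : ℝ) (hp : 1 ≤ p) (hq : 1 ≤ q)
    (c τ' δ : ℝ) (hcpos : 0 < c) (hτ' : 1 ≤ τ') (hδ : 0 < δ)
    (hsmall : ∀ (x₀ : X) (r : ℝ), 0 < r →
      ENNReal.ofReal r ≤ ENNReal.ofReal δ * EMetric.diam (univ : Set X) →
      PoincareOn μ p q c τ' x₀ r) :
    ∃ c_P > (0:ℝ), ∃ τ ≥ (1:ℝ), ∀ (x₀ : X) (r : ℝ), 0 < r →
      PoincareOn μ p q c_P τ x₀ r := by
  have hq0 : q ≠ 0 := (lt_of_lt_of_le one_pos hq).ne'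
  have hqpos : 0 < q := lt_of_lt_of_le one_pos hq
  by_cases hdT : EMetric.diam (univ : Set X) = ⊤
  · refine ⟨c, hcpos, τ', hτ', fun x₀ r hr => hsmall x₀ r hr ?_⟩
    rw [hdT, ENNReal.mul_top (by simp [ENNReal.ofReal_eq_zero]; linarith)]
    exact le_top
  by_cases hd0 : EMetric.diam (univ : Set X) = 0
  · refine ⟨1, one_pos, 1, le_refl _, fun x₀ r hr => ?_⟩
    intro u g hug hu
    have hsing : ball x₀ r = {x₀} := by
      apply Subset.antisymm
      · intro y _
        have h1 : edist y x₀ ≤ EMetric.diam (univ : Set X) :=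
          EMetric.edist_le_diam_of_mem trivial trivial
        rw [hd0, le_zero_iff, edist_eq_zero] at h1
        simpa using h1
      · intro y hy
        rw [mem_singleton_iff] at hy
        subst hy
        exact mem_ball_self hr
    have hμ := hnt x₀ r hr
    rw [hsing] at hμ
    rw [hsing]
    have hval : (⨍ y in ({x₀} : Set X), u y ∂μ) = u x₀ := by
      have hcg : u =ᵐ[μ.restrict ({x₀} : Set X)] fun _ => u x₀ := by
        rw [Filter.EventuallyEq, ae_restrict_iff' (measurableSet_singleton x₀)]
        filter_upwards with y hy
        rw [mem_singleton_iff] at hy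
        rw [hy]
      rw [average_congr hcg, setAverage_const hμ.1.ne' hμ.2.ne]
    have hz : ∫⁻ x in ({x₀} : Set X),
        ENNReal.ofReal |u x - ⨍ y in ({x₀} : Set X), u y ∂μ| ^ q ∂μ = 0 := by
      rw [hval, Measure.restrict_singleton, lintegral_smul_measure, lintegral_dirac,
        sub_self, abs_zero, ENNReal.ofReal_zero, ENNReal.zero_rpow_of_pos hqpos, smul_zero]
    simp only [avgPow, hz, ENNReal.zero_div,
      ENNReal.zero_rpow_of_pos (by positivity : (0:ℝ) < 1/q)]
    exact zero_le
  · -- main case : 0 < diam < ⊤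
    set d : ℝ := (EMetric.diam (univ : Set X)).toReal with hd_def
    have hd : 0 < d := ENNReal.toReal_pos hd0 hdT
    have hdiam_eq : ENNReal.ofReal d = EMetric.diam (univ : Set X) := ENNReal.ofReal_toReal hdT
    have hbd : Bornology.IsBounded (univ : Set X) := Metric.isBounded_iff_ediam_ne_top.2 hdT
    have hdist : ∀ y z : X, dist y z ≤ d := fun y z =>
      Metric.dist_le_diam_of_mem hbd trivial trivial
    set ρ : ℝ := δ * d with hρdef
    have hρ : 0 < ρ := mul_pos hδ hd
    obtain ⟨K, hK⟩ : ∃ K : ℕ, 8/δ + 8 + τ' < 2 ^ K := pow_unbounded_of_one_lt _ one_lt_two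
    have h2K1 : (1:ℝ) ≤ 2 ^ K := one_le_pow₀ one_le_two
    have hδ1 : 0 < 1/δ := by positivity
    have h18 : (1:ℝ)/δ ≤ 8/δ := by
      rw [div_le_div_iff₀ hδ hδ]
      nlinarith
    have h48 : (4:ℝ)/δ ≤ 8/δ := by
      rw [div_le_div_iff₀ hδ hδ]
      nlinarith
    set C : ℝ≥0∞ := ENNReal.ofReal c_μ with hCdef
    have hC1 : 1 ≤ C := ENNReal.one_le_ofReal.2 hc
    have hCT : C ≠ ⊤ := ENNReal.ofReal_ne_top
    have hCK1 : ∀ m : ℕ, 1 ≤ C ^ m := fun m => one_le_pow_of_one_le' hC1 m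
    have hCKT : ∀ m : ℕ, C ^ m ≠ ⊤ := fun m => ENNReal.pow_ne_top hCT
    have hcμpos : (0:ℝ) < c_μ := lt_of_lt_of_le one_pos hc
    have hCpow : ∀ m : ℕ, C ^ m = ENNReal.ofReal (c_μ ^ m) := fun m =>
      (ENNReal.ofReal_pow (by positivity) m).symm
    set NB : ℕ := ⌈(4:ℝ)/δ⌉₊ with hNBdef
    have hNB : 4/δ ≤ (NB:ℝ) := Nat.le_ceil _
    set τ : ℝ := τ' + 1/δ + 1 with hτdef
    have hτδ : 1/δ ≤ τ := by rw [hτdef]; linarith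
    have hτ1 : (1:ℝ) ≤ τ := by rw [hτdef]; linarith
    have hττ' : τ' ≤ τ := by rw [hτdef]; linarith
    have hτ2K : τ ≤ 2^K := by rw [hτdef]; linarith
    set CP2 : ℝ := 16*(1+2*(NB:ℝ))*c_μ^(3*K+1)*c with hCP2def
    have hCP2pos : 0 < CP2 := by rw [hCP2def]; positivity
    refine ⟨c * c_μ^K + CP2, by positivity, τ, hτ1, ?_⟩
    intro x₀ r hr u g hug hu
    have hμuniv_T : μ (univ : Set X) ≠ ⊤ := by
      have hsub : (univ : Set X) ⊆ ball x₀ (d+1) := fun y _ =>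
        mem_ball.2 (lt_of_le_of_lt (hdist y x₀) (by linarith))
      exact ((measure_mono hsub).trans_lt (hnt x₀ (d+1) (by positivity)).2).ne
    have hμuniv_0 : μ (univ : Set X) ≠ 0 := by
      intro h
      exact (hnt x₀ r hr).1.not_ge ((measure_mono (subset_univ _)).trans h.le)
    have hglob : ∀ (y : X) (s : ℝ), 0 < s → d + s ≤ 2^K * s →
        μ (univ : Set X) ≤ C^K * μ (ball y s) := by
      intro y s hs hles
      have h1 : (univ : Set X) ⊆ ball y (d + s) := fun z _ =>
        mem_ball.2 (lt_of_le_of_lt (hdist z y) (by linarith))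
      exact (measure_mono h1).trans (dbl_iter μ hdbl K y s (d+s) hs hles)
    have hcond4 : d + ρ/4 ≤ 2^K * (ρ/4) := by
      have h1 : (4/δ + 1) * (ρ/4) = d + ρ/4 := by rw [hρdef]; field_simp
      have h2 : (4/δ + 1 : ℝ) ≤ 2^K := by linarith [h48]
      calc d + ρ/4 = (4/δ + 1) * (ρ/4) := h1.symm
        _ ≤ 2^K * (ρ/4) := mul_le_mul_of_nonneg_right h2 (by positivity)
    have hcond8 : d + ρ/8 ≤ 2^K * (ρ/8) := by
      have h1 : (8/δ + 1) * (ρ/8) = d + ρ/8 := by rw [hρdef]; field_simp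
      have h2 : (8/δ + 1 : ℝ) ≤ 2^K := by linarith
      calc d + ρ/8 = (8/δ + 1) * (ρ/8) := h1.symm
        _ ≤ 2^K * (ρ/8) := mul_le_mul_of_nonneg_right h2 (by positivity)
    have hcondge : ∀ t : ℝ, ρ/4 ≤ t → d + t ≤ 2^K * t := by
      intro t ht
      nlinarith [mul_nonneg (sub_nonneg.2 h2K1) (sub_nonneg.2 ht)]
    rcases le_or_gt r ρ with hrρ | hrρ
    · -- small radius case
      have hcnd : ENNReal.ofReal r ≤ ENNReal.ofReal δ * EMetric.diam (univ : Set X) := by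
        rw [← hdiam_eq, ← ENNReal.ofReal_mul hδ.le]
        exact ENNReal.ofReal_le_ofReal (hrρ.trans hρdef.le)
      have hτrle : τ' * r ≤ τ * r := mul_le_mul_of_nonneg_right hττ' hr.le
      have hPIr := hsmall x₀ r hr hcnd u g hug (hu.mono_set (ball_subset_ball hτrle))
      have hmono : avgPow μ (ball x₀ (τ' * r)) g p ≤ C^K * avgPow μ (ball x₀ (τ * r)) g p := by
        apply avgPow_mono_aux μ g hp (ball_subset_ball hτrle) (hCK1 K) (hCKT K)
        apply dbl_iter μ hdbl K x₀ (τ' * r) (τ * r) (by positivity)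
        calc τ * r ≤ 2^K * r := mul_le_mul_of_nonneg_right hτ2K hr.le
          _ ≤ 2^K * (τ' * r) :=
            mul_le_mul_of_nonneg_left (le_mul_of_one_le_left hr.le hτ') (by positivity)
      calc avgPow μ (ball x₀ r) (fun x => |u x - ⨍ y in ball x₀ r, u y ∂μ|) q
          ≤ ENNReal.ofReal (c * r) * avgPow μ (ball x₀ (τ' * r)) g p := hPIr
        _ ≤ ENNReal.ofReal (c * r) * (C^K * avgPow μ (ball x₀ (τ * r)) g p) :=
            mul_le_mul_right hmono _
        _ = (ENNReal.ofReal (c * r) * C^K) * avgPow μ (ball x₀ (τ * r)) g p :=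
            (mul_assoc _ _ _).symm
        _ ≤ ENNReal.ofReal ((c * c_μ^K + CP2) * r) * avgPow μ (ball x₀ (τ * r)) g p := by
            apply mul_le_mul_left
            rw [hCpow K, ← ENNReal.ofReal_mul (by positivity)]
            apply ENNReal.ofReal_le_ofReal
            have he : (c * c_μ^K + CP2) * r = c * r * c_μ^K + CP2 * r := by ring
            rw [he]
            linarith [mul_pos hCP2pos hr]
    · -- large radius case
      have hball_univ : ball x₀ (τ * r) = univ := by
        apply eq_univ_of_forall
        intro y
        apply mem_ball.2 (lt_of_le_of_lt (hdist y x₀) ?_)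
        have h3 : (1/δ)*r ≤ τ*r := mul_le_mul_of_nonneg_right hτδ hr.le
        have h4 : (1/δ)*r*δ = r := by field_simp
        have h5 : d * δ < ((1/δ)*r)*δ := by
          rw [h4, mul_comm d δ]
          exact hrρ
        have h6 : d < (1/δ)*r := lt_of_mul_lt_mul_right h5 hδ.le
        exact lt_of_lt_of_le h6 h3
      have hu' : IntegrableOn u (univ : Set X) μ := hball_univ ▸ hu
      set E : ℝ≥0∞ := avgPow μ (univ : Set X) g p with hEdef
      have hPI : ∀ (y : X) (s : ℝ), ρ/4 ≤ s → s ≤ ρ →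
          avgPow μ (ball y s) (fun x => |u x - ⨍ w in ball y s, u w ∂μ|) q ≤
            ENNReal.ofReal (c * ρ) * (C ^ K * E) := by
        intro y s hs4 hsρ
        have hs : 0 < s := lt_of_lt_of_le (by positivity) hs4
        have hcnd : ENNReal.ofReal s ≤ ENNReal.ofReal δ * EMetric.diam (univ : Set X) := by
          rw [← hdiam_eq, ← ENNReal.ofReal_mul hδ.le]
          exact ENNReal.ofReal_le_ofReal (hsρ.trans hρdef.le)
        have h1 := hsmall y s hs hcnd u g hug (hu'.mono_set (subset_univ _))
        have h2 : avgPow μ (ball y (τ' * s)) g p ≤ C ^ K * E := by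
          rw [hEdef]
          apply avgPow_mono_aux μ g hp (subset_univ _) (hCK1 K) (hCKT K)
          apply hglob y (τ' * s) (by positivity)
          apply hcondge
          calc ρ/4 ≤ s := hs4
            _ ≤ τ' * s := le_mul_of_one_le_left hs.le hτ'
        calc avgPow μ (ball y s) (fun x => |u x - ⨍ w in ball y s, u w ∂μ|) q
            ≤ ENNReal.ofReal (c*s) * avgPow μ (ball y (τ'*s)) g p := h1
          _ ≤ ENNReal.ofReal (c*ρ) * (C^K * E) :=
              mul_le_mul' (ENNReal.ofReal_le_ofReal
                (mul_le_mul_of_nonneg_left hsρ hcpos.le)) h2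
      set aB : X → ℝ := fun y => ⨍ w in ball y (ρ/4), u w ∂μ with haB
      set S' : ℝ≥0∞ := 2 * (C ^ K * (ENNReal.ofReal (c * ρ) * (C ^ K * E))) with hS'
      have honeside : ∀ y z : X, ball z (ρ/4) ⊆ ball y (ρ/2) →
          ENNReal.ofReal |aB z - ⨍ w in ball y (ρ/2), u w ∂μ| ≤
            C^K * (ENNReal.ofReal (c*ρ) * (C^K * E)) := by
        intro y z hsub
        have hμz := hnt z (ρ/4) (by positivity)
        have hμD := hnt y (ρ/2) (by positivity)
        have h1 := avg_sub_le μ hsub hμz.1.ne' hμz.2.ne hμD.1.ne' hμD.2.ne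
          (hu'.mono_set (subset_univ _)) (⨍ w in ball y (ρ/2), u w ∂μ) q hq
        have hratio : μ (ball y (ρ/2)) / μ (ball z (ρ/4)) ≤ C^K :=
          ENNReal.div_le_of_le_mul
            ((measure_mono (subset_univ _)).trans (hglob z (ρ/4) (by positivity) hcond4))
        have h2 := hPI y (ρ/2) (by linarith) (by linarith)
        exact h1.trans (mul_le_mul' hratio h2)
      have hstep : ∀ y z : X, dist z y ≤ ρ/4 → ENNReal.ofReal |aB z - aB y| ≤ S' := by
        intro y z hdzy
        have hsub1 : ball y (ρ/4) ⊆ ball y (ρ/2) := ball_subset_ball (by linarith)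
        have hsub2 : ball z (ρ/4) ⊆ ball y (ρ/2) := by
          intro w hw
          rw [mem_ball] at hw ⊢
          calc dist w y ≤ dist w z + dist z y := dist_triangle w z y
            _ < ρ/4 + ρ/4 := add_lt_add_of_lt_of_le hw hdzy
            _ = ρ/2 := by ring
        have h1 := honeside y z hsub2
        have h2 := honeside y y hsub1
        calc ENNReal.ofReal |aB z - aB y|
            ≤ ENNReal.ofReal (|aB z - ⨍ w in ball y (ρ/2), u w ∂μ| +
                |(⨍ w in ball y (ρ/2), u w ∂μ) - aB y|) :=
              ENNReal.ofReal_le_ofReal (abs_sub_le _ _ _)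
          _ ≤ ENNReal.ofReal |aB z - ⨍ w in ball y (ρ/2), u w ∂μ| +
              ENNReal.ofReal |(⨍ w in ball y (ρ/2), u w ∂μ) - aB y| := ENNReal.ofReal_add_le
          _ ≤ C^K * (ENNReal.ofReal (c*ρ) * (C^K * E)) +
              C^K * (ENNReal.ofReal (c*ρ) * (C^K * E)) := by
              refine add_le_add h1 ?_
              rw [abs_sub_comm]
              exact h2
          _ = S' := by rw [hS', two_mul]
      have hchain : ∀ z : X, ENNReal.ofReal |aB z - aB x₀| ≤ (NB:ℝ≥0∞) * S' := by
        intro z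
        obtain ⟨γ, hγ0, hγL, hiso⟩ := hgeo x₀ z
        have hL0 : 0 ≤ dist x₀ z := dist_nonneg
        have hLd : dist x₀ z ≤ d := hdist x₀ z
        have key : ∀ i : ℕ,
            ENNReal.ofReal |aB (γ (min ((i:ℝ) * (ρ/4)) (dist x₀ z))) - aB x₀| ≤
              (i:ℝ≥0∞) * S' := by
          intro i
          induction i with
          | zero => simp [min_eq_left hL0, hγ0]
          | succ n ih =>
            have hcast : (((n+1:ℕ)):ℝ) = (n:ℝ) + 1 := by push_cast; ring
            have hs12 : min ((n:ℝ) * (ρ/4)) (dist x₀ z) ≤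
                min (((n+1:ℕ):ℝ) * (ρ/4)) (dist x₀ z) := by
              apply min_le_min _ le_rfl
              rw [hcast]
              exact mul_le_mul_of_nonneg_right (by linarith) (by positivity)
            have hs1mem : min ((n:ℝ) * (ρ/4)) (dist x₀ z) ∈ Icc 0 (dist x₀ z) :=
              ⟨le_min (by positivity) hL0, min_le_right _ _⟩
            have hs2mem : min (((n+1:ℕ):ℝ) * (ρ/4)) (dist x₀ z) ∈ Icc 0 (dist x₀ z) :=
              ⟨le_min (by positivity) hL0, min_le_right _ _⟩
            have hdiff : min (((n+1:ℕ):ℝ) * (ρ/4)) (dist x₀ z) -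
                min ((n:ℝ) * (ρ/4)) (dist x₀ z) ≤ ρ/4 := by
              rcases le_total ((n:ℝ) * (ρ/4)) (dist x₀ z) with h | h
              · have e1 : min ((n:ℝ) * (ρ/4)) (dist x₀ z) = (n:ℝ)*(ρ/4) := min_eq_left h
                have e3 : ((n+1:ℕ):ℝ)*(ρ/4) = (n:ℝ)*(ρ/4) + ρ/4 := by push_cast; ring
                have e2 : min (((n+1:ℕ):ℝ) * (ρ/4)) (dist x₀ z) ≤ (n:ℝ)*(ρ/4) + ρ/4 :=
                  (min_le_left _ _).trans (le_of_eq e3)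
                rw [e1]
                linarith
              · have e1 : min ((n:ℝ) * (ρ/4)) (dist x₀ z) = dist x₀ z := min_eq_right h
                have e2 : min (((n+1:ℕ):ℝ) * (ρ/4)) (dist x₀ z) = dist x₀ z := by
                  apply min_eq_right
                  rw [hcast]
                  have := mul_le_mul_of_nonneg_right
                    (le_of_lt (lt_add_one (n:ℝ))) (by positivity : (0:ℝ) ≤ ρ/4)
                  linarith
                rw [e1, e2]
                linarith [hρ]
            have hd12 : dist (γ (min (((n+1:ℕ):ℝ) * (ρ/4)) (dist x₀ z)))
                (γ (min ((n:ℝ) * (ρ/4)) (dist x₀ z))) ≤ ρ/4 := by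
              rw [hiso _ hs2mem _ hs1mem, abs_of_nonneg (by linarith)]
              exact hdiff
            have hstep' := hstep _ _ hd12
            calc ENNReal.ofReal |aB (γ (min (((n+1:ℕ):ℝ) * (ρ/4)) (dist x₀ z))) - aB x₀|
                ≤ ENNReal.ofReal (|aB (γ (min (((n+1:ℕ):ℝ) * (ρ/4)) (dist x₀ z))) -
                    aB (γ (min ((n:ℝ) * (ρ/4)) (dist x₀ z)))| +
                    |aB (γ (min ((n:ℝ) * (ρ/4)) (dist x₀ z))) - aB x₀|) :=
                  ENNReal.ofReal_le_ofReal (abs_sub_le _ _ _)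
              _ ≤ ENNReal.ofReal |aB (γ (min (((n+1:ℕ):ℝ) * (ρ/4)) (dist x₀ z))) -
                    aB (γ (min ((n:ℝ) * (ρ/4)) (dist x₀ z)))| +
                  ENNReal.ofReal |aB (γ (min ((n:ℝ) * (ρ/4)) (dist x₀ z))) - aB x₀| :=
                  ENNReal.ofReal_add_le
              _ ≤ S' + (n:ℝ≥0∞) * S' := add_le_add hstep' ih
              _ = ((n+1:ℕ):ℝ≥0∞) * S' := by push_cast; ring
        have hminNB : min ((NB:ℝ) * (ρ/4)) (dist x₀ z) = dist x₀ z := by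
          apply min_eq_right
          have : d ≤ (NB:ℝ)*(ρ/4) := by
            rw [hρdef]
            have h1 : (4/δ)*(δ*d/4) = d := by field_simp
            have h2 := mul_le_mul_of_nonneg_right hNB (by positivity : (0:ℝ) ≤ δ*d/4)
            rw [h1] at h2
            calc d ≤ (NB:ℝ) * (δ*d/4) := h2
              _ = (NB:ℝ) * (δ*d/4) := rfl
          linarith
        have hkey := key NB
        rw [hminNB, hγL] at hkey
        exact hkey
      -- net construction
      set B := ball x₀ r with hBdef
      have hμB := hnt x₀ r hr
      obtain ⟨F, hFsub, hFsep, hFcover⟩ : ∃ F : Finset X, ↑F ⊆ B ∧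
          (∀ z ∈ F, ∀ w ∈ F, z ≠ w → ρ/4 ≤ dist z w) ∧
          (∀ x ∈ B, ∃ z ∈ F, dist x z < ρ/4) := by
        classical
        have hcard : ∀ G : Finset X, (∀ z ∈ G, ∀ w ∈ G, z ≠ w → ρ/4 ≤ dist z w) →
            G.card ≤ ⌈c_μ ^ K⌉₊ := by
          intro G hGsep
          have hdisj : (↑G : Set X).PairwiseDisjoint (fun z => ball z (ρ/8)) := by
            intro z hz w hw hzw
            exact ball_disjoint_ball
              (by linarith [hGsep z (Finset.mem_coe.1 hz) w (Finset.mem_coe.1 hw) hzw])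
          have hsum : ∑ z ∈ G, μ (ball z (ρ/8)) = μ (⋃ z ∈ G, ball z (ρ/8)) :=
            (measure_biUnion_finset hdisj (fun z _ => measurableSet_ball)).symm
          have h1 : (G.card : ℝ≥0∞) * μ (univ:Set X) ≤ C^K * μ (univ:Set X) := by
            calc (G.card : ℝ≥0∞) * μ (univ:Set X) = ∑ _z ∈ G, μ (univ:Set X) := by
                  rw [Finset.sum_const, nsmul_eq_mul]
              _ ≤ ∑ z ∈ G, C^K * μ (ball z (ρ/8)) :=
                  Finset.sum_le_sum (fun z _ => hglob z (ρ/8) (by positivity) hcond8)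
              _ = C^K * ∑ z ∈ G, μ (ball z (ρ/8)) := (Finset.mul_sum _ _ _).symm
              _ = C^K * μ (⋃ z ∈ G, ball z (ρ/8)) := by rw [hsum]
              _ ≤ C^K * μ (univ:Set X) := mul_le_mul_right (measure_mono (subset_univ _)) _
          have h2 : (G.card : ℝ≥0∞) ≤ C^K := (ENNReal.mul_le_mul_iff_left hμuniv_0 hμuniv_T).1 h1
          have h3 : (G.card : ℝ) ≤ c_μ ^ K := by
            rw [hCpow K, ← ENNReal.ofReal_natCast] at h2
            exact (ENNReal.ofReal_le_ofReal_iff (by positivity)).1 h2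
          exact_mod_cast h3.trans (Nat.le_ceil _)
        set SS : Set ℕ := {n | ∃ G : Finset X,
          ((↑G ⊆ B ∧ ∀ z ∈ G, ∀ w ∈ G, z ≠ w → ρ/4 ≤ dist z w) ∧ G.card = n)} with hSS
        have h0 : 0 ∈ SS := ⟨∅, ⟨by simp, by simp⟩, rfl⟩
        have hbdd : BddAbove SS := by
          refine ⟨⌈c_μ^K⌉₊, fun n hn => ?_⟩
          obtain ⟨G, hG, hc'⟩ := hn
          exact hc' ▸ hcard G hG.2
        obtain ⟨F, hPF, hFc⟩ := Nat.sSup_mem ⟨0, h0⟩ hbdd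
        refine ⟨F, hPF.1, hPF.2, ?_⟩
        by_contra hcon
        push_neg at hcon
        obtain ⟨x, hxB, hx⟩ := hcon
        have hxF : x ∉ F := by
          intro hxF
          have h1 := hx x hxF
          rw [dist_self] at h1
          linarith
        have hmem : (insert x F).card ∈ SS := by
          refine ⟨insert x F, ⟨?_, ?_⟩, rfl⟩
          · intro y hy
            rw [Finset.coe_insert, Set.mem_insert_iff] at hy
            rcases hy with rfl | hy
            · exact hxB
            · exact hPF.1 hy
          · intro z hz w hw hzw
            rcases Finset.mem_insert.1 hz with rfl | hz' <;>
              rcases Finset.mem_insert.1 hw with rfl | hw'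
            · exact absurd rfl hzw
            · exact hx w hw'
            · rw [dist_comm]; exact hx z hz'
            · exact hPF.2 z hz' w hw' hzw
        have hle := le_csSup hbdd hmem
        rw [Finset.card_insert_of_notMem hxF, hFc] at hle
        omega
      -- per-ball estimates
      set a : ℝ := aB x₀ with ha
      set W : ℝ≥0∞ := ENNReal.ofReal (c*ρ) * (C^K * E) with hW
      set S₂ : ℝ≥0∞ := (NB:ℝ≥0∞) * S' with hS₂
      set M : ℝ≥0∞ := W + S₂ with hM
      have hq2T : ((2:ℝ≥0∞) ^ q) ≠ ⊤ :=
        ENNReal.rpow_ne_top_of_nonneg (by positivity) (by norm_num)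
      have hITB : ∀ (s : Set X), μ s ≠ 0 → μ s ≠ ⊤ → ∀ b : ℝ,
          (∫⁻ x in s, ENNReal.ofReal |u x - b| ^ q ∂μ) =
            (avgPow μ s (fun x => |u x - b|) q) ^ q * μ s := by
        intro s h0 hT b
        have e1 : (avgPow μ s (fun x => |u x - b|) q) ^ q
            = (∫⁻ x in s, ENNReal.ofReal |u x - b| ^ q ∂μ) / μ s := by
          simp only [avgPow]
          rw [← ENNReal.rpow_mul, one_div_mul_cancel hq0, ENNReal.rpow_one]
        rw [e1, ENNReal.div_mul_cancel h0 hT]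
      have hperz : ∀ z : X, (∫⁻ x in ball z (ρ/4), ENNReal.ofReal |u x - a| ^ q ∂μ) ≤
          (2:ℝ≥0∞)^q * (W^q + S₂^q) * μ (ball z (ρ/4)) := by
        intro z
        have hμz := hnt z (ρ/4) (by positivity)
        have hptw : ∀ x : X, ENNReal.ofReal |u x - a| ^ q ≤
            (2:ℝ≥0∞)^q * (ENNReal.ofReal |u x - aB z| ^ q + ENNReal.ofReal |aB z - a| ^ q) := by
          intro x
          have h1 : ENNReal.ofReal |u x - a| ≤
              ENNReal.ofReal |u x - aB z| + ENNReal.ofReal |aB z - a| :=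
            le_trans (ENNReal.ofReal_le_ofReal (abs_sub_le _ _ _)) ENNReal.ofReal_add_le
          exact le_trans (ENNReal.rpow_le_rpow h1 (by positivity)) (pow2q _ _ (by positivity))
        have hPIz := hPI z (ρ/4) le_rfl (by linarith)
        have hT1 : (∫⁻ x in ball z (ρ/4), ENNReal.ofReal |u x - aB z| ^ q ∂μ) ≤
            W^q * μ (ball z (ρ/4)) := by
          rw [hITB (ball z (ρ/4)) hμz.1.ne' hμz.2.ne (aB z)]
          exact mul_le_mul_left (ENNReal.rpow_le_rpow hPIz (by positivity)) _
        have hT2 : ENNReal.ofReal |aB z - a| ^ q ≤ S₂^q :=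
          ENNReal.rpow_le_rpow (hchain z) (by positivity)
        calc (∫⁻ x in ball z (ρ/4), ENNReal.ofReal |u x - a| ^ q ∂μ)
            ≤ ∫⁻ x in ball z (ρ/4), (2:ℝ≥0∞)^q * (ENNReal.ofReal |u x - aB z| ^ q +
                ENNReal.ofReal |aB z - a| ^ q) ∂μ := lintegral_mono hptw
          _ = (2:ℝ≥0∞)^q * ((∫⁻ x in ball z (ρ/4), ENNReal.ofReal |u x - aB z| ^ q ∂μ) +
                ENNReal.ofReal |aB z - a| ^ q * μ (ball z (ρ/4))) := by
              rw [lintegral_const_mul' _ _ hq2T,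
                lintegral_add_right _ measurable_const, setLIntegral_const]
          _ ≤ (2:ℝ≥0∞)^q * (W^q * μ (ball z (ρ/4)) + S₂^q * μ (ball z (ρ/4))) :=
              mul_le_mul_right (add_le_add hT1 (mul_le_mul_left hT2 _)) _
          _ = (2:ℝ≥0∞)^q * (W^q + S₂^q) * μ (ball z (ρ/4)) := by ring
      -- summation
      have hdisjF : (↑F : Set X).PairwiseDisjoint (fun z => ball z (ρ/8)) := by
        intro z hz w hw hzw
        exact ball_disjoint_ball
          (by linarith [hFsep z (Finset.mem_coe.1 hz) w (Finset.mem_coe.1 hw) hzw])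
      have hsumF : ∑ z ∈ F, μ (ball z (ρ/8)) ≤ μ (univ : Set X) := by
        rw [← measure_biUnion_finset hdisjF (fun z _ => measurableSet_ball)]
        exact measure_mono (subset_univ _)
      have hμuB : μ (univ : Set X) ≤ C^K * μ B :=
        (hglob x₀ (ρ/4) (by positivity) hcond4).trans
          (mul_le_mul_right (measure_mono (ball_subset_ball (by linarith))) _)
      have hTB : (∫⁻ x in B, ENNReal.ofReal |u x - a| ^ q ∂μ) ≤
          ((2:ℝ≥0∞)^q * (W^q + S₂^q) * C^(K+1)) * μ B := by
        calc (∫⁻ x in B, ENNReal.ofReal |u x - a| ^ q ∂μ)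
            ≤ ∫⁻ x in ⋃ z ∈ F, ball z (ρ/4), ENNReal.ofReal |u x - a| ^ q ∂μ := by
              apply lintegral_mono_set
              intro x hx
              obtain ⟨z, hzF, hz⟩ := hFcover x hx
              exact mem_biUnion hzF (mem_ball.2 hz)
          _ ≤ ∑ z ∈ F, ∫⁻ x in ball z (ρ/4), ENNReal.ofReal |u x - a| ^ q ∂μ :=
              lintegral_biUnion_finset_le' μ _ F _
          _ ≤ ∑ z ∈ F, (2:ℝ≥0∞)^q * (W^q + S₂^q) * μ (ball z (ρ/4)) :=
              Finset.sum_le_sum (fun z _ => hperz z)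
          _ ≤ ∑ z ∈ F, (2:ℝ≥0∞)^q * (W^q + S₂^q) * (C * μ (ball z (ρ/8))) := by
              apply Finset.sum_le_sum
              intro z _
              apply mul_le_mul_right
              have hh := hdbl z (ρ/8) (by positivity)
              rw [show (2:ℝ)*(ρ/8) = ρ/4 by ring] at hh
              exact hh
          _ = ((2:ℝ≥0∞)^q * (W^q + S₂^q) * C) * ∑ z ∈ F, μ (ball z (ρ/8)) := by
              rw [Finset.mul_sum]
              exact Finset.sum_congr rfl (fun z _ => by ring)
          _ ≤ ((2:ℝ≥0∞)^q * (W^q + S₂^q) * C) * (C^K * μ B) :=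
              mul_le_mul_right (hsumF.trans hμuB) _
          _ = ((2:ℝ≥0∞)^q * (W^q + S₂^q) * C^(K+1)) * μ B := by
              rw [pow_succ]
              ring
      have hΦa : avgPow μ B (fun x => |u x - a|) q ≤ 4 * C^(K+1) * M := by
        have h1 : (∫⁻ x in B, ENNReal.ofReal |u x - a| ^ q ∂μ) / μ B ≤
            (2:ℝ≥0∞)^q * 2 * C^(K+1) * M^q := by
          apply ENNReal.div_le_of_le_mul
          apply hTB.trans
          apply mul_le_mul_left
          have h2 : W^q + S₂^q ≤ 2 * M^q := by
            rw [two_mul]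
            exact add_le_add (ENNReal.rpow_le_rpow le_self_add (by positivity))
              (ENNReal.rpow_le_rpow le_add_self (by positivity))
          calc (2:ℝ≥0∞)^q * (W^q + S₂^q) * C^(K+1) ≤ (2:ℝ≥0∞)^q * (2*M^q) * C^(K+1) :=
                mul_le_mul_left (mul_le_mul_right h2 _) _
            _ = (2:ℝ≥0∞)^q * 2 * C^(K+1) * M^q := by ring
        calc avgPow μ B (fun x => |u x - a|) q
            = ((∫⁻ x in B, ENNReal.ofReal |u x - a| ^ q ∂μ) / μ B) ^ (1/q) := rfl
          _ ≤ ((2:ℝ≥0∞)^q * 2 * C^(K+1) * M^q) ^ (1/q) :=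
              ENNReal.rpow_le_rpow h1 (by positivity)
          _ ≤ 4 * C^(K+1) * M := agg_rpow hq (C^(K+1)) M (hCK1 (K+1))
      have hba : ENNReal.ofReal |(⨍ y in B, u y ∂μ) - a| ≤
          avgPow μ B (fun x => |u x - a|) q := by
        have h1 := avg_sub_le μ (subset_refl B) hμB.1.ne' hμB.2.ne hμB.1.ne' hμB.2.ne
          (hu'.mono_set (subset_univ _)) a q hq
        rwa [ENNReal.div_self hμB.1.ne' hμB.2.ne, one_mul] at h1
      have hLHS : avgPow μ B (fun x => |u x - ⨍ y in B, u y ∂μ|) q ≤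
          4 * (avgPow μ B (fun x => |u x - a|) q) := by
        have hptw : ∀ x : X, ENNReal.ofReal |u x - ⨍ y in B, u y ∂μ| ^ q ≤
            (2:ℝ≥0∞)^q * (ENNReal.ofReal |u x - a| ^ q +
              ENNReal.ofReal |(⨍ y in B, u y ∂μ) - a| ^ q) := by
          intro x
          have h1 : ENNReal.ofReal |u x - ⨍ y in B, u y ∂μ| ≤
              ENNReal.ofReal |u x - a| + ENNReal.ofReal |(⨍ y in B, u y ∂μ) - a| := by
            refine le_trans (ENNReal.ofReal_le_ofReal ?_) ENNReal.ofReal_add_le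
            calc |u x - ⨍ y in B, u y ∂μ| ≤ |u x - a| + |a - ⨍ y in B, u y ∂μ| :=
                  abs_sub_le _ _ _
              _ = |u x - a| + |(⨍ y in B, u y ∂μ) - a| := by rw [abs_sub_comm a]
          exact le_trans (ENNReal.rpow_le_rpow h1 (by positivity)) (pow2q _ _ (by positivity))
        have h1 : (∫⁻ x in B, ENNReal.ofReal |u x - ⨍ y in B, u y ∂μ| ^ q ∂μ) ≤
            ((2:ℝ≥0∞)^q * 2 * (avgPow μ B (fun x => |u x - a|) q)^q) * μ B := by
          calc (∫⁻ x in B, ENNReal.ofReal |u x - ⨍ y in B, u y ∂μ| ^ q ∂μ)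
              ≤ ∫⁻ x in B, (2:ℝ≥0∞)^q * (ENNReal.ofReal |u x - a| ^ q +
                  ENNReal.ofReal |(⨍ y in B, u y ∂μ) - a| ^ q) ∂μ := lintegral_mono hptw
            _ = (2:ℝ≥0∞)^q * ((∫⁻ x in B, ENNReal.ofReal |u x - a| ^ q ∂μ) +
                  ENNReal.ofReal |(⨍ y in B, u y ∂μ) - a| ^ q * μ B) := by
                rw [lintegral_const_mul' _ _ hq2T,
                  lintegral_add_right _ measurable_const, setLIntegral_const]
            _ ≤ (2:ℝ≥0∞)^q * ((avgPow μ B (fun x => |u x - a|) q)^q * μ B +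
                  (avgPow μ B (fun x => |u x - a|) q)^q * μ B) := by
                apply mul_le_mul_right
                apply add_le_add
                · exact le_of_eq (hITB B hμB.1.ne' hμB.2.ne a)
                · exact mul_le_mul_left (ENNReal.rpow_le_rpow hba (by positivity)) _
            _ = ((2:ℝ≥0∞)^q * 2 * (avgPow μ B (fun x => |u x - a|) q)^q) * μ B := by ring
        have h2 : (∫⁻ x in B, ENNReal.ofReal |u x - ⨍ y in B, u y ∂μ| ^ q ∂μ) / μ B ≤
            (2:ℝ≥0∞)^q * 2 * (avgPow μ B (fun x => |u x - a|) q)^q :=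
          ENNReal.div_le_of_le_mul h1
        calc avgPow μ B (fun x => |u x - ⨍ y in B, u y ∂μ|) q
            = ((∫⁻ x in B, ENNReal.ofReal |u x - ⨍ y in B, u y ∂μ| ^ q ∂μ) / μ B) ^ (1/q) := rfl
          _ ≤ ((2:ℝ≥0∞)^q * 2 * 1 * (avgPow μ B (fun x => |u x - a|) q)^q) ^ (1/q) :=
              ENNReal.rpow_le_rpow (h2.trans_eq (by ring)) (by positivity)
          _ ≤ 4 * 1 * (avgPow μ B (fun x => |u x - a|) q) := agg_rpow hq 1 _ le_rfl
          _ = 4 * (avgPow μ B (fun x => |u x - a|) q) := by rw [mul_one]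
      -- combine constants
      have hMb : M ≤ (1 + 2*(NB:ℝ≥0∞)) * (C^(2*K) * (ENNReal.ofReal (c*ρ) * E)) := by
        have hWb : W ≤ C^(2*K) * (ENNReal.ofReal (c*ρ) * E) := by
          rw [hW]
          calc ENNReal.ofReal (c*ρ) * (C^K * E) = C^K * (ENNReal.ofReal (c*ρ) * E) := by ring
            _ ≤ C^(2*K) * (ENNReal.ofReal (c*ρ) * E) :=
              mul_le_mul_left (pow_le_pow_right₀ hC1 (by omega)) _
        have hS₂b : S₂ = (2*(NB:ℝ≥0∞)) * (C^(2*K) * (ENNReal.ofReal (c*ρ) * E)) := by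
          rw [hS₂, hS', two_mul K, pow_add]
          ring
        calc M = W + S₂ := hM
          _ ≤ C^(2*K) * (ENNReal.ofReal (c*ρ) * E) +
              (2*(NB:ℝ≥0∞)) * (C^(2*K) * (ENNReal.ofReal (c*ρ) * E)) :=
            add_le_add hWb (le_of_eq hS₂b)
          _ = (1 + 2*(NB:ℝ≥0∞)) * (C^(2*K) * (ENNReal.ofReal (c*ρ) * E)) := by ring
      have hEfin : avgPow μ (ball x₀ (τ * r)) g p = E := by rw [hball_univ]
      calc avgPow μ B (fun x => |u x - ⨍ y in B, u y ∂μ|) q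
          ≤ 4 * (avgPow μ B (fun x => |u x - a|) q) := hLHS
        _ ≤ 4 * (4 * C^(K+1) * M) := mul_le_mul_right hΦa _
        _ ≤ 4 * (4 * C^(K+1) * ((1 + 2*(NB:ℝ≥0∞)) * (C^(2*K) * (ENNReal.ofReal (c*ρ) * E)))) :=
            mul_le_mul_right (mul_le_mul_right hMb _) _
        _ = ((16:ℝ≥0∞) * C^(3*K+1) * (1 + 2*(NB:ℝ≥0∞)) * ENNReal.ofReal (c*ρ)) * E := by
            rw [show 3*K+1 = (K+1) + 2*K by ring, pow_add]
            ring
        _ ≤ ENNReal.ofReal ((c * c_μ^K + CP2) * r) * E := by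
            apply mul_le_mul_left
            have e16 : (16:ℝ≥0∞) = ENNReal.ofReal (16:ℝ) := by
              rw [ENNReal.ofReal_ofNat]
            have eNB : (1 + 2*(NB:ℝ≥0∞)) = ENNReal.ofReal (1 + 2*(NB:ℝ)) := by
              rw [ENNReal.ofReal_add (by norm_num) (by positivity),
                ENNReal.ofReal_mul (by norm_num)]
              simp [ENNReal.ofReal_natCast]
            rw [e16, hCpow (3*K+1), eNB, ← ENNReal.ofReal_mul (by norm_num),
              ← ENNReal.ofReal_mul (by positivity), ← ENNReal.ofReal_mul (by positivity)]
            apply ENNReal.ofReal_le_ofReal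
            have h1 : 16 * c_μ^(3*K+1) * (1+2*(NB:ℝ)) * (c*ρ) = CP2 * ρ := by
              rw [hCP2def]; ring
            have h2 : CP2 * ρ ≤ CP2 * r := mul_le_mul_of_nonneg_left hrρ.le hCP2pos.le
            have h3 : (c * c_μ^K + CP2) * r = c * c_μ^K * r + CP2 * r := by ring
            rw [h1, h3]
            have h4 : 0 ≤ c * c_μ^K * r := by positivity
            linarith
        _ = ENNReal.ofReal ((c * c_μ^K + CP2) * r) * avgPow μ (ball x₀ (τ * r)) g p := by
            rw [hEfin]
end

section
/- Suppose \mu is doubling on a geodesic space X, 1 \leq p < \infty, 1 < q < \infty, and there exist constants c, \tau' \geq 1, \epsilon > 0 and \delta > 0 with (1+\epsilon)(1/2)^{1 - 1/q} < 1, such that (\fint_{B(x_0,r)} u^q\,d\mu)^{1/q} \leq c\,r\,(\fint_{B(x_0,\tau' r)} g_u^p\,d\mu)^{1/p} + (1+\epsilon)\fint_{B(x_0,r)} u\,d\mu holds for every nonnegative u \in N^{1,p}(B(x_0,\tau' r)) with 0 < r \leq \delta\,\mathrm{diam}(X). Then a (q,p)-Poincar\'e inequality holds in (X,d,\mu). 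-/
open MeasureTheory Metric Set
open scoped ENNReal

section Helpers

lemma absorb {A B κ : ℝ≥0∞} (hA : A ≠ ∞) (hκ : κ < 1) (h : A ≤ B + κ * A) :
    A ≤ B / (1 - κ) := by
  have h1 : 1 - κ ≠ 0 := by
    simpa [tsub_eq_zero_iff_le] using hκ.not_ge
  rw [ENNReal.le_div_iff_mul_le (Or.inl h1) (Or.inl (by simp [ENNReal.sub_ne_top]))]
  have : A * (1 - κ) = A - κ * A := by
    rw [ENNReal.mul_sub (fun _ _ => hA), mul_one, mul_comm]
  rw [this]
  exact tsub_le_iff_left.mpr (by simpa [add_comm] using h)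

private lemma one_div_succ_mono {i j : ℕ} (h : i ≤ j) :
    (1:ℝ)/((j:ℝ)+1) ≤ 1/((i:ℝ)+1) := by
  apply one_div_le_one_div_of_le (by positivity)
  exact_mod_cast add_le_add_left (Nat.cast_le.mpr h) 1

lemma median_exists {α : Type*} [MeasurableSpace α] (ν : Measure α) [IsFiniteMeasure ν]
    (f : α → ℝ) (hf : Measurable f) :
    ∃ a : ℝ, ν {x | a < f x} ≤ ν univ / 2 ∧ ν {x | f x < a} ≤ ν univ / 2 := by
  by_cases hm0 : ν univ = 0
  · refine ⟨0, ?_, ?_⟩ <;>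
      exact le_trans (le_trans (measure_mono (subset_univ _)) (le_of_eq hm0)) (zero_le)
  have hm2 : 0 < ν univ / 2 := ENNReal.div_pos hm0 (by norm_num)
  have hm2' : ν univ / 2 < ν univ := ENNReal.half_lt_self hm0 (measure_ne_top ν univ)
  set S : Set ℝ := {t | ν {x | t < f x} ≤ ν univ / 2} with hS
  have hup : ∀ t ∈ S, ∀ t', t ≤ t' → t' ∈ S := by
    intro t ht t' htt'
    exact le_trans (measure_mono (fun x hx => lt_of_le_of_lt htt' hx)) ht
  have hne : S.Nonempty := by
    have h0 : Filter.Tendsto (fun n : ℕ => ν {x | (n:ℝ) < f x}) Filter.atTop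
        (nhds (ν (⋂ n : ℕ, {x | (n:ℝ) < f x}))) := by
      apply tendsto_measure_iInter_atTop
      · intro n; exact (hf measurableSet_Ioi).nullMeasurableSet
      · intro a b hab x hx
        simp only [mem_setOf_eq] at hx ⊢
        have : (a:ℝ) ≤ b := by exact_mod_cast hab
        linarith
      · exact ⟨0, measure_ne_top ν _⟩
    have hint : (⋂ n : ℕ, {x | (n:ℝ) < f x}) = ∅ := by
      ext x
      simp only [mem_iInter, mem_empty_iff_false, iff_false, not_forall, mem_setOf_eq, not_lt]
      obtain ⟨n, hn⟩ := exists_nat_ge (f x); exact ⟨n, hn⟩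
    rw [hint, measure_empty] at h0
    obtain ⟨n, hn⟩ := (h0.eventually_lt_const hm2).exists
    exact ⟨n, hn.le⟩
  have hbdd : ∃ t₁ : ℝ, ∀ t ≤ t₁, t ∉ S := by
    have h1 : Filter.Tendsto (fun n : ℕ => ν {x | (-(n:ℝ)) < f x}) Filter.atTop
        (nhds (ν (⋃ n : ℕ, {x | (-(n:ℝ)) < f x}))) := by
      apply tendsto_measure_iUnion_atTop
      intro a b hab x hx
      simp only [mem_setOf_eq] at hx ⊢
      have : (a:ℝ) ≤ b := by exact_mod_cast hab
      linarith
    have hun : (⋃ n : ℕ, {x | (-(n:ℝ)) < f x}) = univ := by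
      ext x
      simp only [mem_iUnion, mem_setOf_eq, mem_univ, iff_true]
      obtain ⟨n, hn⟩ := exists_nat_ge (-(f x))
      exact ⟨n + 1, by push_cast; linarith⟩
    rw [hun] at h1
    obtain ⟨n, hn⟩ := (h1.eventually_const_lt hm2').exists
    refine ⟨-(n:ℝ), fun t ht hts => ?_⟩
    have : ν {x | (-(n:ℝ)) < f x} ≤ ν {x | t < f x} :=
      measure_mono (fun x hx => lt_of_le_of_lt ht hx)
    exact absurd (le_trans this hts) (not_le.mpr hn)
  obtain ⟨t₁, ht₁⟩ := hbdd
  have hbddS : BddBelow S := ⟨t₁, fun t ht => by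
    by_contra h; exact ht₁ t (le_of_not_ge h) ht⟩
  refine ⟨sInf S, ?_, ?_⟩
  · have hsub : {x | sInf S < f x} = ⋃ n : ℕ, {x | sInf S + 1/((n:ℝ)+1) < f x} := by
      ext x
      simp only [mem_iUnion, mem_setOf_eq]
      constructor
      · intro hx
        obtain ⟨n, hn⟩ := exists_nat_one_div_lt (sub_pos.mpr hx)
        exact ⟨n, by linarith [hn]⟩
      · rintro ⟨n, hn⟩
        have : (0:ℝ) < 1/((n:ℝ)+1) := by positivity
        linarith
    rw [hsub, Directed.measure_iUnion]
    · refine iSup_le fun n => ?_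
      have hlt : sInf S < sInf S + 1/((n:ℝ)+1) := by
        have : (0:ℝ) < 1/((n:ℝ)+1) := by positivity
        linarith
      obtain ⟨t, htS, htlt⟩ := exists_lt_of_csInf_lt hne hlt
      exact hup t htS _ htlt.le
    · intro i j
      rcases le_total i j with h | h
      · exact ⟨j, fun x hx => by
          simp only [mem_setOf_eq] at hx ⊢
          linarith [one_div_succ_mono h], fun x hx => hx⟩
      · exact ⟨i, fun x hx => hx, fun x hx => by
          simp only [mem_setOf_eq] at hx ⊢
          linarith [one_div_succ_mono h]⟩
  · have hsub : {x | f x < sInf S} = ⋃ n : ℕ, {x | f x ≤ sInf S - 1/((n:ℝ)+1)} := by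
      ext x
      simp only [mem_iUnion, mem_setOf_eq]
      constructor
      · intro hx
        obtain ⟨n, hn⟩ := exists_nat_one_div_lt (sub_pos.mpr hx)
        exact ⟨n, by linarith [hn]⟩
      · rintro ⟨n, hn⟩
        have : (0:ℝ) < 1/((n:ℝ)+1) := by positivity
        linarith
    rw [hsub, Directed.measure_iUnion]
    · refine iSup_le fun n => ?_
      have htnotS : sInf S - 1/((n:ℝ)+1) ∉ S := by
        apply notMem_of_lt_csInf _ hbddS
        have : (0:ℝ) < 1/((n:ℝ)+1) := by positivity
        linarith
      have hgt : ν univ / 2 ≤ ν {x | sInf S - 1/((n:ℝ)+1) < f x} := le_of_not_ge htnotS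
      have hpart : ν {x | f x ≤ sInf S - 1/((n:ℝ)+1)} + ν {x | sInf S - 1/((n:ℝ)+1) < f x}
          = ν univ := by
        have hms : MeasurableSet {x | f x ≤ sInf S - 1/((n:ℝ)+1)} := hf measurableSet_Iic
        have h2 := measure_add_measure_compl (μ := ν) hms
        have hc : {x | f x ≤ sInf S - 1/((n:ℝ)+1)}ᶜ = {x | sInf S - 1/((n:ℝ)+1) < f x} := by
          ext x; simp [not_le]
        rwa [hc] at h2
      have heq : ν {x | f x ≤ sInf S - 1/((n:ℝ)+1)}
          = ν univ - ν {x | sInf S - 1/((n:ℝ)+1) < f x} :=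
        ENNReal.eq_sub_of_add_eq (measure_ne_top ν _) hpart
      rw [heq]
      calc ν univ - ν {x | sInf S - 1/((n:ℝ)+1) < f x} ≤ ν univ - ν univ / 2 :=
            tsub_le_tsub_left hgt _
        _ = ν univ / 2 := ENNReal.sub_half (measure_ne_top ν univ)
    · intro i j
      rcases le_total i j with h | h
      · exact ⟨j, fun x hx => by
          simp only [mem_setOf_eq] at hx ⊢
          linarith [one_div_succ_mono h], fun x hx => hx⟩
      · exact ⟨i, fun x hx => hx, fun x hx => by
          simp only [mem_setOf_eq] at hx ⊢
          linarith [one_div_succ_mono h]⟩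


variable {X : Type*} [MeasurableSpace X] {μ : Measure X}

lemma lintegral_le_pow_mul_measure {s T : Set X} (hT : MeasurableSet T)
    {h : X → ℝ≥0∞} (hh : AEMeasurable h (μ.restrict s)) {q : ℝ} (hq : 1 < q)
    (hvan : ∀ x, x ∉ T → h x = 0) :
    ∫⁻ x in s, h x ∂μ ≤
      (∫⁻ x in s, h x ^ q ∂μ) ^ (1/q) * ((μ.restrict s) T) ^ (1 - 1/q) := by
  have hpq : q.HolderConjugate (q/(q-1)) := Real.HolderConjugate.conjExponent hq
  calc ∫⁻ x in s, h x ∂μ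
      = ∫⁻ x in s, (h * T.indicator (fun _ => (1:ℝ≥0∞))) x ∂μ := by
        apply lintegral_congr; intro x
        by_cases hx : x ∈ T
        · simp [Set.indicator_of_mem hx]
        · simp [Set.indicator_of_notMem hx, hvan x hx]
    _ ≤ (∫⁻ x in s, h x ^ q ∂μ) ^ (1/q) *
        (∫⁻ x in s, (T.indicator (fun _ => (1:ℝ≥0∞)) x) ^ (q/(q-1)) ∂μ) ^ (1/(q/(q-1))) :=
        ENNReal.lintegral_mul_le_Lp_mul_Lq _ hpq hh
          ((measurable_const.indicator hT).aemeasurable)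
    _ = (∫⁻ x in s, h x ^ q ∂μ) ^ (1/q) * ((μ.restrict s) T) ^ (1 - 1/q) := by
        congr 1
        have h1 : ∀ x, (T.indicator (fun _ => (1:ℝ≥0∞)) x) ^ (q/(q-1))
            = T.indicator (fun _ => (1:ℝ≥0∞)) x := by
          intro x
          have hqq' : (0:ℝ) < q/(q-1) := div_pos (by linarith) (by linarith)
          by_cases hx : x ∈ T
          · simp [Set.indicator_of_mem hx]
          · simp [Set.indicator_of_notMem hx, ENNReal.zero_rpow_of_pos hqq']
        have h2 : 1/(q/(q-1)) = 1 - 1/q := by field_simp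
        rw [h2, lintegral_congr h1, lintegral_indicator hT, setLIntegral_one]

-- the key division algebra: I^{1/q} * m^{1-1/q} / m = (I/m)^{1/q}
lemma pow_div_cancel {I m : ℝ≥0∞} (hm0 : m ≠ 0) (hmT : m ≠ ∞) {q : ℝ} (hq : 1 < q) :
    (I ^ (1/q) * m ^ (1 - 1/q)) / m = (I / m) ^ (1/q) := by
  have hq0 : (0:ℝ) < 1/q := by positivity
  rw [ENNReal.div_rpow_of_nonneg _ _ hq0.le]
  rw [div_eq_mul_inv, div_eq_mul_inv, mul_assoc]
  congr 1
  rw [← ENNReal.rpow_neg_one m, ← ENNReal.rpow_add _ _ hm0 hmT, ← ENNReal.rpow_neg]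
  congr 1
  ring

-- average version of Hölder with half-measure support
lemma avg_le_avgPow_half {s T : Set X} (hT : MeasurableSet T)
    {h : X → ℝ≥0∞} (hh : AEMeasurable h (μ.restrict s)) {q : ℝ} (hq : 1 < q)
    (hvan : ∀ x, x ∉ T → h x = 0) (hs0 : μ s ≠ 0) (hsT : μ s ≠ ∞)
    (hhalf : (μ.restrict s) T ≤ μ s / 2) :
    (∫⁻ x in s, h x ∂μ) / μ s ≤
      ((∫⁻ x in s, h x ^ q ∂μ) / μ s) ^ (1/q) * ((2:ℝ≥0∞)⁻¹) ^ (1 - 1/q) := by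
  have hexp : (0:ℝ) ≤ 1 - 1/q := by
    have : 1/q < 1 := by rw [div_lt_one (by linarith)]; linarith
    linarith
  have step1 := lintegral_le_pow_mul_measure hT hh hq hvan
  have step2 : ((μ.restrict s) T) ^ (1 - 1/q) ≤ (μ s * 2⁻¹) ^ (1 - 1/q) := by
    apply ENNReal.rpow_le_rpow _ hexp
    rwa [← div_eq_mul_inv]
  calc (∫⁻ x in s, h x ∂μ) / μ s
      ≤ ((∫⁻ x in s, h x ^ q ∂μ) ^ (1/q) * (μ s * 2⁻¹) ^ (1 - 1/q)) / μ s := by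
        apply ENNReal.div_le_div_right
        exact le_trans step1 (mul_le_mul_right step2 _)
    _ = (((∫⁻ x in s, h x ^ q ∂μ) ^ (1/q) * (μ s) ^ (1 - 1/q)) / μ s) *
          ((2:ℝ≥0∞)⁻¹) ^ (1 - 1/q) := by
        rw [ENNReal.mul_rpow_of_nonneg _ _ hexp]
        simp only [div_eq_mul_inv]
        ring
    _ = ((∫⁻ x in s, h x ^ q ∂μ) / μ s) ^ (1/q) * ((2:ℝ≥0∞)⁻¹) ^ (1 - 1/q) := by
        rw [pow_div_cancel hs0 hsT hq]

-- plain average Hölder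
lemma avg_le_avgPow {s : Set X} {h : X → ℝ≥0∞} (hh : AEMeasurable h (μ.restrict s))
    {q : ℝ} (hq : 1 < q) (hs0 : μ s ≠ 0) (hsT : μ s ≠ ∞) :
    (∫⁻ x in s, h x ∂μ) / μ s ≤ ((∫⁻ x in s, h x ^ q ∂μ) / μ s) ^ (1/q) := by
  have hexp : (0:ℝ) ≤ 1 - 1/q := by
    have : 1/q < 1 := by rw [div_lt_one (by linarith)]; linarith
    linarith
  have step1 := lintegral_le_pow_mul_measure (MeasurableSet.univ) hh hq
    (fun x hx => absurd (Set.mem_univ x) hx)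
  have step2 : ((μ.restrict s) univ) ^ (1 - 1/q) = (μ s) ^ (1 - 1/q) := by
    rw [Measure.restrict_apply_univ]
  rw [step2] at step1
  calc (∫⁻ x in s, h x ∂μ) / μ s
      ≤ ((∫⁻ x in s, h x ^ q ∂μ) ^ (1/q) * (μ s) ^ (1 - 1/q)) / μ s :=
        ENNReal.div_le_div_right step1 _
    _ = ((∫⁻ x in s, h x ^ q ∂μ) / μ s) ^ (1/q) := pow_div_cancel hs0 hsT hq

lemma ofReal_setAverage {s : Set X} {f : X → ℝ} (hf : IntegrableOn f s μ)
    (h0 : 0 ≤ᵐ[μ.restrict s] f) (hsT : μ s ≠ ∞) :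
    ENNReal.ofReal (⨍ x in s, f x ∂μ) = (∫⁻ x in s, ENNReal.ofReal (f x) ∂μ) / μ s := by
  by_cases hs0 : μ s = 0
  · rw [setAverage_eq, hs0]
    simp [Measure.restrict_eq_zero.mpr hs0]
  rw [setAverage_eq, measureReal_def, smul_eq_mul, ENNReal.ofReal_mul (by positivity),
    ← ofReal_integral_eq_lintegral_ofReal hf h0,
    ENNReal.ofReal_inv_of_pos (ENNReal.toReal_pos hs0 hsT),
    ENNReal.ofReal_toReal hsT, div_eq_mul_inv, mul_comm]

end Helpers
section Helpers2
variable {X : Type*} [MeasurableSpace X] {μ : Measure X}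

lemma IsUpperGradient.philip {Y : Type*} [MetricSpace Y] {u g : Y → ℝ}
    (h : IsUpperGradient u g) {φ : ℝ → ℝ} (hφ : LipschitzWith 1 φ) :
    IsUpperGradient (fun x => φ (u x)) g := by
  refine ⟨h.1, fun ℓ γ hℓ hγ => ?_⟩
  refine le_trans ?_ (h.2 ℓ γ hℓ hγ)
  have h2 := hφ.dist_le_mul (u (γ ℓ)) (u (γ 0))
  rw [NNReal.coe_one, one_mul] at h2
  simpa [Real.dist_eq] using h2

lemma lipschitz_min_trunc (k : ℝ) : LipschitzWith 1 (fun t : ℝ => min t k) := by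
  simpa using LipschitzWith.min (LipschitzWith.id) (LipschitzWith.const k)

lemma lipschitz_posPart (a : ℝ) : LipschitzWith 1 (fun t : ℝ => max (t - a) 0) := by
  have h1 : LipschitzWith 1 (fun t : ℝ => t - a) :=
    LipschitzWith.of_dist_le_mul (fun x y => by
      rw [Real.dist_eq, Real.dist_eq, NNReal.coe_one, one_mul]
      have h : x - a - (y - a) = x - y := by ring
      rw [h])
  simpa using h1.max_const 0

lemma lipschitz_negPart (a : ℝ) : LipschitzWith 1 (fun t : ℝ => max (a - t) 0) := by
  have h1 : LipschitzWith 1 (fun t : ℝ => a - t) :=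
    LipschitzWith.of_dist_le_mul (fun x y => by
      rw [Real.dist_eq, Real.dist_eq, NNReal.coe_one, one_mul]
      have h : a - x - (a - y) = y - x := by ring
      rw [h, abs_sub_comm])
  simpa using h1.max_const 0

lemma rpow_one_div_rpow {x : ℝ≥0∞} {q : ℝ} (hq : q ≠ 0) : (x ^ (1/q)) ^ q = x := by
  rw [← ENNReal.rpow_mul, one_div, inv_mul_cancel₀ hq, ENNReal.rpow_one]

lemma rpow_rpow_one_div {x : ℝ≥0∞} {q : ℝ} (hq : q ≠ 0) : (x ^ q) ^ (1/q) = x := by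
  rw [← ENNReal.rpow_mul, one_div, mul_inv_cancel₀ hq, ENNReal.rpow_one]

lemma iSup_ofReal_min_rpow (t : ℝ) {q : ℝ} (hq0 : 0 < q) :
    ⨆ k : ℕ, ENNReal.ofReal (min t (k:ℝ)) ^ q = ENNReal.ofReal t ^ q := by
  apply le_antisymm
  · exact iSup_le fun k =>
      ENNReal.rpow_le_rpow (ENNReal.ofReal_le_ofReal (min_le_left _ _)) hq0.le
  · refine le_iSup_of_le ⌈t⌉₊ ?_
    rw [min_eq_left (Nat.le_ceil t)]

lemma avgPow_congr_ae {s : Set X} {f1 f2 : X → ℝ} {q : ℝ}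
    (h : f1 =ᵐ[μ.restrict s] f2) : avgPow μ s f1 q = avgPow μ s f2 q := by
  unfold avgPow
  congr 2
  exact lintegral_congr_ae (h.mono fun x hx => by dsimp only; rw [hx])

lemma avgPow_le_of_lintegral_le {s : Set X} {f : X → ℝ} {q : ℝ} {M : ℝ≥0∞}
    (hq0 : 0 < q) (hs0 : μ s ≠ 0) (hsT : μ s ≠ ∞)
    (h : ∫⁻ x in s, ENNReal.ofReal (f x) ^ q ∂μ ≤ M ^ q * μ s) :
    avgPow μ s f q ≤ M := by
  unfold avgPow
  have h2 : (∫⁻ x in s, ENNReal.ofReal (f x) ^ q ∂μ) / μ s ≤ M ^ q :=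
    ENNReal.div_le_of_le_mul h
  calc ((∫⁻ x in s, ENNReal.ofReal (f x) ^ q ∂μ) / μ s) ^ (1/q)
      ≤ (M ^ q) ^ (1/q) := ENNReal.rpow_le_rpow h2 (by positivity)
    _ = M := rpow_rpow_one_div hq0.ne'

lemma lintegral_le_of_avgPow_le {s : Set X} {f : X → ℝ} {q : ℝ} {M : ℝ≥0∞}
    (hq0 : 0 < q) (hs0 : μ s ≠ 0) (hsT : μ s ≠ ∞)
    (h : avgPow μ s f q ≤ M) :
    ∫⁻ x in s, ENNReal.ofReal (f x) ^ q ∂μ ≤ M ^ q * μ s := by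
  have h2 := ENNReal.rpow_le_rpow h hq0.le
  unfold avgPow at h2
  rw [rpow_one_div_rpow hq0.ne'] at h2
  calc ∫⁻ x in s, ENNReal.ofReal (f x) ^ q ∂μ
      = (∫⁻ x in s, ENNReal.ofReal (f x) ^ q ∂μ) / μ s * μ s :=
        (ENNReal.div_mul_cancel hs0 hsT).symm
    _ ≤ M ^ q * μ s := mul_le_mul_left h2 _

lemma avgPow_const {s : Set X} {C q : ℝ} (hq0 : 0 < q) (hs0 : μ s ≠ 0) (hsT : μ s ≠ ∞) :
    avgPow μ s (fun _ => C) q = ENNReal.ofReal C := by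
  unfold avgPow
  rw [setLIntegral_const, mul_div_assoc, ENNReal.div_self hs0 hsT, mul_one, rpow_rpow_one_div hq0.ne']

lemma ofReal_avg_le_avgPow {s : Set X} {f : X → ℝ} {q : ℝ} (hq : 1 < q)
    (hf : IntegrableOn f s μ) (h0 : 0 ≤ᵐ[μ.restrict s] f)
    (hs0 : μ s ≠ 0) (hsT : μ s ≠ ∞) :
    ENNReal.ofReal (⨍ x in s, f x ∂μ) ≤ avgPow μ s f q := by
  rw [ofReal_setAverage hf h0 hsT]
  exact avg_le_avgPow (ENNReal.measurable_ofReal.comp_aemeasurable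
    hf.1.aemeasurable) hq hs0 hsT

lemma avgPow_triangle {s : Set X} {f f1 f2 : X → ℝ} {q : ℝ} (hq : 1 ≤ q)
    (hf1 : AEMeasurable (fun x => ENNReal.ofReal (f1 x)) (μ.restrict s))
    (hf2 : AEMeasurable (fun x => ENNReal.ofReal (f2 x)) (μ.restrict s))
    (hs0 : μ s ≠ 0) (hsT : μ s ≠ ∞)
    (hle : ∀ x, ENNReal.ofReal (f x) ≤ ENNReal.ofReal (f1 x) + ENNReal.ofReal (f2 x)) :
    avgPow μ s f q ≤ avgPow μ s f1 q + avgPow μ s f2 q := by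
  have hq0 : (0:ℝ) < q := by linarith
  have step1 : ∫⁻ x in s, ENNReal.ofReal (f x) ^ q ∂μ ≤
      ∫⁻ x in s, ((fun x => ENNReal.ofReal (f1 x)) + fun x => ENNReal.ofReal (f2 x)) x ^ q ∂μ := by
    apply lintegral_mono
    intro x
    exact ENNReal.rpow_le_rpow (hle x) hq0.le
  have step2 := ENNReal.lintegral_Lp_add_le hf1 hf2 hq
  unfold avgPow
  rw [ENNReal.div_rpow_of_nonneg _ _ (by positivity : (0:ℝ) ≤ 1/q),
    ENNReal.div_rpow_of_nonneg _ _ (by positivity : (0:ℝ) ≤ 1/q),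
    ENNReal.div_rpow_of_nonneg _ _ (by positivity : (0:ℝ) ≤ 1/q),
    ← ENNReal.add_div]
  apply ENNReal.div_le_div_right
  calc (∫⁻ x in s, ENNReal.ofReal (f x) ^ q ∂μ) ^ (1/q)
      ≤ (∫⁻ x in s, ((fun x => ENNReal.ofReal (f1 x)) + fun x => ENNReal.ofReal (f2 x)) x ^ q ∂μ) ^ (1/q) :=
        ENNReal.rpow_le_rpow step1 (by positivity)
    _ ≤ _ := step2

end Helpers2

section LemmaB
variable {X : Type*} [MetricSpace X] [MeasurableSpace X] [BorelSpace X]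

lemma lemmaB (μ : Measure X)
    (hnt : ∀ (x : X) (r : ℝ), 0 < r → 0 < μ (ball x r) ∧ μ (ball x r) < ⊤)
    (p q : ℝ) (hq : 1 < q)
    (c τ' ε δ : ℝ) (hcpos : 0 < c) (hτ' : 1 ≤ τ') (hε : 0 < ε)
    (hcontr : (1 + ε) * (1 / 2 : ℝ) ^ (1 - 1 / q) < 1)
    (hsmall : ∀ (x₀ : X) (r : ℝ), 0 < r →
      ENNReal.ofReal r ≤ ENNReal.ofReal δ * EMetric.diam (univ : Set X) →
      ∀ u g : X → ℝ, IsUpperGradient u g → (∀ x, 0 ≤ u x) →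
        IntegrableOn u (ball x₀ (τ' * r)) μ →
        avgPow μ (ball x₀ r) u q ≤
          ENNReal.ofReal (c * r) * avgPow μ (ball x₀ (τ' * r)) g p +
            ENNReal.ofReal ((1 + ε) * ⨍ x in ball x₀ r, u x ∂μ))
    (z : X) (r : ℝ) (hr : 0 < r)
    (hrs : ENNReal.ofReal r ≤ ENNReal.ofReal δ * EMetric.diam (univ : Set X))
    (u g : X → ℝ) (hug : IsUpperGradient u g)
    (hInt : IntegrableOn u (ball z (τ' * r)) μ) :
    avgPow μ (ball z r) (fun x => |u x - ⨍ y in ball z r, u y ∂μ|) q ≤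
      ENNReal.ofReal ((4 * c / (1 - (1 + ε) * (1/2 : ℝ) ^ (1 - 1/q))) * r) *
        avgPow μ (ball z (τ' * r)) g p := by
  have hq0 : (0:ℝ) < q := by linarith
  set θ : ℝ := 1 - (1 + ε) * (1/2 : ℝ) ^ (1 - 1/q) with hθdef
  have hκre_pos : 0 < (1 + ε) * (1/2 : ℝ) ^ (1 - 1/q) := by positivity
  have hθpos : 0 < θ := by rw [hθdef]; linarith
  set B := ball z r with hBdef
  set Bt := ball z (τ' * r) with hBtdef
  have hrt : 0 < τ' * r := by positivity
  have hBsub : B ⊆ Bt := ball_subset_ball (by nlinarith)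
  have hμB0 : μ B ≠ 0 := (hnt z r hr).1.ne'
  have hμBT : μ B ≠ ∞ := (hnt z r hr).2.ne
  have hIntB : IntegrableOn u B μ := hInt.mono_set hBsub
  have hfin : IsFiniteMeasure (μ.restrict B) :=
    ⟨by rwa [Measure.restrict_apply_univ, lt_top_iff_ne_top]⟩
  have hmeasBt : AEMeasurable u (μ.restrict Bt) := hInt.1.aemeasurable
  have hmeasB : AEMeasurable u (μ.restrict B) :=
    hmeasBt.mono_measure (Measure.restrict_mono hBsub le_rfl)
  set u' := hmeasBt.mk u with hu'def
  have hu'meas : Measurable u' := hmeasBt.measurable_mk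
  have haeBt : u =ᵐ[μ.restrict Bt] u' := hmeasBt.ae_eq_mk
  have haeB : u =ᵐ[μ.restrict B] u' := ae_restrict_of_ae_restrict_of_subset hBsub haeBt
  obtain ⟨a, ha1, ha2⟩ := median_exists (μ.restrict B) u' hu'meas
  rw [Measure.restrict_apply_univ] at ha1 ha2
  set G := avgPow μ Bt g p with hGdef
  set κ := ENNReal.ofReal ((1 + ε) * (1/2 : ℝ) ^ (1 - 1/q)) with hκdef
  have hκlt1 : κ < 1 := by rw [hκdef]; exact ENNReal.ofReal_lt_one.mpr hcontr
  have hhalfeq : ENNReal.ofReal (1/2 : ℝ) = (2:ℝ≥0∞)⁻¹ := by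
    rw [one_div, ENNReal.ofReal_inv_of_pos two_pos]; norm_num
  have hκeq : κ = ENNReal.ofReal (1 + ε) * ((2:ℝ≥0∞)⁻¹) ^ (1 - 1/q) := by
    rw [hκdef, ← hhalfeq, ENNReal.ofReal_rpow_of_pos (by norm_num : (0:ℝ) < 1/2),
      ← ENNReal.ofReal_mul (by linarith)]
  set M := (ENNReal.ofReal (c * r) * G) / (1 - κ) with hMdef
  -- the key estimate for truncatable nonnegative pieces
  have key : ∀ (φ : ℝ → ℝ) (T : Set X), LipschitzWith 1 φ → (∀ t, 0 ≤ φ t) →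
      MeasurableSet T → (∀ x, x ∉ T → φ (u' x) = 0) →
      (μ.restrict B) T ≤ μ B / 2 →
      ∫⁻ x in B, ENNReal.ofReal (φ (u x)) ^ q ∂μ ≤ M ^ q * μ B := by
    intro φ T hφlip hφ0 hT hvan hhalf
    have hAk : ∀ k : ℕ, avgPow μ B (fun x => min (φ (u x)) (k:ℝ)) q ≤ M := by
      intro k
      have hψlip : LipschitzWith 1 (fun t : ℝ => min (φ t) (k:ℝ)) := by
        simpa [Function.comp_def] using (lipschitz_min_trunc (k:ℝ)).comp hφlip
      have hfk_ug : IsUpperGradient (fun x => min (φ (u x)) (k:ℝ)) g := hug.philip hψlip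
      have hfk0 : ∀ x, 0 ≤ min (φ (u x)) (k:ℝ) :=
        fun x => le_min (hφ0 _) (Nat.cast_nonneg k)
      have hψcont : Continuous (fun t : ℝ => min (φ t) (k:ℝ)) := hψlip.continuous
      have hfkInt : IntegrableOn (fun x => min (φ (u x)) (k:ℝ)) Bt μ := by
        apply Integrable.mono' (integrableOn_const (hnt z _ hrt).2.ne :
          IntegrableOn (fun _ => (k:ℝ)) Bt μ)
        · exact (hψcont.measurable.comp_aemeasurable hmeasBt).aestronglyMeasurable
        · refine ae_of_all _ fun x => ?_
          rw [Real.norm_eq_abs, abs_of_nonneg (hfk0 x)]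
          exact min_le_right _ _
      have h1 := hsmall z r hr hrs _ g hfk_ug hfk0 hfkInt
      have hIntfkB : IntegrableOn (fun x => min (φ (u x)) (k:ℝ)) B μ := hfkInt.mono_set hBsub
      have havg : ENNReal.ofReal ((1+ε) * ⨍ x in B, min (φ (u x)) (k:ℝ) ∂μ) ≤
          κ * avgPow μ B (fun x => min (φ (u x)) (k:ℝ)) q := by
        rw [ENNReal.ofReal_mul (by linarith : (0:ℝ) ≤ 1 + ε),
          ofReal_setAverage hIntfkB (ae_of_all _ hfk0) hμBT]
        have hcongr1 : (fun x => ENNReal.ofReal (min (φ (u x)) (k:ℝ))) =ᵐ[μ.restrict B]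
            (fun x => ENNReal.ofReal (min (φ (u' x)) (k:ℝ))) :=
          haeB.mono fun x hx => by dsimp only; rw [hx]
        rw [lintegral_congr_ae hcongr1]
        have hmeas' : AEMeasurable (fun x => ENNReal.ofReal (min (φ (u' x)) (k:ℝ)))
            (μ.restrict B) :=
          ((ENNReal.continuous_ofReal.comp hψcont).measurable.comp hu'meas).aemeasurable
        have hvan' : ∀ x, x ∉ T → ENNReal.ofReal (min (φ (u' x)) (k:ℝ)) = 0 := by
          intro x hx
          rw [hvan x hx, min_eq_left (Nat.cast_nonneg k)]
          exact ENNReal.ofReal_zero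
        have h2 := avg_le_avgPow_half hT hmeas' hq hvan' hμB0 hμBT hhalf
        have hcongr2 : (fun x => ENNReal.ofReal (min (φ (u' x)) (k:ℝ)) ^ q) =ᵐ[μ.restrict B]
            (fun x => ENNReal.ofReal (min (φ (u x)) (k:ℝ)) ^ q) :=
          haeB.mono fun x hx => by dsimp only; rw [hx]
        rw [lintegral_congr_ae hcongr2] at h2
        calc ENNReal.ofReal (1+ε) * ((∫⁻ x in B, ENNReal.ofReal (min (φ (u' x)) (k:ℝ)) ∂μ) / μ B)
            ≤ ENNReal.ofReal (1+ε) *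
              (((∫⁻ x in B, ENNReal.ofReal (min (φ (u x)) (k:ℝ)) ^ q ∂μ) / μ B) ^ (1/q) *
                ((2:ℝ≥0∞)⁻¹) ^ (1 - 1/q)) := mul_le_mul_right h2 _
          _ = κ * avgPow μ B (fun x => min (φ (u x)) (k:ℝ)) q := by
              rw [hκeq]; unfold avgPow; ring
      have hAkfin : avgPow μ B (fun x => min (φ (u x)) (k:ℝ)) q ≠ ∞ := by
        have hb : ∫⁻ x in B, ENNReal.ofReal (min (φ (u x)) (k:ℝ)) ^ q ∂μ ≤
            (ENNReal.ofReal (k:ℝ)) ^ q * μ B := by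
          calc ∫⁻ x in B, ENNReal.ofReal (min (φ (u x)) (k:ℝ)) ^ q ∂μ
              ≤ ∫⁻ _ in B, (ENNReal.ofReal (k:ℝ)) ^ q ∂μ := lintegral_mono fun x =>
                ENNReal.rpow_le_rpow (ENNReal.ofReal_le_ofReal (min_le_right _ _)) hq0.le
            _ = (ENNReal.ofReal (k:ℝ)) ^ q * μ B := setLIntegral_const _ _
        exact ne_top_of_le_ne_top ENNReal.ofReal_ne_top
          (avgPow_le_of_lintegral_le (M := ENNReal.ofReal (k:ℝ)) hq0 hμB0 hμBT hb)
      have h3 : avgPow μ B (fun x => min (φ (u x)) (k:ℝ)) q ≤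
          ENNReal.ofReal (c * r) * G + κ * avgPow μ B (fun x => min (φ (u x)) (k:ℝ)) q :=
        h1.trans (add_le_add_right havg _)
      exact absorb hAkfin hκlt1 h3
    have hsup : ∀ x, ENNReal.ofReal (φ (u x)) ^ q =
        ⨆ k : ℕ, ENNReal.ofReal (min (φ (u x)) (k:ℝ)) ^ q :=
      fun x => (iSup_ofReal_min_rpow _ hq0).symm
    have hmcts : ∫⁻ x in B, ENNReal.ofReal (φ (u x)) ^ q ∂μ =
        ⨆ k : ℕ, ∫⁻ x in B, ENNReal.ofReal (min (φ (u x)) (k:ℝ)) ^ q ∂μ := by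
      rw [lintegral_congr hsup]
      apply lintegral_iSup'
      · intro k
        exact ((ENNReal.continuous_rpow_const.comp
          (ENNReal.continuous_ofReal.comp (hφlip.continuous.min continuous_const))).measurable.comp_aemeasurable
          hmeasB)
      · refine ae_of_all _ fun x k1 k2 hk => ?_
        exact ENNReal.rpow_le_rpow (ENNReal.ofReal_le_ofReal
          (min_le_min le_rfl (Nat.cast_le.mpr hk))) hq0.le
    rw [hmcts]
    exact iSup_le fun k => lintegral_le_of_avgPow_le hq0 hμB0 hμBT (hAk k)
  -- apply to positive and negative part
  have hTv : MeasurableSet {x | a < u' x} := measurableSet_lt measurable_const hu'meas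
  have hTw : MeasurableSet {x | u' x < a} := measurableSet_lt hu'meas measurable_const
  have hIv := key (fun t => max (t - a) 0) {x | a < u' x} (lipschitz_posPart a)
    (fun t => le_max_right _ _) hTv
    (fun x hx => max_eq_right (by simp only [mem_setOf_eq, not_lt] at hx; linarith)) ha1
  have hIw := key (fun t => max (a - t) 0) {x | u' x < a} (lipschitz_negPart a)
    (fun t => le_max_right _ _) hTw
    (fun x hx => max_eq_right (by simp only [mem_setOf_eq, not_lt] at hx; linarith)) ha2
  -- combine into |u - a|
  have hIa : ∫⁻ x in B, ENNReal.ofReal |u x - a| ^ q ∂μ ≤ 2 * (M ^ q * μ B) := by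
    have hpt : ∀ x, ENNReal.ofReal |u x - a| ^ q =
        ENNReal.ofReal (max (u x - a) 0) ^ q + ENNReal.ofReal (max (a - u x) 0) ^ q := by
      intro x
      rcases le_total (u x) a with h | h
      · rw [abs_of_nonpos (by linarith), max_eq_right (by linarith), neg_sub,
          max_eq_left (by linarith)]
        rw [ENNReal.ofReal_zero, ENNReal.zero_rpow_of_pos hq0, zero_add]
      · rw [abs_of_nonneg (by linarith), max_eq_left (by linarith),
          max_eq_right (by linarith)]
        rw [ENNReal.ofReal_zero, ENNReal.zero_rpow_of_pos hq0, add_zero]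
    rw [lintegral_congr hpt, lintegral_add_left']
    · calc (∫⁻ x in B, ENNReal.ofReal (max (u x - a) 0) ^ q ∂μ) +
          ∫⁻ x in B, ENNReal.ofReal (max (a - u x) 0) ^ q ∂μ
          ≤ (M ^ q * μ B) + (M ^ q * μ B) := add_le_add hIv hIw
        _ = 2 * (M ^ q * μ B) := (two_mul _).symm
    · exact ((ENNReal.continuous_rpow_const.comp
        (ENNReal.continuous_ofReal.comp ((lipschitz_posPart a).continuous))).measurable.comp_aemeasurable
        hmeasB)
  have havA : avgPow μ B (fun x => |u x - a|) q ≤ 2 * M := by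
    apply avgPow_le_of_lintegral_le hq0 hμB0 hμBT
    calc ∫⁻ x in B, ENNReal.ofReal |u x - a| ^ q ∂μ ≤ 2 * (M ^ q * μ B) := hIa
      _ ≤ (2 * M) ^ q * μ B := by
          rw [ENNReal.mul_rpow_of_nonneg _ _ hq0.le, ← mul_assoc]
          apply mul_le_mul_left
          apply mul_le_mul_left
          calc (2:ℝ≥0∞) = 2 ^ (1:ℝ) := (ENNReal.rpow_one 2).symm
            _ ≤ 2 ^ q := ENNReal.rpow_le_rpow_of_exponent_le one_le_two (by linarith)
  -- pass to the average constant
  set c₀ := ⨍ y in B, u y ∂μ with hc₀def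
  have hIntabs : IntegrableOn (fun x => |u x - a|) B μ := by
    have : IntegrableOn (fun x => u x - a) B μ := hIntB.sub (integrableOn_const
      (lt_top_iff_ne_top.mpr hμBT).ne)
    exact this.abs
  have hT0 : (μ B).toReal ≠ 0 := ENNReal.toReal_ne_zero.mpr ⟨hμB0, hμBT⟩
  have habs : ENNReal.ofReal |a - c₀| ≤ avgPow μ B (fun x => |u x - a|) q := by
    have h2 : ⨍ x in B, (u x - a) ∂μ = c₀ - a := by
      rw [setAverage_eq, integral_sub hIntB (integrableOn_const
        (lt_top_iff_ne_top.mpr hμBT).ne), setIntegral_const, smul_eq_mul, smul_eq_mul,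
        hc₀def, setAverage_eq, smul_eq_mul]
      field_simp
      rw [sub_div, mul_div_cancel_left₀ _ (show μ.real B ≠ 0 from hT0)]
    have h1 : |a - c₀| ≤ ⨍ x in B, |u x - a| ∂μ := by
      calc |a - c₀| = |⨍ x in B, (u x - a) ∂μ| := by rw [h2, abs_sub_comm]
        _ ≤ ⨍ x in B, |u x - a| ∂μ := by
            rw [setAverage_eq, setAverage_eq, smul_eq_mul, smul_eq_mul]
            rw [abs_mul, abs_of_nonneg (inv_nonneg.mpr measureReal_nonneg)]
            apply mul_le_mul_of_nonneg_left _ (inv_nonneg.mpr ENNReal.toReal_nonneg)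
            simpa [Real.norm_eq_abs] using
              norm_integral_le_integral_norm (μ := μ.restrict B) (fun x => u x - a)
    exact (ENNReal.ofReal_le_ofReal h1).trans
      (ofReal_avg_le_avgPow hq hIntabs (ae_of_all _ fun x => abs_nonneg _) hμB0 hμBT)
  have htri : avgPow μ B (fun x => |u x - c₀|) q ≤
      avgPow μ B (fun x => |u x - a|) q + avgPow μ B (fun _ => |a - c₀|) q := by
    apply avgPow_triangle (le_of_lt hq) _ _ hμB0 hμBT
    · intro x
      rw [← ENNReal.ofReal_add (abs_nonneg _) (abs_nonneg _)]
      apply ENNReal.ofReal_le_ofReal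
      calc |u x - c₀| = |(u x - a) + (a - c₀)| := by ring_nf
        _ ≤ |u x - a| + |a - c₀| := abs_add_le _ _
    · exact (ENNReal.measurable_ofReal.comp
        ((continuous_abs.comp (continuous_id.sub continuous_const)).measurable)).comp_aemeasurable
        hmeasB
    · exact aemeasurable_const
  have hfinal : (2:ℝ≥0∞) * (2 * M) = ENNReal.ofReal ((4 * c / θ) * r) * G := by
    have h1mκ : (1:ℝ≥0∞) - κ = ENNReal.ofReal θ := by
      rw [hθdef, ENNReal.ofReal_sub _ hκre_pos.le, ENNReal.ofReal_one, hκdef]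
    rw [hMdef, h1mκ]
    rw [show (2:ℝ≥0∞) * (2 * (ENNReal.ofReal (c*r) * G / ENNReal.ofReal θ)) =
      ((2 * 2) * ENNReal.ofReal (c*r) / ENNReal.ofReal θ) * G by
        simp only [div_eq_mul_inv]; ring]
    have h22 : ((2:ℝ≥0∞) * 2) = ENNReal.ofReal 4 := by
      rw [ENNReal.ofReal_ofNat]; norm_num
    rw [h22, ← ENNReal.ofReal_mul (by norm_num : (0:ℝ) ≤ 4),
      ← ENNReal.ofReal_div_of_pos hθpos]
    congr 2
    ring
  calc avgPow μ B (fun x => |u x - c₀|) q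
      ≤ avgPow μ B (fun x => |u x - a|) q + avgPow μ B (fun _ => |a - c₀|) q := htri
    _ = avgPow μ B (fun x => |u x - a|) q + ENNReal.ofReal |a - c₀| := by
        rw [avgPow_const hq0 hμB0 hμBT]
    _ ≤ avgPow μ B (fun x => |u x - a|) q + avgPow μ B (fun x => |u x - a|) q :=
        add_le_add_right habs _
    _ = 2 * avgPow μ B (fun x => |u x - a|) q := (two_mul _).symm
    _ ≤ 2 * (2 * M) := mul_le_mul_right havA _
    _ = ENNReal.ofReal ((4 * c / θ) * r) * G := hfinal
end LemmaB

section Helpers3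
variable {X : Type*} [MetricSpace X] [MeasurableSpace X] [BorelSpace X] {μ : Measure X}

lemma doubling_iter (μ : Measure X) (c_μ : ℝ)
    (hdbl : ∀ (x : X) (r : ℝ), 0 < r → μ (ball x (2*r)) ≤ ENNReal.ofReal c_μ * μ (ball x r)) :
    ∀ (n : ℕ) (z : X) (s : ℝ), 0 < s →
      μ (ball z (2^n * s)) ≤ (ENNReal.ofReal c_μ)^n * μ (ball z s) := by
  intro n
  induction n with
  | zero => intro z s _; simp
  | succ n ih =>
      intro z s hs
      have h1 : (2:ℝ)^(n+1) * s = 2 * (2^n * s) := by ring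
      rw [h1]
      calc μ (ball z (2*(2^n*s))) ≤ ENNReal.ofReal c_μ * μ (ball z (2^n*s)) :=
            hdbl z _ (by positivity)
        _ ≤ ENNReal.ofReal c_μ * ((ENNReal.ofReal c_μ)^n * μ (ball z s)) :=
            mul_le_mul_right (ih z s hs) _
        _ = (ENNReal.ofReal c_μ)^(n+1) * μ (ball z s) := by ring

lemma exists_net (μ : Measure X) {s : ℝ} (hs : 0 < s) {m : ℝ≥0∞} (hm0 : m ≠ 0)
    (hμT : μ (univ : Set X) ≠ ∞)
    (hlow : ∀ z : X, m ≤ μ (ball z (s/2))) :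
    ∃ F : Finset X, ∀ y : X, ∃ x ∈ F, dist y x < s := by
  classical
  set P : Set ℕ := {n | ∃ F : Finset X,
    (∀ x ∈ F, ∀ x' ∈ F, x ≠ x' → s ≤ dist x x') ∧ F.card = n} with hP
  have h0P : 0 ∈ P := ⟨∅, by simp⟩
  have hbound : ∀ n ∈ P, (n : ℝ≥0∞) * m ≤ μ (univ : Set X) := by
    rintro n ⟨F, hFsep, rfl⟩
    have hdisj : (F : Set X).PairwiseDisjoint (fun x => ball x (s/2)) := by
      intro x hx y hy hxy
      apply Set.disjoint_left.mpr
      intro w hw hw'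
      have h1 : dist x y ≤ dist w x + dist w y := dist_triangle_left x y w
      have h2 : s ≤ dist x y := hFsep x hx y hy hxy
      simp only [mem_ball] at hw hw'
      linarith
    have hsum : ∑ x ∈ F, μ (ball x (s/2)) = μ (⋃ x ∈ F, ball x (s/2)) :=
      (measure_biUnion_finset hdisj (fun x _ => measurableSet_ball)).symm
    calc (F.card : ℝ≥0∞) * m = ∑ _x ∈ F, m := by
          rw [Finset.sum_const, nsmul_eq_mul]
      _ ≤ ∑ x ∈ F, μ (ball x (s/2)) := Finset.sum_le_sum fun x _ => hlow x
      _ = μ (⋃ x ∈ F, ball x (s/2)) := hsum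
      _ ≤ μ (univ : Set X) := measure_mono (subset_univ _)
  have hfin : μ (univ : Set X) / m ≠ ∞ :=
    (ENNReal.div_lt_top hμT hm0).ne
  have hbddP : BddAbove P := by
    refine ⟨⌈(μ (univ : Set X) / m).toReal⌉₊, fun n hn => ?_⟩
    have h1 : (n : ℝ≥0∞) ≤ μ (univ : Set X) / m := by
      rw [ENNReal.le_div_iff_mul_le (Or.inl hm0) (Or.inr hμT)]
      exact hbound n hn
    have h2 : (n:ℝ) ≤ (μ (univ : Set X) / m).toReal := by
      have h3 := ENNReal.toReal_mono hfin h1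
      simpa using h3
    exact_mod_cast le_trans h2 (Nat.le_ceil _)
  obtain ⟨F, hFsep, hFcard⟩ := Nat.sSup_mem ⟨0, h0P⟩ hbddP
  refine ⟨F, fun y => ?_⟩
  by_contra hy
  push_neg at hy
  have hynotF : y ∉ F := by
    intro hyF
    have h3 := hy y hyF
    rw [dist_self] at h3
    linarith
  have hins : (insert y F).card ∈ P := by
    refine ⟨insert y F, ⟨?_, rfl⟩⟩
    intro x hx x' hx' hxx'
    rcases Finset.mem_insert.mp hx with rfl | hxF
    · rcases Finset.mem_insert.mp hx' with rfl | hx'F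
      · exact absurd rfl hxx'
      · exact hy x' hx'F
    · rcases Finset.mem_insert.mp hx' with rfl | hx'F
      · rw [dist_comm]; exact hy x hxF
      · exact hFsep x hxF x' hx'F hxx'
  have hcard : (insert y F).card ≤ sSup P := le_csSup hbddP hins
  rw [Finset.card_insert_of_notMem hynotF, hFcard] at hcard
  omega
end Helpers3

section Helpers4
variable {X : Type*} [MetricSpace X] [MeasurableSpace X] [BorelSpace X] {μ : Measure X}

lemma avgPow_le_of_subset {s t : Set X} {f : X → ℝ} {e : ℝ} (he : 0 < e)
    (hsub : s ⊆ t) {C : ℝ≥0∞} (hC0 : C ≠ 0) (hCT : C ≠ ∞) (ht0 : μ t ≠ 0) (htT : μ t ≠ ∞)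
    (hcmp : μ t ≤ C * μ s) :
    avgPow μ s f e ≤ C ^ (1/e) * avgPow μ t f e := by
  unfold avgPow
  have h1 : ∫⁻ x in s, ENNReal.ofReal (f x) ^ e ∂μ ≤ ∫⁻ x in t, ENNReal.ofReal (f x) ^ e ∂μ :=
    lintegral_mono' (Measure.restrict_mono hsub le_rfl) le_rfl
  have h2 : μ t / C ≤ μ s := by
    rw [ENNReal.div_le_iff_le_mul (Or.inl hC0) (Or.inl hCT), mul_comm]
    exact hcmp
  calc ((∫⁻ x in s, ENNReal.ofReal (f x) ^ e ∂μ) / μ s) ^ (1/e)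
      ≤ ((∫⁻ x in t, ENNReal.ofReal (f x) ^ e ∂μ) / (μ t / C)) ^ (1/e) :=
        ENNReal.rpow_le_rpow (ENNReal.div_le_div h1 h2) (by positivity)
    _ = (C * ((∫⁻ x in t, ENNReal.ofReal (f x) ^ e ∂μ) / μ t)) ^ (1/e) := by
        congr 1
        rw [div_eq_mul_inv, ENNReal.inv_div (Or.inl hCT) (Or.inl hC0),
          div_eq_mul_inv, div_eq_mul_inv]
        ring
    _ = C ^ (1/e) * ((∫⁻ x in t, ENNReal.ofReal (f x) ^ e ∂μ) / μ t) ^ (1/e) :=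
        ENNReal.mul_rpow_of_nonneg _ _ (by positivity)

lemma ofReal_avg_diff_le {s : Set X} {f : X → ℝ} (hf : IntegrableOn f s μ)
    (hs0 : μ s ≠ 0) (hsT : μ s ≠ ∞) (b : ℝ) :
    ENNReal.ofReal |(⨍ x in s, f x ∂μ) - b| ≤
      (∫⁻ x in s, ENNReal.ofReal |f x - b| ∂μ) / μ s := by
  have hT0 : (μ s).toReal ≠ 0 := ENNReal.toReal_ne_zero.mpr ⟨hs0, hsT⟩
  have hIntb : IntegrableOn (fun x => f x - b) s μ :=
    hf.sub (integrableOn_const (lt_top_iff_ne_top.mpr hsT).ne)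
  have h2 : ⨍ x in s, (f x - b) ∂μ = (⨍ x in s, f x ∂μ) - b := by
    rw [setAverage_eq, setAverage_eq, integral_sub hf (integrableOn_const
      (lt_top_iff_ne_top.mpr hsT).ne), setIntegral_const, smul_eq_mul, smul_eq_mul, smul_eq_mul]
    field_simp
    rw [sub_div, mul_div_cancel_left₀ _ (show μ.real s ≠ 0 from hT0)]
  have h1 : |(⨍ x in s, f x ∂μ) - b| ≤ ⨍ x in s, |f x - b| ∂μ := by
    rw [← h2]
    rw [setAverage_eq, setAverage_eq, smul_eq_mul, smul_eq_mul]
    rw [abs_mul, abs_of_nonneg (inv_nonneg.mpr measureReal_nonneg)]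
    apply mul_le_mul_of_nonneg_left _ (inv_nonneg.mpr ENNReal.toReal_nonneg)
    simpa [Real.norm_eq_abs] using
      norm_integral_le_integral_norm (μ := μ.restrict s) (fun x => f x - b)
  calc ENNReal.ofReal |(⨍ x in s, f x ∂μ) - b| ≤ ENNReal.ofReal (⨍ x in s, |f x - b| ∂μ) :=
        ENNReal.ofReal_le_ofReal h1
    _ = (∫⁻ x in s, ENNReal.ofReal |f x - b| ∂μ) / μ s :=
        ofReal_setAverage hIntb.abs (ae_of_all _ fun x => abs_nonneg _) hsT

lemma rpow_add_le_two_rpow (x y : ℝ≥0∞) {e : ℝ} (he : 0 ≤ e) :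
    (x + y) ^ e ≤ 2 ^ e * (x ^ e + y ^ e) := by
  calc (x + y) ^ e ≤ (2 * max x y) ^ e := by
        apply ENNReal.rpow_le_rpow _ he
        rw [two_mul]
        exact add_le_add (le_max_left _ _) (le_max_right _ _)
    _ = 2 ^ e * max x y ^ e := ENNReal.mul_rpow_of_nonneg _ _ he
    _ ≤ 2 ^ e * (x ^ e + y ^ e) := by
        apply mul_le_mul_right
        rcases max_cases x y with ⟨h1, _⟩ | ⟨h1, _⟩ <;> rw [h1]
        · exact le_add_right le_rfl
        · exact le_add_left le_rfl

lemma avgPow_center {s : Set X} {f : X → ℝ} {q : ℝ} (hq : 1 < q)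
    (hf : IntegrableOn f s μ) (hs0 : μ s ≠ 0) (hsT : μ s ≠ ∞) (a : ℝ) :
    avgPow μ s (fun x => |f x - ⨍ y in s, f y ∂μ|) q ≤
      2 * avgPow μ s (fun x => |f x - a|) q := by
  have hq0 : (0:ℝ) < q := by linarith
  have hmeasf : AEMeasurable f (μ.restrict s) := hf.1.aemeasurable
  set c₀ := ⨍ y in s, f y ∂μ with hc₀def
  have hIntabs : IntegrableOn (fun x => |f x - a|) s μ :=
    (hf.sub (integrableOn_const (lt_top_iff_ne_top.mpr hsT).ne)).abs
  have habs : ENNReal.ofReal |a - c₀| ≤ avgPow μ s (fun x => |f x - a|) q := by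
    have h3 := ofReal_avg_diff_le hf hs0 hsT a
    rw [abs_sub_comm]
    refine h3.trans ?_
    exact avg_le_avgPow ((ENNReal.measurable_ofReal.comp
      ((continuous_abs.comp (continuous_id.sub continuous_const)).measurable)).comp_aemeasurable
      hmeasf) hq hs0 hsT
  have htri : avgPow μ s (fun x => |f x - c₀|) q ≤
      avgPow μ s (fun x => |f x - a|) q + avgPow μ s (fun _ => |a - c₀|) q := by
    apply avgPow_triangle (le_of_lt hq) _ _ hs0 hsT
    · intro x
      rw [← ENNReal.ofReal_add (abs_nonneg _) (abs_nonneg _)]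
      apply ENNReal.ofReal_le_ofReal
      calc |f x - c₀| = |(f x - a) + (a - c₀)| := by ring_nf
        _ ≤ |f x - a| + |a - c₀| := abs_add_le _ _
    · exact (ENNReal.measurable_ofReal.comp
        ((continuous_abs.comp (continuous_id.sub continuous_const)).measurable)).comp_aemeasurable
        hmeasf
    · exact aemeasurable_const
  calc avgPow μ s (fun x => |f x - c₀|) q
      ≤ avgPow μ s (fun x => |f x - a|) q + avgPow μ s (fun _ => |a - c₀|) q := htri
    _ = avgPow μ s (fun x => |f x - a|) q + ENNReal.ofReal |a - c₀| := by
        rw [avgPow_const hq0 hs0 hsT]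
    _ ≤ avgPow μ s (fun x => |f x - a|) q + avgPow μ s (fun x => |f x - a|) q :=
        add_le_add_right habs _
    _ = 2 * avgPow μ s (fun x => |f x - a|) q := (two_mul _).symm

end Helpers4

set_option maxHeartbeats 2000000 in
/-- a reverse-Hölder type inequality with factor `(1+ε)(1/2)^{1-1/q} < 1`
on small balls implies a `(q,p)`-Poincaré inequality. -/
theorem reverse_holder_implies_poincare
    {X : Type*} [MetricSpace X] [CompleteSpace X] [MeasurableSpace X] [BorelSpace X]
    (hgeo : IsGeodesicSpace X)
    (μ : Measure X) (c_μ : ℝ) (hc : 1 ≤ c_μ)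
    (hnt : ∀ (x : X) (r : ℝ), 0 < r → 0 < μ (ball x r) ∧ μ (ball x r) < ⊤)
    (hdbl : ∀ (x : X) (r : ℝ), 0 < r →
      μ (ball x (2 * r)) ≤ ENNReal.ofReal c_μ * μ (ball x r))
    (p q : ℝ) (hp : 1 ≤ p) (hq : 1 < q)
    (c τ' ε δ : ℝ) (hcpos : 0 < c) (hτ' : 1 ≤ τ') (hε : 0 < ε) (hδ : 0 < δ)
    (hcontr : (1 + ε) * (1 / 2 : ℝ) ^ (1 - 1 / q) < 1)
    (hsmall : ∀ (x₀ : X) (r : ℝ), 0 < r →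
      ENNReal.ofReal r ≤ ENNReal.ofReal δ * EMetric.diam (univ : Set X) →
      ∀ u g : X → ℝ, IsUpperGradient u g → (∀ x, 0 ≤ u x) →
        IntegrableOn u (ball x₀ (τ' * r)) μ →
        avgPow μ (ball x₀ r) u q ≤
          ENNReal.ofReal (c * r) * avgPow μ (ball x₀ (τ' * r)) g p +
            ENNReal.ofReal ((1 + ε) * ⨍ x in ball x₀ r, u x ∂μ)) :
    ∃ c_P > (0:ℝ), ∃ τ ≥ (1:ℝ), ∀ (x₀ : X) (r : ℝ), 0 < r →
      PoincareOn μ p q c_P τ x₀ r := by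
  classical
  have hq0 : (0:ℝ) < q := by linarith
  have hp0 : (0:ℝ) < p := by linarith
  have hκre_pos : 0 < (1 + ε) * (1/2 : ℝ) ^ (1 - 1/q) := by positivity
  have hθpos : 0 < 1 - (1 + ε) * (1/2:ℝ) ^ (1 - 1/q) := by linarith
  set C₁ : ℝ := 4 * c / (1 - (1 + ε) * (1/2:ℝ) ^ (1 - 1/q)) with hC₁def
  have hC₁pos : 0 < C₁ := by rw [hC₁def]; positivity
  have hB := lemmaB μ hnt p q hq c τ' ε δ hcpos hτ' hε hcontr hsmall
  by_cases hallsmall : ∀ r₀ : ℝ, 0 < r₀ →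
      ENNReal.ofReal r₀ ≤ ENNReal.ofReal δ * EMetric.diam (univ : Set X)
  · exact ⟨C₁, hC₁pos, τ', hτ', fun x₀ r hr u g hug hInt =>
      hB x₀ r hr (hallsmall r hr) u g hug hInt⟩
  push_neg at hallsmall
  obtain ⟨r₀, hr₀pos, hr₀big⟩ := hallsmall
  have hDfin : EMetric.diam (univ : Set X) ≠ ∞ := by
    intro h
    rw [h, ENNReal.mul_top (by simp [ENNReal.ofReal_eq_zero]; linarith)] at hr₀big
    exact (not_lt.mpr le_top) hr₀big
  rcases isEmpty_or_nonempty X with hX | hX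
  · exact ⟨C₁, hC₁pos, τ', hτ', fun x₀ => isEmptyElim x₀⟩
  have hbounded : Bornology.IsBounded (univ : Set X) := by
    rw [Metric.isBounded_iff_ediam_ne_top]; exact hDfin
  set D : ℝ := Metric.diam (univ : Set X) with hDdef
  have hediam : EMetric.diam (univ : Set X) = ENNReal.ofReal D :=
    (ENNReal.ofReal_toReal hDfin).symm
  have hD0 : 0 ≤ D := Metric.diam_nonneg
  set τ : ℝ := max τ' (2/δ) with hτdef
  have hττ' : τ' ≤ τ := le_max_left _ _
  have hτ1 : 1 ≤ τ := le_trans hτ' hττ'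
  have hτδ : 2/δ ≤ τ := le_max_right _ _
  obtain ⟨n₁, hn₁⟩ : ∃ n : ℕ, τ/τ' < 2^n := pow_unbounded_of_one_lt _ one_lt_two
  set c₂ : ℝ := (c_μ^n₁) ^ ((1:ℝ)/p) with hc₂def
  have hcμ0 : (0:ℝ) < c_μ := by linarith
  have hc₂pos : 0 < c₂ := by rw [hc₂def]; positivity
  rcases eq_or_lt_of_le hD0 with hD0' | hDpos
  · -- subsingleton space
    refine ⟨C₁, hC₁pos, τ, hτ1, fun x₀ r hr u g hug hInt => ?_⟩
    have hsubs : ∀ x y : X, x = y := fun x y => by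
      have h1 := Metric.dist_le_diam_of_mem hbounded (mem_univ x) (mem_univ y)
      rw [← hDdef, ← hD0'] at h1
      exact dist_le_zero.mp h1
    have huconst : u = fun _ => u x₀ := funext fun x => by rw [hsubs x x₀]
    have havg : (⨍ y in ball x₀ r, u y ∂μ) = u x₀ := by
      have huy : ∀ y, u y = u x₀ := fun y => by rw [hsubs y x₀]
      simp only [huy]
      exact setAverage_const (hnt x₀ r hr).1.ne' (hnt x₀ r hr).2.ne _
    have hLHS : avgPow μ (ball x₀ r) (fun x => |u x - ⨍ y in ball x₀ r, u y ∂μ|) q = 0 := by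
      unfold avgPow
      have h0 : ∀ x, ENNReal.ofReal (|u x - ⨍ y in ball x₀ r, u y ∂μ|) ^ q = 0 := by
        intro x
        rw [havg, hsubs x x₀, sub_self, abs_zero, ENNReal.ofReal_zero,
          ENNReal.zero_rpow_of_pos hq0]
      rw [lintegral_congr h0, lintegral_zero, ENNReal.zero_div,
        ENNReal.zero_rpow_of_pos (by positivity)]
    rw [hLHS]
    exact zero_le
  -- main bounded case, D > 0
  set s : ℝ := δ * D / 4 with hsdef
  have hs0 : 0 < s := by rw [hsdef]; positivity
  obtain ⟨n₀, hn₀⟩ : ∃ n : ℕ, D < 2^n * (s/2) := by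
    obtain ⟨n, hn⟩ := pow_unbounded_of_one_lt (D / (s/2)) one_lt_two
    refine ⟨n, ?_⟩
    rw [div_lt_iff₀ (by positivity)] at hn
    linarith
  set K : ℝ≥0∞ := (ENNReal.ofReal c_μ)^n₀ with hKdef
  have hcμ1' : (1:ℝ≥0∞) ≤ ENNReal.ofReal c_μ := by
    rw [← ENNReal.ofReal_one]; exact ENNReal.ofReal_le_ofReal hc
  have hK1 : (1:ℝ≥0∞) ≤ K := one_le_pow_of_one_le' hcμ1' n₀
  have hK0 : K ≠ 0 := fun h => by simp [h] at hK1
  have hKT : K ≠ ∞ := ENNReal.pow_ne_top ENNReal.ofReal_ne_top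
  have hcmp : ∀ (z : X) (R : ℝ), s/2 ≤ R → μ (univ : Set X) ≤ K * μ (ball z R) := by
    intro z R hR
    have h1 : (univ : Set X) ⊆ ball z (2^n₀ * (s/2)) := fun y _ =>
      mem_ball.mpr (lt_of_le_of_lt
        (Metric.dist_le_diam_of_mem hbounded (mem_univ y) (mem_univ z)) hn₀)
    calc μ (univ : Set X) ≤ μ (ball z (2^n₀ * (s/2))) := measure_mono h1
      _ ≤ K * μ (ball z (s/2)) := doubling_iter μ c_μ hdbl n₀ z (s/2) (by positivity)
      _ ≤ K * μ (ball z R) := mul_le_mul_right (measure_mono (ball_subset_ball hR)) _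
  obtain ⟨x1⟩ := hX
  have hμu0 : μ (univ : Set X) ≠ 0 := fun h =>
    (hnt x1 1 one_pos).1.ne' (le_antisymm (h ▸ measure_mono (subset_univ _)) (zero_le))
  have hμuT : μ (univ : Set X) ≠ ∞ := by
    have h1 : (univ : Set X) ⊆ ball x1 (D+1) := fun y _ =>
      mem_ball.mpr (lt_of_le_of_lt
        (Metric.dist_le_diam_of_mem hbounded (mem_univ y) (mem_univ x1)) (by linarith))
    exact ne_top_of_le_ne_top (hnt x1 (D+1) (by linarith)).2.ne (measure_mono h1)
  obtain ⟨F, hF⟩ := exists_net μ hs0 (m := μ (univ : Set X) / K)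
    (ENNReal.div_pos hμu0 hKT).ne' hμuT
    (fun z => by
      rw [ENNReal.div_le_iff_le_mul (Or.inl hK0) (Or.inl hKT), mul_comm]
      exact hcmp z (s/2) le_rfl)
  set N₀ : ℕ := ⌈D/s⌉₊ with hN₀def
  have hsmallrad : ∀ t : ℝ, t ≤ δ * D →
      ENNReal.ofReal t ≤ ENNReal.ofReal δ * EMetric.diam (univ : Set X) := by
    intro t ht
    rw [hediam, ← ENNReal.ofReal_mul hδ.le]
    exact ENNReal.ofReal_le_ofReal ht
  set Gfac : ℝ≥0∞ := K ^ ((1:ℝ)/p) with hGfacdef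
  set Λ₀ : ℝ≥0∞ := ENNReal.ofReal (C₁ * s) * Gfac with hΛ₀def
  set E₀ : ℝ≥0∞ := 2 * ((ENNReal.ofReal c_μ)^2 * (ENNReal.ofReal (C₁ * (2*s)) * Gfac)) with hE₀def
  set CH₀ : ℝ≥0∞ := (N₀ : ℝ≥0∞) * E₀ with hCH₀def
  set Ξ : ℝ≥0∞ := 2 * (K * ((F.card : ℝ≥0∞) * ((2:ℝ≥0∞)^q * (Λ₀^q + CH₀^q)))) ^ (1/q) with hΞdef
  have hGfacT : Gfac ≠ ∞ := ENNReal.rpow_ne_top_of_nonneg (by positivity) hKT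
  have hΛ₀T : Λ₀ ≠ ∞ := ENNReal.mul_ne_top ENNReal.ofReal_ne_top hGfacT
  have hE₀T : E₀ ≠ ∞ := by
    apply ENNReal.mul_ne_top (by norm_num)
    exact ENNReal.mul_ne_top (ENNReal.pow_ne_top ENNReal.ofReal_ne_top)
      (ENNReal.mul_ne_top ENNReal.ofReal_ne_top hGfacT)
  have hCH₀T : CH₀ ≠ ∞ := ENNReal.mul_ne_top (ENNReal.natCast_ne_top _) hE₀T
  have hΞT : Ξ ≠ ∞ := by
    apply ENNReal.mul_ne_top (by norm_num)
    apply ENNReal.rpow_ne_top_of_nonneg (by positivity)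
    apply ENNReal.mul_ne_top hKT
    apply ENNReal.mul_ne_top (ENNReal.natCast_ne_top _)
    apply ENNReal.mul_ne_top (ENNReal.rpow_ne_top_of_nonneg hq0.le (by norm_num))
    exact ENNReal.add_ne_top.mpr ⟨ENNReal.rpow_ne_top_of_nonneg hq0.le hΛ₀T,
      ENNReal.rpow_ne_top_of_nonneg hq0.le hCH₀T⟩
  set c_P : ℝ := max (C₁ * c₂) ((Ξ.toReal + 1)/(δ*D)) with hc_Pdef
  have hc_Ppos : 0 < c_P := lt_of_lt_of_le (by positivity) (le_max_left _ _)
  refine ⟨c_P, hc_Ppos, τ, hτ1, fun x₀ r hr u g hug hInt => ?_⟩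
  by_cases hrsmall : r ≤ δ * D
  · -- small radius branch
    have hτ'τr : ball x₀ (τ' * r) ⊆ ball x₀ (τ * r) :=
      ball_subset_ball (mul_le_mul_of_nonneg_right hττ' hr.le)
    have h1 := hB x₀ r hr (hsmallrad r hrsmall) u g hug (hInt.mono_set hτ'τr)
    have hμτ'0 : μ (ball x₀ (τ' * r)) ≠ 0 := (hnt x₀ _ (by positivity)).1.ne'
    have hμτ'T : μ (ball x₀ (τ' * r)) ≠ ∞ := (hnt x₀ _ (by positivity)).2.ne
    have hμτ0 : μ (ball x₀ (τ * r)) ≠ 0 := (hnt x₀ _ (by positivity : 0 < τ * r)).1.ne'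
    have hμτT : μ (ball x₀ (τ * r)) ≠ ∞ := (hnt x₀ _ (by positivity : 0 < τ * r)).2.ne
    have hτ'pos : (0:ℝ) < τ' := by linarith
    have h2 : avgPow μ (ball x₀ (τ'*r)) g p ≤
        ((ENNReal.ofReal c_μ)^n₁) ^ ((1:ℝ)/p) * avgPow μ (ball x₀ (τ*r)) g p := by
      apply avgPow_le_of_subset hp0 hτ'τr
        (pow_ne_zero _ (by rw [Ne, ENNReal.ofReal_eq_zero]; exact not_le.mpr hcμ0))
        (ENNReal.pow_ne_top ENNReal.ofReal_ne_top) hμτ0 hμτT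
      calc μ (ball x₀ (τ*r)) ≤ μ (ball x₀ (2^n₁*(τ'*r))) := by
            apply measure_mono (ball_subset_ball ?_)
            rw [div_lt_iff₀ hτ'pos] at hn₁
            nlinarith
        _ ≤ (ENNReal.ofReal c_μ)^n₁ * μ (ball x₀ (τ'*r)) :=
            doubling_iter μ c_μ hdbl n₁ x₀ (τ'*r) (by positivity)
    have h3 : ((ENNReal.ofReal c_μ)^n₁ : ℝ≥0∞) ^ ((1:ℝ)/p) = ENNReal.ofReal c₂ := by
      rw [← ENNReal.ofReal_pow hcμ0.le, ENNReal.ofReal_rpow_of_pos (by positivity), hc₂def]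
    calc avgPow μ (ball x₀ r) (fun x => |u x - ⨍ y in ball x₀ r, u y ∂μ|) q
        ≤ ENNReal.ofReal (C₁ * r) * avgPow μ (ball x₀ (τ'*r)) g p := h1
      _ ≤ ENNReal.ofReal (C₁ * r) *
          (ENNReal.ofReal c₂ * avgPow μ (ball x₀ (τ*r)) g p) := by
          rw [← h3]; exact mul_le_mul_right h2 _
      _ = (ENNReal.ofReal (C₁ * r) * ENNReal.ofReal c₂) * avgPow μ (ball x₀ (τ*r)) g p := by
          ring
      _ ≤ ENNReal.ofReal (c_P * r) * avgPow μ (ball x₀ (τ*r)) g p := by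
          apply mul_le_mul_left
          rw [← ENNReal.ofReal_mul (by positivity)]
          apply ENNReal.ofReal_le_ofReal
          have : C₁ * c₂ ≤ c_P := le_max_left _ _
          nlinarith
  · -- large radius branch
    push_neg at hrsmall
    have hballuniv : ball x₀ (τ * r) = univ := by
      apply eq_univ_of_forall
      intro y
      rw [mem_ball]
      have h1 : dist y x₀ ≤ D := Metric.dist_le_diam_of_mem hbounded (mem_univ y) (mem_univ x₀)
      have h2 : 2 * D ≤ τ * r := by
        have ha : (2/δ) * (δ*D) ≤ τ * r := by
          apply mul_le_mul hτδ hrsmall.le (by positivity) (by linarith)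
        calc 2*D = (2/δ)*(δ*D) := by field_simp
          _ ≤ τ * r := ha
      linarith
    rw [hballuniv] at hInt ⊢
    set Gu : ℝ≥0∞ := avgPow μ (univ : Set X) g p with hGudef
    set a : ℝ := ⨍ y in ball x₀ s, u y ∂μ with hadef
    have hμB0 : μ (ball x₀ r) ≠ 0 := (hnt x₀ r hr).1.ne'
    have hμBT : μ (ball x₀ r) ≠ ∞ := (hnt x₀ r hr).2.ne
    have hIntB : IntegrableOn u (ball x₀ r) μ := hInt.mono_set (subset_univ _)
    have hGb : ∀ (w : X) (t : ℝ), s/2 ≤ t →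
        avgPow μ (ball w (τ'*t)) g p ≤ Gfac * Gu := by
      intro w t ht
      have h4 : s/2 ≤ τ'*t := le_trans ht (le_mul_of_one_le_left
        (by linarith [hs0]) hτ')
      exact avgPow_le_of_subset hp0 (subset_univ _) hK0 hKT hμu0 hμuT (hcmp w (τ'*t) h4)
    have hPI : ∀ (w : X) (t : ℝ), 0 < t → s/2 ≤ t → t ≤ δ*D →
        avgPow μ (ball w t) (fun x => |u x - ⨍ y in ball w t, u y ∂μ|) q ≤
          ENNReal.ofReal (C₁*t) * (Gfac * Gu) := by
      intro w t ht0 hts htD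
      refine (hB w t ht0 (hsmallrad t htD) u g hug (hInt.mono_set (subset_univ _))).trans ?_
      exact mul_le_mul_right (hGb w t hts) _
    have hPnn : 0 < δ * D := mul_pos hδ hDpos
    have hnest : ∀ (w w' : X), dist w' w ≤ s →
        ENNReal.ofReal |(⨍ x in ball w' s, u x ∂μ) - ⨍ x in ball w (2*s), u x ∂μ| ≤
          (ENNReal.ofReal c_μ)^2 * (ENNReal.ofReal (C₁*(2*s)) * (Gfac * Gu)) := by
      intro w w' hd
      have h2s0 : (0:ℝ) < 2*s := by linarith
      have hPQ : ball w' s ⊆ ball w (2*s) := by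
        intro y hy
        rw [mem_ball] at hy ⊢
        have h3 := dist_triangle y w' w
        linarith
      have hμP0 : μ (ball w' s) ≠ 0 := (hnt w' s hs0).1.ne'
      have hμPT : μ (ball w' s) ≠ ∞ := (hnt w' s hs0).2.ne
      have hμQ0 : μ (ball w (2*s)) ≠ 0 := (hnt w (2*s) h2s0).1.ne'
      have hμQT : μ (ball w (2*s)) ≠ ∞ := (hnt w (2*s) h2s0).2.ne
      set b := ⨍ x in ball w (2*s), u x ∂μ with hbdef
      have h1 := ofReal_avg_diff_le (hInt.mono_set (subset_univ _) :
        IntegrableOn u (ball w' s) μ) hμP0 hμPT b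
      have hmeasQ : AEMeasurable (fun x => ENNReal.ofReal |u x - b|)
          (μ.restrict (ball w (2*s))) :=
        (ENNReal.measurable_ofReal.comp
          ((continuous_abs.comp (continuous_id.sub continuous_const)).measurable)).comp_aemeasurable
          ((hInt.mono_set (subset_univ _) : IntegrableOn u (ball w (2*s)) μ).1.aemeasurable)
      have h3 : (∫⁻ x in ball w (2*s), ENNReal.ofReal |u x - b| ∂μ) / μ (ball w (2*s)) ≤
          avgPow μ (ball w (2*s)) (fun x => |u x - b|) q :=
        avg_le_avgPow hmeasQ hq hμQ0 hμQT
      have h4 : avgPow μ (ball w (2*s)) (fun x => |u x - b|) q ≤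
          ENNReal.ofReal (C₁*(2*s)) * (Gfac * Gu) :=
        hPI w (2*s) h2s0 (by linarith) (by rw [hsdef]; linarith)
      have hratio : μ (ball w (2*s)) ≤ (ENNReal.ofReal c_μ)^2 * μ (ball w' s) := by
        have hsub4 : ball w (2*s) ⊆ ball w' (2^2*s) := by
          intro y hy
          rw [mem_ball] at hy ⊢
          have h5 := dist_triangle y w w'
          have h6 : dist w w' ≤ s := by rw [dist_comm]; exact hd
          norm_num
          linarith
        calc μ (ball w (2*s)) ≤ μ (ball w' (2^2*s)) := measure_mono hsub4
          _ ≤ (ENNReal.ofReal c_μ)^2 * μ (ball w' s) := doubling_iter μ c_μ hdbl 2 w' s hs0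
      have hIQ : (∫⁻ x in ball w' s, ENNReal.ofReal |u x - b| ∂μ) ≤
          ∫⁻ x in ball w (2*s), ENNReal.ofReal |u x - b| ∂μ :=
        lintegral_mono' (Measure.restrict_mono hPQ le_rfl) le_rfl
      refine h1.trans ?_
      have hsplit : (∫⁻ x in ball w (2*s), ENNReal.ofReal |u x - b| ∂μ) / μ (ball w' s) =
          ((∫⁻ x in ball w (2*s), ENNReal.ofReal |u x - b| ∂μ) / μ (ball w (2*s))) *
            (μ (ball w (2*s)) / μ (ball w' s)) := by
        rw [div_eq_mul_inv, div_eq_mul_inv, div_eq_mul_inv, mul_assoc,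
          ← mul_assoc (μ (ball w (2*s)))⁻¹, ENNReal.inv_mul_cancel hμQ0 hμQT, one_mul]
      calc (∫⁻ x in ball w' s, ENNReal.ofReal |u x - b| ∂μ) / μ (ball w' s)
          ≤ (∫⁻ x in ball w (2*s), ENNReal.ofReal |u x - b| ∂μ) / μ (ball w' s) :=
            ENNReal.div_le_div hIQ le_rfl
        _ = _ := hsplit
        _ ≤ (ENNReal.ofReal (C₁*(2*s)) * (Gfac * Gu)) * (ENNReal.ofReal c_μ)^2 :=
            mul_le_mul' (h3.trans h4) (ENNReal.div_le_of_le_mul hratio)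
        _ = (ENNReal.ofReal c_μ)^2 * (ENNReal.ofReal (C₁*(2*s)) * (Gfac * Gu)) := mul_comm _ _
    have hchain : ∀ y z : X,
        ENNReal.ofReal |(⨍ x in ball y s, u x ∂μ) - ⨍ x in ball z s, u x ∂μ| ≤ CH₀ * Gu := by
      intro y z
      obtain ⟨γ, hγ0, hγd, hγiso⟩ := hgeo y z
      have hL0 : 0 ≤ dist y z := dist_nonneg
      set L := dist y z with hLdef
      set n := ⌈L/s⌉₊ with hndef
      set w : ℕ → X := fun i => γ (min ((i:ℝ)*s) L) with hwdef
      have hmem : ∀ i : ℕ, min ((i:ℝ)*s) L ∈ Icc (0:ℝ) L := fun i =>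
        ⟨le_min (by positivity) hL0, min_le_right _ _⟩
      have hw0 : w 0 = y := by
        rw [hwdef]
        simp only [Nat.cast_zero, zero_mul, min_eq_left hL0]
        exact hγ0
      have hwn : w n = z := by
        have h1 : L ≤ (n:ℝ)*s := by
          have h2 := Nat.le_ceil (L/s)
          calc L = (L/s)*s := by field_simp
            _ ≤ (n:ℝ)*s := mul_le_mul_of_nonneg_right h2 hs0.le
        rw [hwdef]
        simp only [min_eq_right h1]
        exact hγd
      have hwd : ∀ i : ℕ, dist (w (i+1)) (w i) ≤ s := by
        intro i
        rw [hwdef]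
        simp only
        rw [hγiso _ (hmem (i+1)) _ (hmem i)]
        push_cast
        have h5 := (lipschitz_min_trunc L).dist_le_mul (((i:ℝ)+1)*s) ((i:ℝ)*s)
        rw [Real.dist_eq, Real.dist_eq, NNReal.coe_one, one_mul] at h5
        calc |min (((i:ℝ)+1)*s) L - min ((i:ℝ)*s) L| ≤ |((i:ℝ)+1)*s - (i:ℝ)*s| := h5
          _ = s := by rw [show ((i:ℝ)+1)*s - (i:ℝ)*s = s by ring, abs_of_nonneg hs0.le]
      set A : ℕ → ℝ := fun i => ⨍ x in ball (w i) s, u x ∂μ with hAdef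
      have hlink : ∀ i : ℕ, ENNReal.ofReal |A i - A (i+1)| ≤ E₀ * Gu := by
        intro i
        have hb1 := hnest (w i) (w i) (by rw [dist_self]; exact hs0.le)
        have hb2 := hnest (w i) (w (i+1)) (hwd i)
        have htri2 : |A i - A (i+1)| ≤
            |A i - ⨍ x in ball (w i) (2*s), u x ∂μ| +
            |A (i+1) - ⨍ x in ball (w i) (2*s), u x ∂μ| := by
          have h7 := abs_sub_le (A i) (⨍ x in ball (w i) (2*s), u x ∂μ) (A (i+1))
          rw [abs_sub_comm (⨍ x in ball (w i) (2*s), u x ∂μ) (A (i+1))] at h7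
          exact h7
        calc ENNReal.ofReal |A i - A (i+1)| ≤
            ENNReal.ofReal (|A i - ⨍ x in ball (w i) (2*s), u x ∂μ| +
              |A (i+1) - ⨍ x in ball (w i) (2*s), u x ∂μ|) := ENNReal.ofReal_le_ofReal htri2
          _ = ENNReal.ofReal |A i - ⨍ x in ball (w i) (2*s), u x ∂μ| +
              ENNReal.ofReal |A (i+1) - ⨍ x in ball (w i) (2*s), u x ∂μ| :=
              ENNReal.ofReal_add (abs_nonneg _) (abs_nonneg _)
          _ ≤ (ENNReal.ofReal c_μ)^2 * (ENNReal.ofReal (C₁*(2*s)) * (Gfac * Gu)) +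
              (ENNReal.ofReal c_μ)^2 * (ENNReal.ofReal (C₁*(2*s)) * (Gfac * Gu)) :=
              add_le_add hb1 hb2
          _ = E₀ * Gu := by rw [hE₀def]; ring
      have htel : |A 0 - A n| ≤ ∑ i ∈ Finset.range n, |A i - A (i+1)| := by
        have h1 : A n - A 0 = ∑ i ∈ Finset.range n, (A (i+1) - A i) :=
          (Finset.sum_range_sub A n).symm
        calc |A 0 - A n| = |A n - A 0| := abs_sub_comm _ _
          _ = |∑ i ∈ Finset.range n, (A (i+1) - A i)| := by rw [h1]
          _ ≤ ∑ i ∈ Finset.range n, |A (i+1) - A i| := Finset.abs_sum_le_sum_abs _ _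
          _ = ∑ i ∈ Finset.range n, |A i - A (i+1)| := by
              refine Finset.sum_congr rfl fun i _ => ?_
              rw [abs_sub_comm]
      have hLD : L ≤ D := Metric.dist_le_diam_of_mem hbounded (mem_univ y) (mem_univ z)
      have hnN : n ≤ N₀ := Nat.ceil_le_ceil (by gcongr)
      have hfinal : ENNReal.ofReal |A 0 - A n| ≤ CH₀ * Gu := by
        calc ENNReal.ofReal |A 0 - A n|
            ≤ ENNReal.ofReal (∑ i ∈ Finset.range n, |A i - A (i+1)|) :=
              ENNReal.ofReal_le_ofReal htel
          _ = ∑ i ∈ Finset.range n, ENNReal.ofReal |A i - A (i+1)| :=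
              ENNReal.ofReal_sum_of_nonneg (fun i _ => abs_nonneg _)
          _ ≤ ∑ _i ∈ Finset.range n, E₀ * Gu := Finset.sum_le_sum fun i _ => hlink i
          _ = (n:ℝ≥0∞) * (E₀ * Gu) := by rw [Finset.sum_const, Finset.card_range, nsmul_eq_mul]
          _ ≤ (N₀:ℝ≥0∞) * (E₀ * Gu) := mul_le_mul_left (by exact_mod_cast hnN) _
          _ = CH₀ * Gu := by rw [hCH₀def]; ring
      rw [← hw0, ← hwn]
      exact hfinal
    have hperball : ∀ z : X, (∫⁻ x in ball z s, ENNReal.ofReal |u x - a| ^ q ∂μ) ≤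
        (2:ℝ≥0∞)^q * ((Λ₀*Gu)^q + (CH₀*Gu)^q) * μ (univ : Set X) := by
      intro z
      have hz0 : μ (ball z s) ≠ 0 := (hnt z s hs0).1.ne'
      have hzT : μ (ball z s) ≠ ∞ := (hnt z s hs0).2.ne
      set bz := ⨍ x in ball z s, u x ∂μ with hbzdef
      have hptw : ∀ x, ENNReal.ofReal |u x - a| ^ q ≤
          (2:ℝ≥0∞)^q * (ENNReal.ofReal |u x - bz| ^ q + ENNReal.ofReal |bz - a| ^ q) := by
        intro x
        have h1 : ENNReal.ofReal |u x - a| ≤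
            ENNReal.ofReal |u x - bz| + ENNReal.ofReal |bz - a| := by
          rw [← ENNReal.ofReal_add (abs_nonneg _) (abs_nonneg _)]
          apply ENNReal.ofReal_le_ofReal
          calc |u x - a| = |(u x - bz) + (bz - a)| := by ring_nf
            _ ≤ |u x - bz| + |bz - a| := abs_add_le _ _
        exact le_trans (ENNReal.rpow_le_rpow h1 hq0.le) (rpow_add_le_two_rpow _ _ hq0.le)
      have hmeasz : AEMeasurable (fun x => ENNReal.ofReal |u x - bz| ^ q)
          (μ.restrict (ball z s)) :=
        ((ENNReal.continuous_rpow_const.comp (ENNReal.continuous_ofReal.comp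
          (continuous_abs.comp (continuous_id.sub continuous_const)))).measurable).comp_aemeasurable
          ((hInt.mono_set (subset_univ _) : IntegrableOn u (ball z s) μ).1.aemeasurable)
      have hterm1 : (∫⁻ x in ball z s, ENNReal.ofReal |u x - bz| ^ q ∂μ) ≤
          (Λ₀*Gu)^q * μ (ball z s) := by
        apply lintegral_le_of_avgPow_le hq0 hz0 hzT
        refine (hPI z s hs0 (by linarith) (by rw [hsdef]; linarith)).trans (le_of_eq ?_)
        rw [hΛ₀def]; ring
      have hterm2 : ENNReal.ofReal |bz - a| ^ q ≤ (CH₀*Gu)^q :=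
        ENNReal.rpow_le_rpow (hchain z x₀) hq0.le
      calc (∫⁻ x in ball z s, ENNReal.ofReal |u x - a| ^ q ∂μ)
          ≤ ∫⁻ x in ball z s,
              (2:ℝ≥0∞)^q * (ENNReal.ofReal |u x - bz| ^ q + ENNReal.ofReal |bz - a| ^ q) ∂μ :=
            lintegral_mono hptw
        _ = (2:ℝ≥0∞)^q * ((∫⁻ x in ball z s, ENNReal.ofReal |u x - bz| ^ q ∂μ) +
              ENNReal.ofReal |bz - a| ^ q * μ (ball z s)) := by
            rw [lintegral_const_mul' _ _ (ENNReal.rpow_ne_top_of_nonneg hq0.le (by norm_num)),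
              lintegral_add_left' hmeasz, setLIntegral_const]
        _ ≤ (2:ℝ≥0∞)^q * ((Λ₀*Gu)^q * μ (ball z s) + (CH₀*Gu)^q * μ (ball z s)) :=
            mul_le_mul_right (add_le_add hterm1 (mul_le_mul_left hterm2 _)) _
        _ ≤ (2:ℝ≥0∞)^q * ((Λ₀*Gu)^q * μ (univ : Set X) + (CH₀*Gu)^q * μ (univ : Set X)) :=
            mul_le_mul_right (add_le_add
              (mul_le_mul_right (measure_mono (subset_univ _)) _)
              (mul_le_mul_right (measure_mono (subset_univ _)) _)) _
        _ = (2:ℝ≥0∞)^q * ((Λ₀*Gu)^q + (CH₀*Gu)^q) * μ (univ : Set X) := by ring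
    have huniveq : (⋃ z ∈ F, ball z s) = univ := by
      apply eq_univ_of_forall
      intro y
      obtain ⟨x, hxF, hxd⟩ := hF y
      exact mem_biUnion hxF (mem_ball.mpr hxd)
    have hJ : (∫⁻ x in ball x₀ r, ENNReal.ofReal |u x - a| ^ q ∂μ) ≤
        (F.card : ℝ≥0∞) * ((2:ℝ≥0∞)^q * ((Λ₀*Gu)^q + (CH₀*Gu)^q) * μ (univ : Set X)) := by
      calc (∫⁻ x in ball x₀ r, ENNReal.ofReal |u x - a| ^ q ∂μ)
          ≤ ∫⁻ x in ⋃ z ∈ F, ball z s, ENNReal.ofReal |u x - a| ^ q ∂μ := by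
            rw [huniveq]
            exact lintegral_mono' (Measure.restrict_mono (subset_univ _) le_rfl) le_rfl
        _ ≤ ∑ z ∈ F, ∫⁻ x in ball z s, ENNReal.ofReal |u x - a| ^ q ∂μ := by
            have hswap : (⋃ z ∈ F, ball z s) = ⋃ z : F, ball (z : X) s := by
              ext x; simp
            rw [hswap]
            refine le_trans (lintegral_iUnion_le _ _) ?_
            rw [tsum_fintype]
            exact le_of_eq (Finset.sum_coe_sort F
              (fun z => ∫⁻ x in ball z s, ENNReal.ofReal |u x - a| ^ q ∂μ))
        _ ≤ ∑ _z ∈ F, (2:ℝ≥0∞)^q * ((Λ₀*Gu)^q + (CH₀*Gu)^q) * μ (univ : Set X) :=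
            Finset.sum_le_sum fun z _ => hperball z
        _ = (F.card : ℝ≥0∞) * ((2:ℝ≥0∞)^q * ((Λ₀*Gu)^q + (CH₀*Gu)^q) * μ (univ : Set X)) := by
            rw [Finset.sum_const, nsmul_eq_mul]
    have hcmpB : μ (univ : Set X) ≤ K * μ (ball x₀ r) := by
      apply hcmp x₀ r
      rw [hsdef]
      linarith
    have h5 : avgPow μ (ball x₀ r) (fun x => |u x - a|) q ≤
        (K * ((F.card:ℝ≥0∞) * ((2:ℝ≥0∞)^q * ((Λ₀*Gu)^q + (CH₀*Gu)^q)))) ^ (1/q) := by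
      unfold avgPow
      apply ENNReal.rpow_le_rpow _ (by positivity)
      calc (∫⁻ x in ball x₀ r, ENNReal.ofReal |u x - a| ^ q ∂μ) / μ (ball x₀ r)
          ≤ ((F.card : ℝ≥0∞) * ((2:ℝ≥0∞)^q * ((Λ₀*Gu)^q + (CH₀*Gu)^q) * μ (univ : Set X))) /
              μ (ball x₀ r) := ENNReal.div_le_div hJ le_rfl
        _ ≤ ((F.card : ℝ≥0∞) * ((2:ℝ≥0∞)^q * ((Λ₀*Gu)^q + (CH₀*Gu)^q) * (K * μ (ball x₀ r)))) /
              μ (ball x₀ r) :=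
            ENNReal.div_le_div (mul_le_mul_right (mul_le_mul_right hcmpB _) _) le_rfl
        _ = (K * ((F.card:ℝ≥0∞) * ((2:ℝ≥0∞)^q * ((Λ₀*Gu)^q + (CH₀*Gu)^q)))) *
              (μ (ball x₀ r) / μ (ball x₀ r)) := by
            simp only [div_eq_mul_inv]; ring
        _ = K * ((F.card:ℝ≥0∞) * ((2:ℝ≥0∞)^q * ((Λ₀*Gu)^q + (CH₀*Gu)^q))) := by
            rw [ENNReal.div_self hμB0 hμBT, mul_one]
    have hfactor : (K * ((F.card:ℝ≥0∞) * ((2:ℝ≥0∞)^q * ((Λ₀*Gu)^q + (CH₀*Gu)^q)))) ^ (1/q)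
        = (K * ((F.card:ℝ≥0∞) * ((2:ℝ≥0∞)^q * (Λ₀^q + CH₀^q)))) ^ (1/q) * Gu := by
      have h7 : K * ((F.card:ℝ≥0∞) * ((2:ℝ≥0∞)^q * ((Λ₀*Gu)^q + (CH₀*Gu)^q))) =
          (K * ((F.card:ℝ≥0∞) * ((2:ℝ≥0∞)^q * (Λ₀^q + CH₀^q)))) * Gu^q := by
        rw [ENNReal.mul_rpow_of_nonneg Λ₀ Gu hq0.le, ENNReal.mul_rpow_of_nonneg CH₀ Gu hq0.le]
        ring
      rw [h7, ENNReal.mul_rpow_of_nonneg _ _ (by positivity), rpow_rpow_one_div hq0.ne']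
    have hΞle : Ξ ≤ ENNReal.ofReal (c_P * r) := by
      have h9 : (Ξ.toReal + 1)/(δ*D) ≤ c_P := le_max_right _ _
      have hTnn : (0:ℝ) ≤ Ξ.toReal := ENNReal.toReal_nonneg
      have h8 : (Ξ.toReal + 1) ≤ c_P * r := by
        have h10 : (Ξ.toReal + 1) = ((Ξ.toReal + 1)/(δ*D)) * (δ*D) := by field_simp
        calc Ξ.toReal + 1 = ((Ξ.toReal + 1)/(δ*D)) * (δ*D) := h10
          _ ≤ c_P * (δ*D) := mul_le_mul_of_nonneg_right h9 hPnn.le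
          _ ≤ c_P * r := mul_le_mul_of_nonneg_left hrsmall.le hc_Ppos.le
      calc Ξ = ENNReal.ofReal (Ξ.toReal) := (ENNReal.ofReal_toReal hΞT).symm
        _ ≤ ENNReal.ofReal (Ξ.toReal + 1) := ENNReal.ofReal_le_ofReal (by linarith)
        _ ≤ ENNReal.ofReal (c_P * r) := ENNReal.ofReal_le_ofReal h8
    calc avgPow μ (ball x₀ r) (fun x => |u x - ⨍ y in ball x₀ r, u y ∂μ|) q
        ≤ 2 * avgPow μ (ball x₀ r) (fun x => |u x - a|) q :=
          avgPow_center hq hIntB hμB0 hμBT a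
      _ ≤ 2 * ((K * ((F.card:ℝ≥0∞) * ((2:ℝ≥0∞)^q * (Λ₀^q + CH₀^q)))) ^ (1/q) * Gu) := by
          apply mul_le_mul_right
          exact h5.trans (le_of_eq hfactor)
      _ = Ξ * Gu := by rw [hΞdef]; ring
      _ ≤ ENNReal.ofReal (c_P * r) * Gu := mul_le_mul_left hΞle _
end

section
/- Assume \mu is doubling, 1 \leq p < \infty, 1 < q < \infty, a (q,p)-Poincar\'e inequality holds in (X,d,\mu), and let u \in N^{1,p}(X) satisfy \mu(\{|u| > 0\} \cap B(x_0,r)) \leq \gamma\, \mu(B(x_0,r)) for some 0 < \gamma < 1. Then there is a constant c depending on c_\mu, c_P, p, q, \gamma such that (\fint_{B(x_0,r)} |u|^q\,d\mu)^{1/q} \leq c\,r\,(\fint_{B(x_0,\tau r)} g_u^p\,d\mu)^{1/p}. -/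
open MeasureTheory Metric Set
open scoped ENNReal

/-- under doubling and a `(q,p)`-Poincaré inequality, a function vanishing
on a large portion of a ball satisfies the Sobolev-type inequality
`(⨍_B |u|^q)^{1/q} ≤ c r (⨍_{τB} g_u^p)^{1/p}`. -/
theorem poincare_for_functions_vanishing_on_large_set
    {X : Type*} [MetricSpace X] [MeasurableSpace X] [BorelSpace X]
    (μ : Measure X) (c_μ : ℝ) (hc : 1 ≤ c_μ)
    (hnt : ∀ (x : X) (r : ℝ), 0 < r → 0 < μ (ball x r) ∧ μ (ball x r) < ⊤)
    (hdbl : ∀ (x : X) (r : ℝ), 0 < r →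
      μ (ball x (2 * r)) ≤ ENNReal.ofReal c_μ * μ (ball x r))
    (p q : ℝ) (hp : 1 ≤ p) (hq : 1 < q)
    (c_P τ : ℝ) (hcP : 0 < c_P) (hτ : 1 ≤ τ)
    (hP : ∀ (x₀ : X) (r : ℝ), 0 < r → PoincareOn μ p q c_P τ x₀ r)
    (γ : ℝ) (hγ0 : 0 < γ) (hγ1 : γ < 1) :
    ∃ c > (0:ℝ), ∀ (x₀ : X) (r : ℝ) (u g : X → ℝ), 0 < r →
      IsUpperGradient u g → IntegrableOn u (ball x₀ (τ * r)) μ →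
      μ ({x | u x ≠ 0} ∩ ball x₀ r) ≤ ENNReal.ofReal γ * μ (ball x₀ r) →
      avgPow μ (ball x₀ r) (fun x => |u x|) q ≤
        ENNReal.ofReal (c * r) * avgPow μ (ball x₀ (τ * r)) g p := by

  -- basic exponent facts
  have hq0 : (0:ℝ) < q := lt_trans one_pos hq
  have hq0' : q ≠ 0 := ne_of_gt hq0
  have he : (0:ℝ) < 1 - 1/q := by
    have h1 : 1/q < 1 := by rw [div_lt_one hq0]; exact hq
    linarith
  set γ₂ : ℝ := γ ^ (1 - 1/q) with hγ₂def
  have hγ₂1 : γ₂ < 1 := Real.rpow_lt_one hγ0.le hγ1 he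
  have hγ₂0 : 0 < γ₂ := Real.rpow_pos_of_pos hγ0 _
  refine ⟨c_P / (1 - γ₂), div_pos hcP (by linarith), ?_⟩
  intro x₀ r u g hr hug hint hsmall
  set B := ball x₀ r with hB
  set B' := ball x₀ (τ * r) with hB'
  have hrτ : r ≤ τ * r := le_mul_of_one_le_left hr.le hτ
  have hBB' : B ⊆ B' := ball_subset_ball hrτ
  obtain ⟨hμB0, hμBt⟩ := hnt x₀ r hr
  have hμB0' : μ B ≠ 0 := hμB0.ne'
  have hμBt' : μ B ≠ ⊤ := hμBt.ne
  have hb0 : (μ B) ^ (1/q : ℝ) ≠ 0 := (ENNReal.rpow_pos hμB0 hμBt').ne'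
  have hbt : (μ B) ^ (1/q : ℝ) ≠ ⊤ :=
    (ENNReal.rpow_lt_top_of_nonneg (by positivity) hμBt').ne
  have hBint : IntegrableOn u B μ := hint.mono_set hBB'
  have huae : AEMeasurable u (μ.restrict B) := hBint.aestronglyMeasurable.aemeasurable
  set c₀ := ⨍ y in B, u y ∂μ with hc₀
  set F : X → ℝ≥0∞ := fun x => ENNReal.ofReal |u x| with hF
  set G : X → ℝ≥0∞ := fun x => ENNReal.ofReal |u x - c₀| with hG
  have hFae : AEMeasurable F (μ.restrict B) :=
    ENNReal.measurable_ofReal.comp_aemeasurable (continuous_abs.measurable.comp_aemeasurable huae)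
  have hGae : AEMeasurable G (μ.restrict B) :=
    ENNReal.measurable_ofReal.comp_aemeasurable (continuous_abs.measurable.comp_aemeasurable (huae.sub aemeasurable_const))
  set L := (∫⁻ x in B, F x ^ q ∂μ) ^ (1/q : ℝ) with hL
  set Dn := (∫⁻ x in B, G x ^ q ∂μ) ^ (1/q : ℝ) with hDn
  set M := ENNReal.ofReal |c₀| with hM
  -- triangle inequality step
  have h_tri : L ≤ Dn + M * μ B ^ (1/q : ℝ) := by
    have hpt : ∀ x, F x ≤ G x + M := by
      intro x
      rw [hF, hG, hM, ← ENNReal.ofReal_add (abs_nonneg _) (abs_nonneg _)]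
      refine ENNReal.ofReal_le_ofReal ?_
      calc |u x| = |(u x - c₀) + c₀| := by ring_nf
        _ ≤ |u x - c₀| + |c₀| := abs_add_le _ _
    calc L ≤ (∫⁻ x in B, (G x + M) ^ q ∂μ) ^ (1/q : ℝ) := by
          refine ENNReal.rpow_le_rpow ?_ (by positivity)
          exact lintegral_mono fun x => ENNReal.rpow_le_rpow (hpt x) hq0.le
      _ ≤ Dn + (∫⁻ _x in B, M ^ q ∂μ) ^ (1/q : ℝ) :=
          ENNReal.lintegral_Lp_add_le hGae aemeasurable_const hq.le
      _ = Dn + M * μ B ^ (1/q : ℝ) := by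
          rw [lintegral_const, Measure.restrict_apply_univ,
            ENNReal.mul_rpow_of_nonneg _ _ (by positivity : (0:ℝ) ≤ 1/q),
            ← ENNReal.rpow_mul, mul_one_div_cancel hq0', ENNReal.rpow_one]
  -- average bound: M * μ B ≤ ∫⁻ F
  have hIntAbs : IntegrableOn (fun x => |u x|) B μ := hBint.abs
  have havg : |c₀| ≤ ⨍ x in B, |u x| ∂μ := by
    rw [hc₀]
    calc |⨍ y in B, u y ∂μ| = ‖∫ y, u y ∂((μ.restrict B) Set.univ)⁻¹ • μ.restrict B‖ := by
          rw [average_eq']; exact (Real.norm_eq_abs _).symm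
      _ ≤ ∫ y, ‖u y‖ ∂((μ.restrict B) Set.univ)⁻¹ • μ.restrict B :=
          norm_integral_le_integral_norm _
      _ = ⨍ x in B, |u x| ∂μ := by
          rw [average_eq']
          simp [Real.norm_eq_abs]
  have hI1 : ENNReal.ofReal (∫ x in B, |u x| ∂μ) = ∫⁻ x in B, F x ∂μ :=
    MeasureTheory.ofReal_integral_eq_lintegral_ofReal hIntAbs
      (ae_of_all _ fun x => abs_nonneg _)
  have hMμ : M * μ B ≤ ∫⁻ x in B, F x ∂μ := by
    have h2 : ⨍ x in B, |u x| ∂μ = (μ B).toReal⁻¹ * ∫ x in B, |u x| ∂μ := by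
      rw [setAverage_eq]; simp [smul_eq_mul]; exact Or.inl rfl
    have h1 : M ≤ ENNReal.ofReal ((μ B).toReal⁻¹ * ∫ x in B, |u x| ∂μ) := by
      rw [← h2]; exact ENNReal.ofReal_le_ofReal havg
    have htR : (0:ℝ) < (μ B).toReal := ENNReal.toReal_pos hμB0' hμBt'
    calc M * μ B ≤ ENNReal.ofReal ((μ B).toReal⁻¹ * ∫ x in B, |u x| ∂μ) * μ B :=
          mul_le_mul_left h1 _
      _ = (μ B)⁻¹ * (∫⁻ x in B, F x ∂μ) * μ B := by
          rw [ENNReal.ofReal_mul (by positivity), ENNReal.ofReal_inv_of_pos htR,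
            ENNReal.ofReal_toReal hμBt', hI1]
      _ = (∫⁻ x in B, F x ∂μ) * ((μ B)⁻¹ * μ B) := by ring
      _ = ∫⁻ x in B, F x ∂μ := by
          rw [ENNReal.inv_mul_cancel hμB0' hμBt', mul_one]
  -- Hölder step
  set S := {x | u x ≠ 0} with hS
  set t := toMeasurable (μ.restrict B) S with ht
  have htm : MeasurableSet t := measurableSet_toMeasurable _ _
  set q' := q / (q - 1) with hq'def
  have hq1 : q - 1 ≠ 0 := by linarith
  have hconj : q.HolderConjugate q' := Real.holderConjugate_iff.mpr ⟨hq, by rw [hq'def, inv_div]; field_simp; ring⟩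
  have hinvq' : 1 / q' = 1 - 1/q := by
    rw [hq'def, one_div, inv_div]; field_simp
  have hind : AEMeasurable (t.indicator (1 : X → ℝ≥0∞)) (μ.restrict B) :=
    (measurable_const.indicator htm).aemeasurable
  have hFle : ∀ x, F x ≤ F x * t.indicator (1 : X → ℝ≥0∞) x := by
    intro x
    by_cases hx : x ∈ S
    · have hxt : x ∈ t := subset_toMeasurable _ _ hx
      simp [Set.indicator_of_mem hxt]
    · have hux : u x = 0 := not_not.mp hx
      simp [hF, hux]
  have hq'pos : (0:ℝ) < q' := hconj.symm.pos
  have hindpow : ∫⁻ x in B, (t.indicator (1 : X → ℝ≥0∞) x) ^ q' ∂μ = μ (S ∩ B) := by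
    have hptw : ∀ x, (t.indicator (1 : X → ℝ≥0∞) x) ^ q' =
        t.indicator (1 : X → ℝ≥0∞) x := by
      intro x
      by_cases hx : x ∈ t
      · simp [Set.indicator_of_mem hx]
      · simp [Set.indicator_of_notMem hx, ENNReal.zero_rpow_of_pos hq'pos]
    rw [lintegral_congr hptw, lintegral_indicator_one htm, ht, measure_toMeasurable,
      Measure.restrict_apply' measurableSet_ball]
  have hHolder2 : (∫⁻ x in B, F x ∂μ) ≤ L * (μ (S ∩ B)) ^ (1 - 1/q) := by
    calc (∫⁻ x in B, F x ∂μ)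
        ≤ ∫⁻ x in B, (F * t.indicator (1 : X → ℝ≥0∞)) x ∂μ :=
          lintegral_mono fun x => hFle x
      _ ≤ (∫⁻ x in B, F x ^ q ∂μ) ^ (1/q : ℝ) *
          (∫⁻ x in B, (t.indicator (1 : X → ℝ≥0∞) x) ^ q' ∂μ) ^ (1/q') :=
          ENNReal.lintegral_mul_le_Lp_mul_Lq (μ.restrict B) hconj hFae hind
      _ = L * (μ (S ∩ B)) ^ (1 - 1/q) := by rw [hindpow, hinvq', hL]
  -- combining: M * μB^{1/q} ≤ γ₂ L
  have hMstep : M * μ B ^ (1/q : ℝ) ≤ ENNReal.ofReal γ₂ * L := by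
    have h3 : μ (S ∩ B) ^ (1 - 1/q) ≤
        (ENNReal.ofReal γ) ^ (1 - 1/q) * μ B ^ (1 - 1/q) := by
      rw [← ENNReal.mul_rpow_of_nonneg _ _ he.le]
      exact ENNReal.rpow_le_rpow hsmall he.le
    have h4 : M * μ B ≤ ENNReal.ofReal γ₂ * L * μ B ^ (1 - 1/q) := by
      calc M * μ B ≤ ∫⁻ x in B, F x ∂μ := hMμ
        _ ≤ L * (μ (S ∩ B)) ^ (1 - 1/q) := hHolder2
        _ ≤ L * ((ENNReal.ofReal γ) ^ (1 - 1/q) * μ B ^ (1 - 1/q)) :=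
            mul_le_mul_right h3 _
        _ = ENNReal.ofReal γ₂ * L * μ B ^ (1 - 1/q) := by
            rw [ENNReal.ofReal_rpow_of_pos hγ0, ← hγ₂def]; ring
    have hsplit : μ B = μ B ^ ((1:ℝ) - 1/q) * μ B ^ (1/q : ℝ) := by
      rw [← ENNReal.rpow_add _ _ hμB0' hμBt']
      norm_num
    have he0 : (μ B) ^ ((1:ℝ) - 1/q) ≠ 0 := (ENNReal.rpow_pos hμB0 hμBt').ne'
    have heT : (μ B) ^ ((1:ℝ) - 1/q) ≠ ⊤ :=
      (ENNReal.rpow_lt_top_of_nonneg he.le hμBt').ne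
    refine (ENNReal.mul_le_mul_iff_left he0 heT).mp ?_
    calc M * μ B ^ (1/q : ℝ) * μ B ^ ((1:ℝ) - 1/q)
        = M * μ B := by
          rw [mul_assoc, ← ENNReal.rpow_add _ _ hμB0' hμBt']
          norm_num
      _ ≤ ENNReal.ofReal γ₂ * L * μ B ^ ((1:ℝ) - 1/q) := h4
  -- Poincaré inequality
  have hD := hP x₀ r hr u g hug hint
  rw [← hB, ← hB', ← hc₀] at hD
  set P := avgPow μ B' g p with hPdef
  have hDn_eq : avgPow μ B (fun x => |u x - c₀|) q = Dn / μ B ^ (1/q : ℝ) := by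
    rw [avgPow, ENNReal.div_rpow_of_nonneg _ _ (by positivity : (0:ℝ) ≤ 1/q)]
  have hA_eq : avgPow μ B (fun x => |u x|) q = L / μ B ^ (1/q : ℝ) := by
    rw [avgPow, ENNReal.div_rpow_of_nonneg _ _ (by positivity : (0:ℝ) ≤ 1/q)]
  rw [hA_eq, ENNReal.div_le_iff hb0 hbt]
  have hcr0 : (0:ℝ) < c_P / (1 - γ₂) * r := by
    have : (0:ℝ) < 1 - γ₂ := by linarith
    positivity
  by_cases hPtop : P = ⊤
  · have h5 : ENNReal.ofReal (c_P / (1 - γ₂) * r) * P = ⊤ := by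
      rw [hPtop, ENNReal.mul_top (by simp [ENNReal.ofReal_eq_zero]; linarith)]
    rw [h5, ENNReal.top_mul hb0]
    exact le_top
  · have hDnle : Dn ≤ ENNReal.ofReal (c_P * r) * P * μ B ^ (1/q : ℝ) := by
      rw [hDn_eq, ENNReal.div_le_iff hb0 hbt] at hD
      exact hD
    have hDnt : Dn ≠ ⊤ := by
      refine ne_top_of_le_ne_top ?_ hDnle
      exact ENNReal.mul_ne_top (ENNReal.mul_ne_top ENNReal.ofReal_ne_top hPtop) hbt
    have hLt : L ≠ ⊤ := by
      refine ne_top_of_le_ne_top ?_ h_tri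
      exact ENNReal.add_ne_top.mpr ⟨hDnt,
        ENNReal.mul_ne_top ENNReal.ofReal_ne_top hbt⟩
    have key : L ≤ ENNReal.ofReal γ₂ * L + Dn := by
      calc L ≤ Dn + M * μ B ^ (1/q : ℝ) := h_tri
        _ ≤ Dn + ENNReal.ofReal γ₂ * L := add_le_add_right hMstep _
        _ = ENNReal.ofReal γ₂ * L + Dn := add_comm _ _
    have hfin : ENNReal.ofReal γ₂ * L + Dn ≠ ⊤ :=
      ENNReal.add_ne_top.mpr ⟨ENNReal.mul_ne_top ENNReal.ofReal_ne_top hLt, hDnt⟩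
    have hkey' : L.toReal ≤ γ₂ * L.toReal + Dn.toReal := by
      have h6 := ENNReal.toReal_mono hfin key
      rwa [ENNReal.toReal_add (ENNReal.mul_ne_top ENNReal.ofReal_ne_top hLt) hDnt,
        ENNReal.toReal_mul, ENNReal.toReal_ofReal hγ₂0.le] at h6
    have h1γ : (0:ℝ) < 1 - γ₂ := by linarith
    have hLreal : L.toReal ≤ Dn.toReal / (1 - γ₂) := by
      rw [le_div_iff₀ h1γ]; nlinarith [hkey']
    have hDnreal : Dn.toReal ≤ c_P * r * P.toReal * ((μ B) ^ (1/q : ℝ)).toReal := by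
      have h7 := ENNReal.toReal_mono
        (ENNReal.mul_ne_top (ENNReal.mul_ne_top ENNReal.ofReal_ne_top hPtop) hbt) hDnle
      rwa [ENNReal.toReal_mul, ENNReal.toReal_mul,
        ENNReal.toReal_ofReal (by positivity)] at h7
    have hPnn : (0:ℝ) ≤ P.toReal := ENNReal.toReal_nonneg
    have hbnn : (0:ℝ) ≤ ((μ B) ^ (1/q : ℝ)).toReal := ENNReal.toReal_nonneg
    have hRHS : ENNReal.ofReal (c_P / (1 - γ₂) * r) * P * μ B ^ (1/q : ℝ) =
        ENNReal.ofReal (c_P / (1 - γ₂) * r * P.toReal * ((μ B) ^ (1/q : ℝ)).toReal) := by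
      rw [ENNReal.ofReal_mul (mul_nonneg hcr0.le hPnn), ENNReal.ofReal_mul hcr0.le,
        ENNReal.ofReal_toReal hPtop, ENNReal.ofReal_toReal hbt]
    rw [hRHS, ← ENNReal.ofReal_toReal hLt]
    refine ENNReal.ofReal_le_ofReal ?_
    calc L.toReal ≤ Dn.toReal / (1 - γ₂) := hLreal
      _ ≤ (c_P * r * P.toReal * ((μ B) ^ (1/q : ℝ)).toReal) / (1 - γ₂) :=
          (div_le_div_iff_of_pos_right h1γ).mpr hDnreal
      _ = c_P / (1 - γ₂) * r * P.toReal * ((μ B) ^ (1/q : ℝ)).toReal := by ring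
end
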